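/- arXiv:2003.04834 — 9 statements merged into one kernel-verified Lean document; each statement's English description precedes it below -/
import Mathlib

section
/- For all d, n, k, the set of tensors f : (Fin d → Fin n) → ℂ that are computed by some single-(source,sink) ABP of some format (w_0, …, w_d) with w_0 = w_d = 1 and w_i ≤ k for all 0 ≤ i ≤ d, is a closed subset of the finite-dimensional complex vector space (Fin d → Fin n) → ℂ with its standard topology. In particular, border single-(source,sink) ABP width complexity equals single-(source,sink) ABP width complexity for every homogeneous noncommutative polynomial. -/
open scoped BigOperators

namespace Nisan

/-- A single-(source,sink) ABP of format `w` (with `w 0 = 1` and `w d = 1`) computes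
the coefficient tensor `f` of a homogeneous degree-`d` noncommutative polynomial in
`n` variables if for every monomial `j : Fin d → Fin n` the value `f j` equals the
unique entry of the matrix product `T 0 (j 0) * ⋯ * T (d-1) (j (d-1))`, written here
as the sum over all source-to-sink paths of the products of the corresponding
matrix entries. -/
def Computes (d n : ℕ) (w : Fin (d + 1) → ℕ)
    (T : ∀ k : Fin d, Fin n → Matrix (Fin (w k.castSucc)) (Fin (w k.succ)) ℂ)
    (f : (Fin d → Fin n) → ℂ) : Prop :=
  ∀ j : Fin d → Fin n,
    f j = ∑ v : ∀ k : Fin (d + 1), Fin (w k),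
      ∏ k : Fin d, T k (j k) (v k.castSucc) (v k.succ)

/-- The `i`-th flattening `M_i(f)` of the coefficient tensor `f`: rows indexed by
tuples in `Fin i → Fin n`, columns by tuples in `Fin (d - i) → Fin n`, with entry
`f` evaluated at the concatenation. -/
def flatten (d n : ℕ) (f : (Fin d → Fin n) → ℂ) (i : ℕ) (hi : i ≤ d) :
    Matrix (Fin i → Fin n) (Fin (d - i) → Fin n) ℂ :=
  Matrix.of fun r c => f fun j => Fin.append r c (Fin.cast (by omega) j)

end Nisan

namespace Nisan

/-- `f` is computable by a single-(source,sink) ABP all of whose layers have at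
most `k` vertices. -/
def WidthLe (d n k : ℕ) (f : (Fin d → Fin n) → ℂ) : Prop :=
  ∃ w : Fin (d + 1) → ℕ, w 0 = 1 ∧ w (Fin.last d) = 1 ∧ (∀ i, w i ≤ k) ∧
    ∃ T : ∀ j : Fin d, Fin n → Matrix (Fin (w j.castSucc)) (Fin (w j.succ)) ℂ,
      Computes d n w T f

end Nisan


namespace NisanAux
open Matrix
open scoped ComplexOrder
set_option linter.unusedSectionVars false

section Closed


variable {m n : Type*} [Fintype m] [Fintype n] [DecidableEq m] [DecidableEq n]

private lemma submatrix_rank_le {k : ℕ} (M : Matrix m n ℂ) (r : Fin (k+1) → m) :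
    (M.submatrix r id).rank ≤ M.rank := by
  classical
  have h : M.submatrix r id = (Matrix.of fun i j => if r i = j then (1:ℂ) else 0) * M := by
    ext i j
    simp [Matrix.mul_apply, Matrix.submatrix_apply]
  rw [h]
  exact Matrix.rank_mul_le_right _ _

lemma rank_le_iff_dets (M : Matrix m n ℂ) (k : ℕ) :
    M.rank ≤ k ↔ ∀ r : Fin (k+1) → m,
      ((M.submatrix r id) * (M.submatrix r id)ᴴ).det = 0 := by
  constructor
  · intro hM r
    by_contra hdet
    have hunit : IsUnit ((M.submatrix r id) * (M.submatrix r id)ᴴ) :=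
      (Matrix.isUnit_iff_isUnit_det _).mpr (isUnit_iff_ne_zero.mpr hdet)
    have h1 : ((M.submatrix r id) * (M.submatrix r id)ᴴ).rank = k+1 := by
      rw [Matrix.rank_of_isUnit _ hunit, Fintype.card_fin]
    have h2 : ((M.submatrix r id) * (M.submatrix r id)ᴴ).rank ≤ k := by
      rw [Matrix.rank_self_mul_conjTranspose]
      exact le_trans (submatrix_rank_le M r) hM
    omega
  · intro h
    by_contra hM
    push_neg at hM
    have hspan : k + 1 ≤ Module.finrank ℂ (Submodule.span ℂ (Set.range M)) := by
      rw [M.rank_eq_finrank_span_row] at hM; exact hM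
    obtain ⟨t, hts, hspan_eq, hli⟩ := exists_linearIndependent ℂ (Set.range M)
    have htfin : t.Finite := (Set.finite_range M).subset hts
    have : Fintype t := htfin.fintype
    have hcard : k + 1 ≤ t.toFinset.card := by
      rw [← finrank_span_set_eq_card hli, hspan_eq]; exact hspan
    obtain ⟨s, hst, hscard⟩ := Finset.exists_subset_card_eq hcard
    let e : Fin (k+1) ≃ {x // x ∈ s} := (s.equivFinOfCardEq hscard).symm
    have hmemt : ∀ i : Fin (k+1), ((e i : n → ℂ)) ∈ t := by
      intro i
      have := hst (e i).2
      rwa [Set.mem_toFinset] at this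
    have hmem : ∀ i : Fin (k+1), ((e i : n → ℂ)) ∈ Set.range M := fun i => hts (hmemt i)
    choose r hr using hmem
    have hu : LinearIndependent ℂ (fun i : Fin (k+1) => (e i : n → ℂ)) := by
      have h0 : LinearIndependent ℂ (fun x : t => (x : n → ℂ)) := hli
      exact h0.comp (fun i => ⟨(e i : n → ℂ), hmemt i⟩)
        (fun i j hij => by
          have h1 : (e i : n → ℂ) = (e j : n → ℂ) := Subtype.mk_eq_mk.mp hij
          exact e.injective (Subtype.ext h1))
    have heq : (M.submatrix r id) = fun i => (e i : n → ℂ) := by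
      funext i j
      rw [Matrix.submatrix_apply, id, hr i]
    have hMsub : (M.submatrix r id).rank = k + 1 := by
      have := LinearIndependent.rank_matrix (M := M.submatrix r id) (by rw [heq]; exact hu)
      rwa [Fintype.card_fin] at this
    have hdet := h r
    obtain ⟨v, hv0, hvker⟩ := (Matrix.exists_mulVec_eq_zero_iff).mpr hdet
    set S := (M.submatrix r id) * (M.submatrix r id)ᴴ with hS
    have hrank : S.rank = k + 1 := by
      rw [hS, Matrix.rank_self_mul_conjTranspose]; exact hMsub
    have hker : Module.finrank ℂ (LinearMap.ker S.mulVecLin) = 0 := by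
      have hsum := LinearMap.finrank_range_add_finrank_ker S.mulVecLin
      rw [Module.finrank_fintype_fun_eq_card, Fintype.card_fin] at hsum
      have : Module.finrank ℂ (LinearMap.range S.mulVecLin) = k + 1 := hrank
      omega
    have : LinearMap.ker S.mulVecLin = ⊥ := Submodule.finrank_eq_zero.mp hker
    have hv : v ∈ LinearMap.ker S.mulVecLin := by
      rw [LinearMap.mem_ker, Matrix.mulVecLin_apply]; exact hvker
    rw [this, Submodule.mem_bot] at hv
    exact hv0 hv

lemma isClosed_rank_le (k : ℕ) : IsClosed {M : Matrix m n ℂ | M.rank ≤ k} := by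
  have : {M : Matrix m n ℂ | M.rank ≤ k} =
      ⋂ r : Fin (k+1) → m, {M | ((M.submatrix r id) * (M.submatrix r id)ᴴ).det = 0} := by
    ext M
    simp only [Set.mem_setOf_eq, Set.mem_iInter]
    exact rank_le_iff_dets M k
  rw [this]
  refine isClosed_iInter fun r => isClosed_eq ?_ continuous_const
  exact Continuous.matrix_det
    (Continuous.matrix_mul (continuous_id.matrix_submatrix _ _)
      ((continuous_id.matrix_submatrix _ _).matrix_conjTranspose))

end Closed


lemma append_apply {α : Sort*} {a b : ℕ} (u : Fin a → α) (v : Fin b → α) (j : Fin (a+b)) :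
    Fin.append u v j = if h : j.1 < a then u ⟨j.1, h⟩ else v ⟨j.1 - a, by omega⟩ := by
  induction j using Fin.addCases with
  | left i =>
    rw [Fin.append_left, dif_pos (show (Fin.castAdd b i).1 < a from i.2)]
    rfl
  | right i =>
    rw [Fin.append_right, dif_neg (show ¬ (Fin.natAdd a i).1 < a by simp)]
    congr 1
    apply Fin.ext
    simp

lemma snoc_apply {α : Sort*} {i : ℕ} (r : Fin i → α) (x : α) (j : Fin (i+1)) :
    (Fin.snoc r x : Fin (i+1) → α) j = if h : j.1 < i then r ⟨j.1, h⟩ else x := by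
  induction j using Fin.lastCases with
  | last => rw [Fin.snoc_last, dif_neg (by simp)]
  | cast p =>
    rw [Fin.snoc_castSucc, dif_pos (show p.castSucc.1 < i from p.2)]
    rfl

lemma cons_apply {α : Sort*} {b : ℕ} (x : α) (c : Fin b → α) (j : Fin (b+1)) :
    (Fin.cons x c : Fin (b+1) → α) j = if h : 0 < j.1 then c ⟨j.1 - 1, by omega⟩ else x := by
  induction j using Fin.cases with
  | zero => rw [Fin.cons_zero, dif_neg (by simp)]
  | succ p =>
    rw [Fin.cons_succ, dif_pos (show 0 < p.succ.1 by simp)]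
    rfl

lemma cast_pi_apply {α : Sort*} {W : α → ℕ} (v : ∀ a, Fin (W a)) {x y : α} (h : x = y)
    (hw : W x = W y) : Fin.cast hw (v x) = v y := by subst h; rfl

lemma prod_split_nat {M : Type*} [CommMonoid M] (ii dd : ℕ) (h : ii ≤ dd) (X : ℕ → M) :
    ∏ t : Fin dd, X t.1 = (∏ t : Fin ii, X t.1) * ∏ t : Fin (dd - ii), X (ii + t.1) := by
  have hc : ii + (dd - ii) = dd := by omega
  have h1 : ∏ t : Fin (ii + (dd - ii)), X t.1 = ∏ t : Fin dd, X t.1 :=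
    Fintype.prod_equiv (finCongr hc) _ _ (fun x => rfl)
  rw [← h1, Fin.prod_univ_add]
  rfl

variable {d n : ℕ}

@[reducible] def pidx (i : ℕ) (hi : i ≤ d) (p : Fin (i+1)) : Fin (d+1) := ⟨p.1, by have := p.2; omega⟩
@[reducible] def sidx (i : ℕ) (hi : i ≤ d) (q : Fin (d-i+1)) : Fin (d+1) := ⟨i + q.1, by have := q.2; omega⟩
def tidx (i : ℕ) (hi : i ≤ d) (t : Fin i) : Fin d := ⟨t.1, by have := t.2; omega⟩
def uidx (i : ℕ) (hi : i ≤ d) (t : Fin (d-i)) : Fin d := ⟨i + t.1, by have := t.2; omega⟩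

variable (w : Fin (d+1) → ℕ)
  (T : ∀ t : Fin d, Fin n → Matrix (Fin (w t.castSucc)) (Fin (w t.succ)) ℂ)

noncomputable def prefixSum (i : ℕ) (hi : i ≤ d) (r : Fin i → Fin n)
    (a : Fin (w ⟨i, by omega⟩)) : ℂ :=
  ∑ vp : ∀ p : Fin (i+1), Fin (w (pidx i hi p)),
    if vp (Fin.last i) = a then
      ∏ t : Fin i, T (tidx i hi t) (r t) (vp t.castSucc) (vp t.succ)
    else 0

noncomputable def suffixSum (i : ℕ) (hi : i ≤ d) (c : Fin (d - i) → Fin n)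
    (a : Fin (w ⟨i, by omega⟩)) : ℂ :=
  ∑ vs : ∀ q : Fin (d-i+1), Fin (w (sidx i hi q)),
    if vs ⟨0, by omega⟩ = a then
      ∏ t : Fin (d-i), T (uidx i hi t) (c t) (vs t.castSucc) (vs t.succ)
    else 0

lemma sum_ite_mul_ite {β : Type*} [Fintype β] [DecidableEq β] (b c : β) (P S : ℂ) :
    ∑ a : β, (if b = a then P else 0) * (if c = a then S else 0)
      = if c = b then P * S else 0 := by
  rw [Finset.sum_eq_single b]
  · rw [if_pos rfl]
    split_ifs <;> simp
  · intro a _ hab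
    rw [if_neg (fun h => hab h.symm), zero_mul]
  · simp

lemma path_split (j : Fin d → Fin n) (i : ℕ) (hi : i ≤ d) :
    ∑ v : ∀ ℓ : Fin (d+1), Fin (w ℓ), ∏ t : Fin d, T t (j t) (v t.castSucc) (v t.succ)
      = ∑ a : Fin (w ⟨i, by omega⟩),
          prefixSum w T i hi (fun t => j (tidx i hi t)) a
            * suffixSum w T i hi (fun t => j (uidx i hi t)) a := by
  classical
  unfold prefixSum suffixSum
  have hR : (∑ a : Fin (w ⟨i, by omega⟩),
      (∑ vp : ∀ p : Fin (i+1), Fin (w (pidx i hi p)),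
        if vp (Fin.last i) = a then
          ∏ t : Fin i, T (tidx i hi t) (j (tidx i hi t)) (vp t.castSucc) (vp t.succ) else 0) *
      (∑ vs : ∀ q : Fin (d-i+1), Fin (w (sidx i hi q)),
        if vs ⟨0, by omega⟩ = a then
          ∏ t : Fin (d-i), T (uidx i hi t) (j (uidx i hi t)) (vs t.castSucc) (vs t.succ) else 0))
    = ∑ x : (∀ p : Fin (i+1), Fin (w (pidx i hi p))) ×
        (∀ q : Fin (d-i+1), Fin (w (sidx i hi q))),
      if x.2 ⟨0, by omega⟩ = x.1 (Fin.last i) then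
        (∏ t : Fin i, T (tidx i hi t) (j (tidx i hi t)) (x.1 t.castSucc) (x.1 t.succ)) *
        ∏ t : Fin (d-i), T (uidx i hi t) (j (uidx i hi t)) (x.2 t.castSucc) (x.2 t.succ)
      else 0 := by
    rw [Fintype.sum_prod_type]
    calc ∑ a : Fin (w ⟨i, by omega⟩), _ * _
        = ∑ a : Fin (w ⟨i, by omega⟩),
            ∑ vp : ∀ p : Fin (i+1), Fin (w (pidx i hi p)),
            ∑ vs : ∀ q : Fin (d-i+1), Fin (w (sidx i hi q)),
            (if vp (Fin.last i) = a then
              ∏ t : Fin i, T (tidx i hi t) (j (tidx i hi t)) (vp t.castSucc) (vp t.succ) else 0) *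
            (if vs ⟨0, by omega⟩ = a then
              ∏ t : Fin (d-i), T (uidx i hi t) (j (uidx i hi t)) (vs t.castSucc) (vs t.succ) else 0) := by
          refine Finset.sum_congr rfl fun a _ => ?_
          rw [Finset.sum_mul_sum]
      _ = ∑ vp : ∀ p : Fin (i+1), Fin (w (pidx i hi p)),
          ∑ a : Fin (w ⟨i, by omega⟩),
          ∑ vs : ∀ q : Fin (d-i+1), Fin (w (sidx i hi q)), _ := Finset.sum_comm
      _ = ∑ vp : ∀ p : Fin (i+1), Fin (w (pidx i hi p)),
          ∑ vs : ∀ q : Fin (d-i+1), Fin (w (sidx i hi q)),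
          ∑ a : Fin (w ⟨i, by omega⟩), _ :=
            Finset.sum_congr rfl fun vp _ => Finset.sum_comm
      _ = _ := by
          refine Finset.sum_congr rfl fun vp _ => Finset.sum_congr rfl fun vs _ => ?_
          exact sum_ite_mul_ite _ _ _ _
  rw [hR]
  rw [show (∑ x : (∀ p : Fin (i+1), Fin (w (pidx i hi p))) ×
        (∀ q : Fin (d-i+1), Fin (w (sidx i hi q))),
      if x.2 ⟨0, by omega⟩ = x.1 (Fin.last i) then
        (∏ t : Fin i, T (tidx i hi t) (j (tidx i hi t)) (x.1 t.castSucc) (x.1 t.succ)) *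
        ∏ t : Fin (d-i), T (uidx i hi t) (j (uidx i hi t)) (x.2 t.castSucc) (x.2 t.succ)
      else 0)
    = ∑ x ∈ Finset.univ.filter (fun x : (∀ p : Fin (i+1), Fin (w (pidx i hi p))) ×
        (∀ q : Fin (d-i+1), Fin (w (sidx i hi q))) => x.2 ⟨0, by omega⟩ = x.1 (Fin.last i)),
        (∏ t : Fin i, T (tidx i hi t) (j (tidx i hi t)) (x.1 t.castSucc) (x.1 t.succ)) *
        ∏ t : Fin (d-i), T (uidx i hi t) (j (uidx i hi t)) (x.2 t.castSucc) (x.2 t.succ)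
    from (Finset.sum_filter _ _).symm]
  refine Finset.sum_bij' (i := fun v _ =>
      (fun p => v (pidx i hi p), fun q => v (sidx i hi q)))
    (j := fun x _ => fun ℓ : Fin (d+1) =>
      if h : ℓ.1 < i + 1 then x.1 ⟨ℓ.1, h⟩
      else Fin.cast (congrArg w (Fin.ext (show i + (ℓ.1 - i) = ℓ.1 by omega)))
        (x.2 ⟨ℓ.1 - i, by have := ℓ.2; omega⟩))
    ?_ ?_ ?_ ?_ ?_
  · intro v _
    simp only [Finset.mem_filter, Finset.mem_univ, true_and]
    rfl
  · intro x _
    exact Finset.mem_univ _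
  · intro v _
    funext ℓ
    dsimp only
    by_cases h : ℓ.1 < i + 1
    · rw [dif_pos h]
    · rw [dif_neg h]
      exact cast_pi_apply v (Fin.ext (show i + (ℓ.1 - i) = ℓ.1 by omega)) _
  · intro x hx
    simp only [Finset.mem_filter, Finset.mem_univ, true_and] at hx
    refine Prod.ext (funext fun p => ?_) (funext fun q => ?_) <;> dsimp only
    · rw [dif_pos (show (pidx i hi p).1 < i + 1 from p.2)]
    · by_cases hq : (sidx i hi q).1 < i + 1
      · have hq0 : q = ⟨0, by omega⟩ := Fin.ext (by simp [sidx] at hq ⊢; omega)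
        revert hq
        rw [hq0]
        intro hq
        rw [dif_pos hq]
        exact hx.symm
      · rw [dif_neg hq]
        exact cast_pi_apply x.2 (Fin.ext (show (sidx i hi q).1 - i = q.1 by simp [sidx])) _
  · intro v _
    have hsplit := prod_split_nat i d hi (fun s =>
      if h : s < d then T ⟨s, h⟩ (j ⟨s, h⟩) (v ⟨s, by omega⟩) (v ⟨s+1, by omega⟩) else 1)
    calc ∏ t : Fin d, T t (j t) (v t.castSucc) (v t.succ)
        = ∏ t : Fin d, (fun s => if h : s < d then
            T ⟨s, h⟩ (j ⟨s, h⟩) (v ⟨s, by omega⟩) (v ⟨s+1, by omega⟩) else 1) t.1 := by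
          refine Finset.prod_congr rfl fun t _ => ?_
          dsimp only
          rw [dif_pos t.2]
          rfl
      _ = (∏ t : Fin i, (fun s => if h : s < d then
            T ⟨s, h⟩ (j ⟨s, h⟩) (v ⟨s, by omega⟩) (v ⟨s+1, by omega⟩) else 1) t.1) *
          ∏ t : Fin (d-i), (fun s => if h : s < d then
            T ⟨s, h⟩ (j ⟨s, h⟩) (v ⟨s, by omega⟩) (v ⟨s+1, by omega⟩) else 1) (i + t.1) := hsplit
      _ = _ := by
          congr 1
          · refine Finset.prod_congr rfl fun t _ => ?_
            dsimp only
            rw [dif_pos (show t.1 < d by have := t.2; omega)]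
            rfl
          · refine Finset.prod_congr rfl fun t _ => ?_
            dsimp only
            rw [dif_pos (show i + t.1 < d by have := t.2; omega)]
            rfl



section FlattenLemmas

variable {d n : ℕ} (f : (Fin d → Fin n) → ℂ)

lemma flatten_last (r : Fin d → Fin n) (c : Fin (d-d) → Fin n) :
    Nisan.flatten d n f d le_rfl r c = f r := by
  show f _ = f r
  congr 1
  funext s
  rw [append_apply, dif_pos (show (Fin.cast (by omega : d = d + (d-d)) s).1 < d from s.2)]
  rfl

lemma flatten_zero (hd : (0:ℕ) ≤ d) (r : Fin 0 → Fin n) (c : Fin (d - 0) → Fin n) :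
    Nisan.flatten d n f 0 hd r c = f c := by
  show f _ = f _
  congr 1
  funext s
  rw [append_apply, dif_neg (by omega)]
  rfl

lemma flatten_succ (i : ℕ) (hi : i + 1 ≤ d) (r : Fin i → Fin n) (x : Fin n)
    (c : Fin (d-(i+1)) → Fin n) :
    Nisan.flatten d n f (i+1) hi (Fin.snoc r x) c
      = Nisan.flatten d n f i (by omega) r
          (fun s => (Fin.cons x c : Fin ((d-(i+1))+1) → Fin n)
            (Fin.cast (show d - i = (d-(i+1))+1 by omega) s)) := by
  show f _ = f _
  congr 1
  funext s
  rw [append_apply, append_apply]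
  by_cases h1 : s.1 < i
  · rw [dif_pos (show (Fin.cast (by omega : d = (i+1) + (d-(i+1))) s).1 < i + 1 by
      simp; omega)]
    rw [dif_pos (show (Fin.cast (by omega : d = i + (d-i)) s).1 < i from h1)]
    rw [snoc_apply, dif_pos (show ((⟨(Fin.cast (by omega : d = (i+1) + (d-(i+1))) s).1, by
      simp; omega⟩ : Fin (i+1))).1 < i from h1)]
    rfl
  · by_cases h2 : s.1 < i + 1
    · rw [dif_pos (show (Fin.cast (by omega : d = (i+1) + (d-(i+1))) s).1 < i + 1 from h2)]
      rw [dif_neg (show ¬ (Fin.cast (by omega : d = i + (d-i)) s).1 < i from h1)]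
      rw [snoc_apply, dif_neg (by simpa using h1)]
      rw [cons_apply, dif_neg (by simp; omega)]
    · rw [dif_neg (show ¬ (Fin.cast (by omega : d = (i+1) + (d-(i+1))) s).1 < i + 1 from h2)]
      rw [dif_neg (show ¬ (Fin.cast (by omega : d = i + (d-i)) s).1 < i from h1)]
      rw [cons_apply, dif_pos (by simp; omega)]
      rfl

lemma prefix_snoc (i : ℕ) (hi : i + 1 ≤ d) (j : Fin d → Fin n) :
    (fun t : Fin (i+1) => j ⟨t.1, by have := t.2; omega⟩)
      = Fin.snoc (fun t : Fin i => j ⟨t.1, by have := t.2; omega⟩) (j ⟨i, by omega⟩) := by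
  funext t
  rw [snoc_apply]
  split_ifs with h
  · rfl
  · congr 1
    apply Fin.ext
    have := t.2
    simp
    omega

end FlattenLemmas

section EasyDir

variable {d n : ℕ} (w : Fin (d+1) → ℕ)
  (T : ∀ t : Fin d, Fin n → Matrix (Fin (w t.castSucc)) (Fin (w t.succ)) ℂ)

lemma flatten_factor (f : (Fin d → Fin n) → ℂ) (hC : Nisan.Computes d n w T f)
    (i : ℕ) (hi : i ≤ d) :
    Nisan.flatten d n f i hi
      = (Matrix.of fun (r : Fin i → Fin n) a => prefixSum w T i hi r a)
        * (Matrix.of fun a (c : Fin (d-i) → Fin n) => suffixSum w T i hi c a) := by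
  ext r c
  rw [Matrix.mul_apply]
  show f (fun s => Fin.append r c (Fin.cast (by omega) s)) = _
  rw [hC _, path_split w T _ i hi]
  have hr : (fun t : Fin i => Fin.append r c (Fin.cast (by omega : d = i + (d - i)) (tidx i hi t))) = r := by
    funext t
    rw [append_apply, dif_pos (show (Fin.cast (by omega : d = i + (d-i)) (tidx i hi t)).1 < i from t.2)]
    rfl
  have hc : (fun t : Fin (d-i) => Fin.append r c (Fin.cast (by omega : d = i + (d - i)) (uidx i hi t))) = c := by
    funext t
    rw [append_apply, dif_neg (show ¬ (Fin.cast (by omega : d = i + (d-i)) (uidx i hi t)).1 < i by simp [uidx])]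
    congr 1
    apply Fin.ext
    simp [uidx]
  refine Finset.sum_congr rfl fun a _ => ?_
  rw [show (fun t => Fin.append r c (Fin.cast (by omega) (tidx i hi t))) = r from hr,
     show (fun t => Fin.append r c (Fin.cast (by omega) (uidx i hi t))) = c from hc]
  rfl

lemma rank_flatten_le (k : ℕ) (hwk : ∀ ℓ, w ℓ ≤ k) (f : (Fin d → Fin n) → ℂ)
    (hC : Nisan.Computes d n w T f) (i : ℕ) (hi : i ≤ d) :
    (Nisan.flatten d n f i hi).rank ≤ k := by
  rw [flatten_factor w T f hC i hi]
  refine le_trans (Matrix.rank_mul_le_left _ _) (le_trans (Matrix.rank_le_card_width _) ?_)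
  simpa using hwk ⟨i, by omega⟩

end EasyDir

section HardDir

variable {d n : ℕ}

lemma sum_pi_indicator {NN : ℕ} {W : Fin NN → ℕ} (hsub : ∀ p q : Fin NN, p = q)
    (z : Fin NN) (a : Fin (W z)) :
    ∑ vp : ∀ p, Fin (W p), (if vp z = a then (1:ℂ) else 0) = 1 := by
  classical
  let e : (∀ p, Fin (W p)) ≃ Fin (W z) :=
    { toFun := fun vp => vp z
      invFun := fun y p => Fin.cast (congrArg W (hsub z p)) y
      left_inv := fun vp => funext fun p => cast_pi_apply vp (hsub z p) _
      right_inv := fun y => Fin.ext rfl }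
  rw [Fintype.sum_equiv e (fun vp => if vp z = a then (1:ℂ) else 0)
    (fun y => if y = a then (1:ℂ) else 0) (fun vp => rfl)]
  simp

variable (w : Fin (d+1) → ℕ)
  (T : ∀ t : Fin d, Fin n → Matrix (Fin (w t.castSucc)) (Fin (w t.succ)) ℂ)

lemma prefixSum_zero (hi : (0:ℕ) ≤ d) (r : Fin 0 → Fin n) (a : Fin (w ⟨0, by omega⟩)) :
    prefixSum w T 0 hi r a = 1 := by
  unfold prefixSum
  calc (∑ vp : ∀ p : Fin 1, Fin (w (pidx 0 hi p)),
        if vp (Fin.last 0) = a then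
          ∏ t : Fin 0, T (tidx 0 hi t) (r t) (vp t.castSucc) (vp t.succ) else 0)
      = ∑ vp : ∀ p : Fin 1, Fin (w (pidx 0 hi p)),
        if vp (Fin.last 0) = a then (1:ℂ) else 0 := by
        refine Finset.sum_congr rfl fun vp _ => ?_
        simp
    _ = 1 := sum_pi_indicator (W := fun p : Fin 1 => w (pidx 0 hi p))
      (fun p q => Fin.ext (by omega)) (Fin.last 0) a

lemma suffixSum_last (c : Fin (d - d) → Fin n) (a : Fin (w ⟨d, by omega⟩)) :
    suffixSum w T d le_rfl c a = 1 := by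
  unfold suffixSum
  haveI hie : IsEmpty (Fin (d - d)) := by
    rw [Nat.sub_self]; infer_instance
  calc (∑ vs : ∀ q : Fin (d-d+1), Fin (w (sidx d le_rfl q)),
        if vs ⟨0, by omega⟩ = a then
          ∏ t : Fin (d-d), T (uidx d le_rfl t) (c t) (vs t.castSucc) (vs t.succ) else 0)
      = ∑ vs : ∀ q : Fin (d-d+1), Fin (w (sidx d le_rfl q)),
        if vs ⟨0, by omega⟩ = a then (1:ℂ) else 0 := by
        refine Finset.sum_congr rfl fun vs _ => ?_
        rw [Finset.univ_eq_empty, Finset.prod_empty]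
    _ = 1 := sum_pi_indicator (W := fun q : Fin (d-d+1) => w (sidx d le_rfl q))
      (fun p q => Fin.ext (by omega)) ⟨0, by omega⟩ a

lemma prefixSum_succ (i : ℕ) (hi : i + 1 ≤ d) (r : Fin (i+1) → Fin n)
    (a : Fin (w ⟨i+1, by omega⟩)) :
    prefixSum w T (i+1) hi r a
      = ∑ bb : Fin (w ⟨i, by omega⟩),
          prefixSum w T i (by omega) (fun t => r t.castSucc) bb
            * T ⟨i, hi⟩ (r (Fin.last i)) bb a := by
  classical
  have hstep2 : (∑ bb : Fin (w ⟨i, by omega⟩),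
      prefixSum w T i (by omega) (fun t => r t.castSucc) bb
        * T ⟨i, hi⟩ (r (Fin.last i)) bb a)
      = ∑ vp : ∀ p : Fin (i+1), Fin (w (pidx i (by omega) p)),
          (∏ t : Fin i, T (tidx i (by omega) t) (r t.castSucc) (vp t.castSucc) (vp t.succ))
            * T ⟨i, hi⟩ (r (Fin.last i)) (vp (Fin.last i)) a := by
    unfold prefixSum
    simp only [Finset.sum_mul, ite_mul, zero_mul]
    rw [Finset.sum_comm]
    refine Finset.sum_congr rfl fun vp _ => ?_
    rw [Finset.sum_ite_eq]
    simp
  rw [hstep2]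
  unfold prefixSum
  rw [← Equiv.sum_comp (Fin.snocEquiv (fun p : Fin (i+2) => Fin (w (pidx (i+1) hi p))))
    (fun vp => if vp (Fin.last (i+1)) = a then
      ∏ t : Fin (i+1), T (tidx (i+1) hi t) (r t) (vp t.castSucc) (vp t.succ) else 0)]
  rw [Fintype.sum_prod_type]
  rw [Finset.sum_comm]
  refine Finset.sum_congr rfl fun vp _ => ?_
  have key : ∀ c : Fin (w (pidx (i+1) hi (Fin.last (i+1)))),
      (if (Fin.snoc vp c : ∀ p : Fin (i+2), Fin (w (pidx (i+1) hi p))) (Fin.last (i+1)) = a then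
        ∏ t : Fin (i+1), T (tidx (i+1) hi t) (r t)
          ((Fin.snoc vp c : ∀ p : Fin (i+2), Fin (w (pidx (i+1) hi p))) t.castSucc)
          ((Fin.snoc vp c : ∀ p : Fin (i+2), Fin (w (pidx (i+1) hi p))) t.succ) else 0)
      = if c = a then
          (∏ t : Fin i, T (tidx i (by omega) t) (r t.castSucc) (vp t.castSucc) (vp t.succ))
            * T ⟨i, hi⟩ (r (Fin.last i)) (vp (Fin.last i)) c else 0 := by
    intro c
    have hlast : (Fin.snoc vp c : ∀ p : Fin (i+2), Fin (w (pidx (i+1) hi p)))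
        (Fin.last (i+1)) = c := Fin.snoc_last _ _
    have hprod : (∏ t : Fin (i+1), T (tidx (i+1) hi t) (r t)
          ((Fin.snoc vp c : ∀ p : Fin (i+2), Fin (w (pidx (i+1) hi p))) t.castSucc)
          ((Fin.snoc vp c : ∀ p : Fin (i+2), Fin (w (pidx (i+1) hi p))) t.succ))
        = (∏ t : Fin i, T (tidx i (by omega) t) (r t.castSucc) (vp t.castSucc) (vp t.succ))
            * T ⟨i, hi⟩ (r (Fin.last i)) (vp (Fin.last i)) c := by
      rw [Fin.prod_univ_castSucc]
      congr 1
      · refine Finset.prod_congr rfl fun s _ => ?_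
        have e1 : (Fin.snoc vp c : ∀ p : Fin (i+2), Fin (w (pidx (i+1) hi p)))
            s.castSucc.castSucc = vp s.castSucc := Fin.snoc_castSucc _ _ _
        have e2 : (Fin.snoc vp c : ∀ p : Fin (i+2), Fin (w (pidx (i+1) hi p)))
            s.castSucc.succ = vp s.succ := Fin.snoc_castSucc _ _ s.succ
        exact congrArg₂ (T (tidx (i+1) hi s.castSucc) (r s.castSucc)) e1 e2
      · have e1 : (Fin.snoc vp c : ∀ p : Fin (i+2), Fin (w (pidx (i+1) hi p)))
            (Fin.last i).castSucc = vp (Fin.last i) := Fin.snoc_castSucc _ _ _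
        have e2 : (Fin.snoc vp c : ∀ p : Fin (i+2), Fin (w (pidx (i+1) hi p)))
            (Fin.last i).succ = c := Fin.snoc_last _ _
        exact congrArg₂ (T (tidx (i+1) hi (Fin.last i)) (r (Fin.last i))) e1 e2
    rw [hlast, hprod]
  exact (Finset.sum_congr rfl (fun c _ => key c)).trans
    ((Finset.sum_ite_eq' Finset.univ a _).trans (if_pos (Finset.mem_univ a)))

def shiftL (i : ℕ) (hi : i + 1 ≤ d) (x : Fin n) :
    ((Fin (d - i) → Fin n) → ℂ) →ₗ[ℂ] ((Fin (d - (i+1)) → Fin n) → ℂ) where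
  toFun g c := g (fun s => (Fin.cons x c : Fin ((d-(i+1))+1) → Fin n)
    (Fin.cast (show d - i = (d-(i+1))+1 by omega) s))
  map_add' _ _ := rfl
  map_smul' _ _ := rfl

lemma widthLe_of_rank (k : ℕ) (hd : 1 ≤ d) (hk : 1 ≤ k) (f : (Fin d → Fin n) → ℂ)
    (hf : f ≠ 0) (hr : ∀ i (hi : i ≤ d), (Nisan.flatten d n f i hi).rank ≤ k) :
    Nisan.WidthLe d n k f := by
  classical
  obtain ⟨j₀, hj₀⟩ : ∃ j, f j ≠ 0 := by
    by_contra h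
    push_neg at h
    exact hf (funext fun j => h j)
  have hdata : ∀ i : ℕ, ∀ hi : i ≤ d, ∃ (m : ℕ)
      (B : Fin m → ((Fin (d - i) → Fin n) → ℂ))
      (π : ((Fin (d - i) → Fin n) → ℂ) →ₗ[ℂ] (Fin m → ℂ)),
      m ≤ k ∧
      (∀ u ∈ Submodule.span ℂ (Set.range (Nisan.flatten d n f i hi)),
        (∑ b, π u b • B b) = u) ∧
      (i = 0 → m = 1 ∧ ∀ (r : Fin i → Fin n) (a : Fin m),
        π (Nisan.flatten d n f i hi r) a = 1) ∧
      (i = d → m = 1 ∧ ∀ b c, B b c = 1) := by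
    intro i hi
    by_cases h0 : i = 0
    · subst h0
      set μ : (Fin (d - 0) → Fin n) → ℂ := Nisan.flatten d n f 0 hi (fun t => t.elim0)
        with hμdef
      have hμc : μ j₀ = f j₀ := flatten_zero f hi _ j₀
      have hμ0 : μ j₀ ≠ 0 := by rw [hμc]; exact hj₀
      refine ⟨1, fun _ => μ,
        { toFun := fun u => fun _ => u j₀ * (μ j₀)⁻¹
          map_add' := fun u v => by funext z; simp [add_mul]
          map_smul' := fun c u => by funext z; simp [smul_eq_mul]; ring }, hk, ?_, ?_, ?_⟩
      · intro u hu
        have hrange : Set.range (Nisan.flatten d n f 0 hi) ⊆ {μ} := by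
          rintro _ ⟨r, rfl⟩
          have hre : r = (fun t => t.elim0) := funext fun t => t.elim0
          rw [Set.mem_singleton_iff, hre, hμdef]
        have hu' := (Submodule.span_mono hrange) hu
        obtain ⟨t, ht⟩ := Submodule.mem_span_singleton.mp hu'
        rw [← ht, Fin.sum_univ_one]
        show ((t • μ) j₀ * (μ j₀)⁻¹) • μ = t • μ
        rw [Pi.smul_apply, smul_eq_mul, mul_assoc, mul_inv_cancel₀ hμ0, mul_one]
      · intro _
        refine ⟨rfl, fun r a => ?_⟩
        have hre : r = (fun t => t.elim0) := funext fun t => t.elim0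
        show Nisan.flatten d n f 0 hi r j₀ * (μ j₀)⁻¹ = 1
        rw [hre, ← hμdef]
        exact mul_inv_cancel₀ hμ0
      · intro hd0
        exact absurd hd0.symm (by omega)
    · by_cases hdd : i = d
      · subst hdd
        haveI hie : IsEmpty (Fin (i - i)) := by rw [Nat.sub_self]; infer_instance
        have hn : 0 < n := (j₀ ⟨0, by omega⟩).pos
        set c₀ : Fin (i - i) → Fin n := fun _ => ⟨0, hn⟩ with hc₀def
        refine ⟨1, fun _ _ => 1,
          { toFun := fun u => fun _ => u c₀
            map_add' := fun u v => rfl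
            map_smul' := fun c u => rfl }, hk, ?_, fun h => absurd h h0,
          fun _ => ⟨rfl, fun b c => rfl⟩⟩
        intro u hu
        funext c
        rw [Finset.sum_apply, Fin.sum_univ_one]
        show u c₀ • (1:ℂ) = u c
        rw [smul_eq_mul, mul_one]
        exact congrArg u (funext fun t => (hie.false t).elim)
      · have hVfd : FiniteDimensional ℂ
            (Submodule.span ℂ (Set.range (Nisan.flatten d n f i hi))) := inferInstance
        set V := Submodule.span ℂ (Set.range (Nisan.flatten d n f i hi)) with hVdef
        have hmk : Module.finrank ℂ V ≤ k := by
          have := hr i hi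
          rwa [Matrix.rank_eq_finrank_span_row] at this
        obtain ⟨q, hq⟩ := Submodule.exists_isCompl V
        set b : Module.Basis (Fin (Module.finrank ℂ V)) ℂ V := Module.finBasis ℂ V with hbdef
        refine ⟨Module.finrank ℂ V, fun a => (b a : _),
          b.equivFun.toLinearMap.comp (V.linearProjOfIsCompl q hq), hmk, ?_,
          fun h => absurd h h0, fun h => absurd h hdd⟩
        intro u hu
        have hproj : V.linearProjOfIsCompl q hq u = ⟨u, hu⟩ :=
          Submodule.linearProjOfIsCompl_apply_left hq ⟨u, hu⟩
        have hb := Module.Basis.sum_equivFun b ⟨u, hu⟩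
        have h2 : V.subtype (∑ a, b.equivFun (⟨u, hu⟩ : V) a • b a) = u := by rw [hb]; rfl
        conv_rhs => rw [← h2, map_sum]
        refine Finset.sum_congr rfl fun a _ => ?_
        rw [LinearMap.comp_apply, LinearEquiv.coe_coe, hproj, _root_.map_smul]
        rfl
  choose m B π hprop using hdata
  have hmk' : ∀ i hi, m i hi ≤ k := fun i hi => (hprop i hi).1
  have hrecon : ∀ i hi, ∀ u ∈ Submodule.span ℂ (Set.range (Nisan.flatten d n f i hi)),
      (∑ b, π i hi u b • B i hi b) = u := fun i hi => (hprop i hi).2.1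
  have hzero : ∀ hi : (0:ℕ) ≤ d, m 0 hi = 1 ∧ ∀ (r : Fin 0 → Fin n) (a : Fin (m 0 hi)),
      π 0 hi (Nisan.flatten d n f 0 hi r) a = 1 := fun hi => (hprop 0 hi).2.2.1 rfl
  have hlastc : m d le_rfl = 1 ∧ ∀ b c, B d le_rfl b c = 1 := (hprop d le_rfl).2.2.2 rfl
  set wdef : Fin (d+1) → ℕ := fun ℓ => m ℓ.1 (by have := ℓ.2; omega) with hwdef
  set Tdef : ∀ t : Fin d, Fin n → Matrix (Fin (wdef t.castSucc)) (Fin (wdef t.succ)) ℂ :=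
    fun t x => Matrix.of fun a bb =>
      π (t.1+1) t.2 (shiftL t.1 t.2 x (B t.1 (le_of_lt t.2) a)) bb with hTdef
  refine ⟨wdef, (hzero _).1, hlastc.1, fun ℓ => hmk' ℓ.1 (by have := ℓ.2; omega), Tdef, ?_⟩
  have claim : ∀ j : Fin d → Fin n, ∀ i (hii : i ≤ d) (a : Fin (m i hii)),
      π i hii (Nisan.flatten d n f i hii
          (fun t : Fin i => j ⟨t.1, by have := t.2; omega⟩)) a
        = prefixSum wdef Tdef i hii (fun t => j (tidx i hii t)) a := by
    intro j i
    induction i with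
    | zero =>
      intro hii a
      rw [prefixSum_zero wdef Tdef hii]
      exact (hzero hii).2 _ a
    | succ i ih =>
      intro hii a
      have hii' : i ≤ d := by omega
      rw [show (fun t : Fin (i+1) => j ⟨t.1, by have := t.2; omega⟩)
          = Fin.snoc (fun t : Fin i => j ⟨t.1, by have := t.2; omega⟩) (j ⟨i, by omega⟩)
        from prefix_snoc i hii j]
      have hfl : Nisan.flatten d n f (i+1) hii
          (Fin.snoc (fun t : Fin i => j ⟨t.1, by have := t.2; omega⟩) (j ⟨i, by omega⟩))
          = shiftL i hii (j ⟨i, by omega⟩)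
              (Nisan.flatten d n f i hii' (fun t : Fin i => j ⟨t.1, by have := t.2; omega⟩)) := by
        funext c
        exact flatten_succ f i hii _ _ c
      rw [hfl]
      have hmem : Nisan.flatten d n f i hii' (fun t : Fin i => j ⟨t.1, by have := t.2; omega⟩)
          ∈ Submodule.span ℂ (Set.range (Nisan.flatten d n f i hii')) :=
        Submodule.subset_span ⟨_, rfl⟩
      conv_lhs => rw [← hrecon i hii' _ hmem]
      rw [map_sum, map_sum, Finset.sum_apply]
      rw [prefixSum_succ wdef Tdef i hii]
      refine Finset.sum_congr rfl fun bb _ => ?_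
      rw [_root_.map_smul, _root_.map_smul, Pi.smul_apply, smul_eq_mul]
      rw [ih hii' bb]
      rfl
  intro j
  have hn0 : (0:ℕ) < d := hd
  have h1 : f j = Nisan.flatten d n f d le_rfl j (fun _ => j ⟨0, hn0⟩) :=
    (flatten_last f j _).symm
  have hmem : Nisan.flatten d n f d le_rfl j
      ∈ Submodule.span ℂ (Set.range (Nisan.flatten d n f d le_rfl)) :=
    Submodule.subset_span ⟨_, rfl⟩
  have h2 := hrecon d le_rfl _ hmem
  have h3 : f j = ∑ bb, π d le_rfl (Nisan.flatten d n f d le_rfl j) bb := by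
    rw [h1]
    conv_lhs => rw [← h2]
    rw [Finset.sum_apply]
    refine Finset.sum_congr rfl fun bb _ => ?_
    rw [Pi.smul_apply, smul_eq_mul, hlastc.2 bb _, mul_one]
  rw [path_split wdef Tdef j d le_rfl, h3]
  refine Finset.sum_congr rfl fun bb _ => ?_
  rw [suffixSum_last wdef Tdef _ bb, mul_one]
  exact claim j d le_rfl bb

end HardDir

end NisanAux


/-- The set of tensors computed by some single-(source,sink) ABP
of width at most `k` is closed in the standard topology; in particular border
single-(source,sink) ABP width complexity equals single-(source,sink) ABP width
complexity: membership in the closure is equivalent to membership. -/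
theorem widthLe_isClosed (d n k : ℕ) :
    IsClosed {f : (Fin d → Fin n) → ℂ | Nisan.WidthLe d n k f} ∧
    ∀ f : (Fin d → Fin n) → ℂ,
      f ∈ closure {g : (Fin d → Fin n) → ℂ | Nisan.WidthLe d n k g} ↔
        Nisan.WidthLe d n k f := by
  classical
  have hmain : IsClosed {f : (Fin d → Fin n) → ℂ | Nisan.WidthLe d n k f} := by
    rcases Nat.eq_zero_or_pos k with hk0 | hk
    · have he : {f : (Fin d → Fin n) → ℂ | Nisan.WidthLe d n k f} = ∅ := by
        ext f
        simp only [Set.mem_setOf_eq, Set.mem_empty_iff_false, iff_false]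
        rintro ⟨w, hw0, -, hwk, -⟩
        have := hwk 0
        omega
      rw [he]; exact isClosed_empty
    rcases Nat.eq_zero_or_pos d with hd0 | hd
    · subst hd0
      have he : {f : (Fin 0 → Fin n) → ℂ | Nisan.WidthLe 0 n k f} = {fun _ => 1} := by
        ext f
        simp only [Set.mem_setOf_eq, Set.mem_singleton_iff]
        constructor
        · rintro ⟨w, hw0, hwl, hwk, T, hC⟩
          funext j
          rw [hC j]
          have h1 : ∀ v : ∀ ℓ : Fin 1, Fin (w ℓ),
              (∏ t : Fin 0, T t (j t) (v t.castSucc) (v t.succ)) = 1 := by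
            intro v; simp
          rw [Finset.sum_congr rfl (fun v _ => h1 v), Finset.sum_const, Finset.card_univ]
          rw [Fintype.card_pi]
          rw [Fin.prod_univ_one]
          rw [Fintype.card_fin, hw0]
          simp
        · rintro rfl
          refine ⟨fun _ => 1, rfl, rfl, fun _ => hk, fun t => t.elim0, ?_⟩
          intro j
          have h1 : ∀ v : ∀ ℓ : Fin 1, Fin 1,
              (∏ t : Fin 0, (t.elim0 : Fin n → Matrix (Fin 1) (Fin 1) ℂ) (j t)
                (v t.castSucc) (v t.succ)) = 1 := by
            intro v; simp
          rw [Finset.sum_congr rfl (fun v _ => h1 v), Finset.sum_const, Finset.card_univ]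
          simp
      rw [he]; exact isClosed_singleton
    · have he : {f : (Fin d → Fin n) → ℂ | Nisan.WidthLe d n k f}
          = ⋂ i : Fin (d+1),
              {f | (Nisan.flatten d n f i.1 (by have := i.2; omega)).rank ≤ k} := by
        ext f
        simp only [Set.mem_setOf_eq, Set.mem_iInter]
        constructor
        · rintro ⟨w, hw0, hwl, hwk, T, hC⟩ i
          exact NisanAux.rank_flatten_le w T k hwk f hC i.1 _
        · intro hral
          by_cases hf : f = 0
          · subst hf
            refine ⟨fun _ => 1, rfl, rfl, fun _ => hk, fun t x => 0, ?_⟩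
            intro j
            show (0:ℂ) = _
            symm
            refine Finset.sum_eq_zero fun v _ => ?_
            exact Finset.prod_eq_zero (Finset.mem_univ (⟨0, hd⟩ : Fin d)) rfl
          · exact NisanAux.widthLe_of_rank k hd hk f hf
              (fun i hi => hral ⟨i, by omega⟩)
      rw [he]
      refine isClosed_iInter fun i => ?_
      have hpre : {f : (Fin d → Fin n) → ℂ |
            (Nisan.flatten d n f i.1 (by have := i.2; omega)).rank ≤ k}
          = (fun f : (Fin d → Fin n) → ℂ =>
              Nisan.flatten d n f i.1 (by have := i.2; omega)) ⁻¹'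
            {M : Matrix (Fin i.1 → Fin n) (Fin (d - i.1) → Fin n) ℂ | M.rank ≤ k} := rfl
      rw [hpre]
      refine IsClosed.preimage ?_ (NisanAux.isClosed_rank_le k)
      apply continuous_pi
      intro r
      apply continuous_pi
      intro c
      exact continuous_apply _
  exact ⟨hmain, fun f => by rw [hmain.closure_eq]; exact Iff.rfl⟩
end

section
/- If a tensor f : (Fin d → Fin n) → ℂ is computed by a trace ABP of format (w_0, w_1, …, w_{d−1}), then f is computed by a single-(source,sink) ABP of format (1, w_0·w_1, w_0·w_2, …, w_0·w_{d−1}, 1). In particular, the single-(source,sink) ABP width complexity of f is at most the square of its trace ABP width complexity. -/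
open scoped BigOperators

namespace Nisan

/-- A trace ABP of format `(w 0, …, w (d-1))` computes the coefficient tensor `f`
if for every monomial `j : Fin d → Fin n` the value `f j` equals the trace of the
matrix product `T 0 (j 0) * ⋯ * T (d-1) (j (d-1))`, written here as the sum over
all closed paths of the products of the corresponding matrix entries. -/
def TraceComputes (d n : ℕ) [NeZero d] (w : Fin d → ℕ)
    (T : ∀ k : Fin d, Fin n → Matrix (Fin (w k)) (Fin (w (k + 1))) ℂ)
    (f : (Fin d → Fin n) → ℂ) : Prop :=
  ∀ j : Fin d → Fin n,
    f j = ∑ v : ∀ k : Fin d, Fin (w k), ∏ k : Fin d, T k (j k) (v k) (v (k + 1))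

/-- The format `(1, w 0 · w 1, w 0 · w 2, …, w 0 · w (d-1), 1)`. -/
def squareFormat (d : ℕ) [NeZero d] (w : Fin d → ℕ) : Fin (d + 1) → ℕ :=
  fun i => if h : i.val = 0 ∨ i.val = d then 1 else w 0 * w ⟨i.val, by omega⟩

end Nisan

namespace TraceToSingleAux

variable {m n : ℕ} (w : Fin (m + 2) → ℕ)

lemma sf_mid (i : Fin (m + 3)) (h1 : 0 < i.val) (h2 : i.val < m + 2) :
    Nisan.squareFormat (m + 2) w i = w 0 * w ⟨i.val, h2⟩ := by
  unfold Nisan.squareFormat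
  rw [dif_neg (by omega)]

lemma sf_bd (i : Fin (m + 3)) (h : i.val = 0 ∨ i.val = m + 2) :
    Nisan.squareFormat (m + 2) w i = 1 := by
  unfold Nisan.squareFormat
  rw [dif_pos h]

def dec (i : Fin (m + 3)) (h1 : 0 < i.val) (h2 : i.val < m + 2) :
    Fin (Nisan.squareFormat (m + 2) w i) ≃ Fin (w 0) × Fin (w ⟨i.val, h2⟩) :=
  (finCongr (sf_mid w i h1 h2)).trans finProdFinEquiv.symm

lemma k_eq_zero {k : Fin (m + 2)} (h : k.val = 0) : (0 : Fin (m + 2)) = k := by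
  ext; simp [h]

lemma succ_mid {k : Fin (m + 2)} (h : k.val + 1 < m + 2) :
    (⟨k.val + 1, h⟩ : Fin (m + 2)) = k + 1 := by
  ext
  rw [Fin.val_add, Fin.val_one, Nat.mod_eq_of_lt (by omega)]

lemma last_succ {k : Fin (m + 2)} (h : k.val = m + 1) : (0 : Fin (m + 2)) = k + 1 := by
  ext
  rw [Fin.val_add, Fin.val_one, Fin.val_zero, h, show m + 1 + 1 = m + 2 from rfl,
    Nat.mod_self]


variable (T : ∀ k : Fin (m + 2), Fin n → Matrix (Fin (w k)) (Fin (w (k + 1))) ℂ)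

/-- The single-(source,sink) ABP matrices. -/
def Tb (k : Fin (m + 2)) (x : Fin n) :
    Matrix (Fin (Nisan.squareFormat (m + 2) w k.castSucc))
      (Fin (Nisan.squareFormat (m + 2) w k.succ)) ℂ :=
  Matrix.of fun p q =>
    if h0 : k.val = 0 then
      T k x (Fin.cast (congrArg w (k_eq_zero h0))
              (dec w k.succ (Nat.succ_pos _) (show k.val + 1 < m + 2 by omega) q).1)
            (Fin.cast (congrArg w (succ_mid (show k.val + 1 < m + 2 by omega)))
              (dec w k.succ (Nat.succ_pos _) (show k.val + 1 < m + 2 by omega) q).2)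
    else if h1 : k.val = m + 1 then
      T k x ((dec w k.castSucc (show 0 < k.val by omega) (show k.val < m + 2 by omega) p).2)
            (Fin.cast (congrArg w (last_succ h1))
              (dec w k.castSucc (show 0 < k.val by omega) (show k.val < m + 2 by omega) p).1)
    else
      if (dec w k.castSucc (show 0 < k.val by omega) (show k.val < m + 2 by omega) p).1
          = (dec w k.succ (Nat.succ_pos _) (show k.val + 1 < m + 2 by omega) q).1 then
        T k x ((dec w k.castSucc (show 0 < k.val by omega) (show k.val < m + 2 by omega) p).2)
              (Fin.cast (congrArg w (succ_mid (show k.val + 1 < m + 2 by omega)))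
                (dec w k.succ (Nat.succ_pos _) (show k.val + 1 < m + 2 by omega) q).2)
      else 0

/-- Encoding a closed path as a source-to-sink path. -/
def enc (u : ∀ k : Fin (m + 2), Fin (w k)) (i : Fin (m + 3)) :
    Fin (Nisan.squareFormat (m + 2) w i) :=
  if h : 0 < i.val ∧ i.val < m + 2 then
    (dec w i h.1 h.2).symm (u 0, u ⟨i.val, h.2⟩)
  else ⟨0, by rw [sf_bd w i (by omega)]; omega⟩

/-- Decoding a source-to-sink path to a closed path. -/
def dcd (v : ∀ i : Fin (m + 3), Fin (Nisan.squareFormat (m + 2) w i))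
    (k : Fin (m + 2)) : Fin (w k) :=
  if h : k.val = 0 then
    Fin.cast (congrArg w (k_eq_zero h))
      (dec w ⟨1, by omega⟩ (show 0 < 1 by omega) (show 1 < m + 2 by omega) (v ⟨1, by omega⟩)).1
  else
    (dec w ⟨k.val, by omega⟩ (show 0 < k.val by omega) k.isLt (v ⟨k.val, by omega⟩)).2

lemma dcd_enc (u : ∀ k : Fin (m + 2), Fin (w k)) : dcd w (enc w u) = u := by
  funext k
  by_cases h : k.val = 0
  · obtain rfl := k_eq_zero (m := m) h
    rw [dcd, dif_pos (by simp)]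
    rw [enc, dif_pos (show (0:ℕ) < 1 ∧ 1 < m + 2 by omega)]
    rw [Equiv.apply_symm_apply]
    simp
  · rw [dcd, dif_neg h]
    rw [enc, dif_pos (show 0 < k.val ∧ k.val < m + 2 by omega)]
    rw [Equiv.apply_symm_apply]


lemma T_congr {k k' : Fin (m + 2)} (hk : k = k') (x : Fin n) {a : Fin (w k)}
    {b : Fin (w (k + 1))} {a' : Fin (w k')} {b' : Fin (w (k' + 1))}
    (ha : a.val = a'.val) (hb : b.val = b'.val) : T k x a b = T k' x a' b' := by
  subst hk
  obtain rfl : a = a' := Fin.ext ha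
  obtain rfl : b = b' := Fin.ext hb
  rfl

lemma val_congr (u : ∀ k : Fin (m + 2), Fin (w k)) {i i' : Fin (m + 2)} (h : i = i') :
    (u i).val = (u i').val := by subst h; rfl

lemma prod_enc (j : Fin (m + 2) → Fin n) (u : ∀ k : Fin (m + 2), Fin (w k)) :
    (∏ k : Fin (m + 2), Tb w T k (j k) (enc w u k.castSucc) (enc w u k.succ))
      = ∏ k : Fin (m + 2), T k (j k) (u k) (u (k + 1)) := by
  refine Finset.prod_congr rfl fun k _ => ?_
  by_cases h0 : k.val = 0
  · rw [Tb]
    simp only [Matrix.of_apply]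
    rw [dif_pos h0]
    rw [enc, dif_pos (show 0 < k.succ.val ∧ k.succ.val < m + 2 by
        simp only [Fin.val_succ]; omega), Equiv.apply_symm_apply]
    exact T_congr w T rfl _ (by rw [Fin.coe_cast]; exact val_congr w u (k_eq_zero h0))
      (by rw [Fin.coe_cast]; exact val_congr w u (succ_mid _))
  · by_cases h1 : k.val = m + 1
    · rw [Tb]
      simp only [Matrix.of_apply]
      rw [dif_neg h0, dif_pos h1]
      rw [enc, dif_pos (show 0 < k.castSucc.val ∧ k.castSucc.val < m + 2 by
          simp only [Fin.coe_castSucc]; omega), Equiv.apply_symm_apply]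
      exact T_congr w T rfl _ rfl
        (by rw [Fin.coe_cast]; exact val_congr w u (last_succ h1))
    · rw [Tb]
      simp only [Matrix.of_apply]
      rw [dif_neg h0, dif_neg h1]
      rw [enc, dif_pos (show 0 < k.castSucc.val ∧ k.castSucc.val < m + 2 by
          simp only [Fin.coe_castSucc]; omega), enc,
        dif_pos (show 0 < k.succ.val ∧ k.succ.val < m + 2 by
          simp only [Fin.val_succ]; omega),
        Equiv.apply_symm_apply, Equiv.apply_symm_apply]
      rw [if_pos rfl]
      exact T_congr w T rfl _ rfl
        (by rw [Fin.coe_cast]; exact val_congr w u (succ_mid _))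


lemma enc_dcd (j : Fin (m + 2) → Fin n)
    (v : ∀ i : Fin (m + 3), Fin (Nisan.squareFormat (m + 2) w i))
    (hv : (∏ k : Fin (m + 2), Tb w T k (j k) (v k.castSucc) (v k.succ)) ≠ 0) :
    enc w (dcd w v) = v := by
  have hf : ∀ k : Fin (m + 2), Tb w T k (j k) (v k.castSucc) (v k.succ) ≠ 0 :=
    fun k => Finset.prod_ne_zero_iff.mp hv k (Finset.mem_univ k)
  have hcons : ∀ t (h1 : 0 < t) (h2 : t + 1 < m + 2),
      (dec w ⟨t, by omega⟩ h1 (show t < m + 2 by omega) (v ⟨t, by omega⟩)).1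
        = (dec w ⟨t + 1, by omega⟩ (show 0 < t + 1 by omega) h2 (v ⟨t + 1, by omega⟩)).1 := by
    intro t h1 h2
    have hk := hf ⟨t, by omega⟩
    rw [Tb] at hk
    simp only [Matrix.of_apply] at hk
    rw [dif_neg (show ¬(t = 0) by omega), dif_neg (show ¬(t = m + 1) by omega)] at hk
    simp only [Fin.castSucc_mk, Fin.succ_mk] at hk
    by_contra hne
    rw [if_neg hne] at hk
    exact hk rfl
  have hconst : ∀ t (h1 : 0 < t) (h2 : t < m + 2),
      (dec w ⟨t, by omega⟩ h1 h2 (v ⟨t, by omega⟩)).1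
        = (dec w ⟨1, by omega⟩ (show 0 < 1 by omega) (show 1 < m + 2 by omega)
            (v ⟨1, by omega⟩)).1 := by
    intro t
    induction t with
    | zero => omega
    | succ t ih =>
      intro h1 h2
      rcases Nat.eq_zero_or_pos t with ht | ht
      · subst ht; rfl
      · rw [← hcons t ht h2]
        exact ih ht (by omega)
  funext i
  by_cases hm : 0 < i.val ∧ i.val < m + 2
  · rw [enc, dif_pos hm, Equiv.symm_apply_eq]
    refine Prod.ext ?_ ?_
    · show dcd w v 0 = _
      rw [dcd, dif_pos (Fin.val_zero _)]
      refine Fin.ext ?_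
      rw [Fin.coe_cast]
      exact congrArg Fin.val (hconst i.val hm.1 hm.2).symm
    · show dcd w v ⟨i.val, hm.2⟩ = _
      rw [dcd, dif_neg (show ¬(i.val = 0) by omega)]
  · rw [enc, dif_neg hm]
    refine Fin.ext ?_
    have hlt : (v i).val < 1 :=
      Nat.lt_of_lt_of_le (v i).isLt (le_of_eq (sf_bd w i (by omega)))
    exact (Nat.lt_one_iff.mp hlt).symm

lemma key (j : Fin (m + 2) → Fin n) :
    (∑ v : ∀ i : Fin (m + 3), Fin (Nisan.squareFormat (m + 2) w i),
        ∏ k : Fin (m + 2), Tb w T k (j k) (v k.castSucc) (v k.succ))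
      = ∑ u : ∀ k : Fin (m + 2), Fin (w k),
          ∏ k : Fin (m + 2), T k (j k) (u k) (u (k + 1)) := by
  refine Finset.sum_bij_ne_zero (fun v _ _ => dcd w v)
    (fun _ _ _ => Finset.mem_univ _) ?_ ?_ ?_
  · intro v1 _ h1 v2 _ h2 hee
    rw [← enc_dcd w T j v1 h1, ← enc_dcd w T j v2 h2]
    exact congrArg (enc w) hee
  · intro u _ hg
    refine ⟨enc w u, Finset.mem_univ _, ?_, dcd_enc w u⟩
    rw [prod_enc w T j u]
    exact hg
  · intro v _ hv
    conv_lhs => rw [← enc_dcd w T j v hv]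
    exact prod_enc w T j (dcd w v)


lemma key1 {n : ℕ} (w : Fin 1 → ℕ)
    (T : ∀ k : Fin 1, Fin n → Matrix (Fin (w k)) (Fin (w (k + 1))) ℂ)
    (f : (Fin 1 → Fin n) → ℂ) (hT : Nisan.TraceComputes 1 n w T f) :
    Nisan.Computes 1 n (Nisan.squareFormat 1 w)
      (fun k x => Matrix.of fun _ _ =>
        ∑ u : ∀ k' : Fin 1, Fin (w k'), ∏ k' : Fin 1, T k' x (u k') (u (k' + 1))) f := by
  intro j
  rw [hT j]
  simp only [Matrix.of_apply, Fin.prod_univ_one]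
  rw [Finset.sum_const, Finset.card_univ]
  have hcard : Fintype.card (∀ k : Fin (1 + 1), Fin (Nisan.squareFormat 1 w k)) = 1 := by
    rw [Fintype.card_pi]
    refine Finset.prod_eq_one fun i _ => ?_
    rw [Fintype.card_fin]
    unfold Nisan.squareFormat
    rw [dif_pos (by omega)]
  rw [hcard, one_smul]

end TraceToSingleAux


/-- If `f` is computed by a trace ABP of format
`(w 0, …, w (d-1))` then it is computed by a single-(source,sink) ABP of format
`(1, w 0 · w 1, …, w 0 · w (d-1), 1)`. -/
theorem trace_to_single (d n : ℕ) [NeZero d] (w : Fin d → ℕ)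
    (T : ∀ k : Fin d, Fin n → Matrix (Fin (w k)) (Fin (w (k + 1))) ℂ)
    (f : (Fin d → Fin n) → ℂ) (hT : Nisan.TraceComputes d n w T f) :
    ∃ T' : ∀ k : Fin d, Fin n →
        Matrix (Fin (Nisan.squareFormat d w k.castSucc)) (Fin (Nisan.squareFormat d w k.succ)) ℂ,
      Nisan.Computes d n (Nisan.squareFormat d w) T' f := by
  rcases d with _ | _ | m
  · exact absurd rfl (NeZero.ne 0)
  · exact ⟨_, TraceToSingleAux.key1 w T f hT⟩
  · exact ⟨TraceToSingleAux.Tb w T,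
      fun j => (hT j).trans (TraceToSingleAux.key w T j).symm⟩
end

section
/- For every n ≥ 1, d ≥ 1 and every format (1, w_1, …, w_{d−1}, 1) with all w_i ≥ 1, the set of homogeneous degree-d polynomials in n variables computable by a monotone single-(source,sink) ABP of that format, regarded (via real coefficient vectors) as a subset of the complex coefficient space ℂ^{Mon(n,d)}, is not Zariski-closed: there is no set of polynomial functions on ℂ^{Mon(n,d)} whose common zero locus equals this set. -/
open scoped BigOperators

attribute [local instance] Classical.propDecidable

namespace MonABP

/-- The index set `Mon(n,d)` of degree-`d` monomials in `n` variables, encoded as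
exponent vectors of total degree `d`. -/
abbrev Mon (n d : ℕ) : Type := {m : Fin n →₀ ℕ // (m.sum fun _ e => e) = d}

/-- The coefficient, at the monomial (exponent vector) `m`, of the homogeneous
degree-`d` polynomial computed by the single-(source,sink) ABP of format `w` whose
edge labels are the homogeneous linear forms with coefficient vectors
`L k a b : Fin n → ℝ` (entry `(a,b)` of the `k`-th matrix is `Σ_t L k a b t · x_t`):
it is obtained by expanding the product of the label matrices and summing the
contributions of all source-to-sink paths. -/
noncomputable def monCoeff (d n : ℕ) (w : Fin (d + 1) → ℕ)
    (L : ∀ k : Fin d, Fin (w k.castSucc) → Fin (w k.succ) → Fin n → ℝ)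
    (m : Fin n →₀ ℕ) : ℝ :=
  ∑ v : ∀ k : Fin (d + 1), Fin (w k),
    ∑ t : Fin d → Fin n,
      if (∑ k : Fin d, Finsupp.single (t k) 1) = m
      then ∏ k : Fin d, L k (v k.castSucc) (v k.succ) (t k) else 0

/-- The set of coefficient vectors (regarded inside the complex coefficient space
`ℂ^{Mon(n,d)}`) of polynomials computable by a monotone single-(source,sink) ABP
of format `w`: all label coefficients are nonnegative reals. -/
def MonotoneComputable (d n : ℕ) (w : Fin (d + 1) → ℕ) : Set (Mon n d → ℂ) :=
  {c | ∃ L : ∀ k : Fin d, Fin (w k.castSucc) → Fin (w k.succ) → Fin n → ℝ,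
    (∀ k a b t, 0 ≤ L k a b t) ∧
    ∀ m : Mon n d, c m = (monCoeff d n w L m.val : ℂ)}

/-- monCoeff is nonnegative when all label coefficients are nonnegative. -/
lemma monCoeff_nonneg {n d : ℕ} (w : Fin (d + 1) → ℕ)
    (L : ∀ k : Fin d, Fin (w k.castSucc) → Fin (w k.succ) → Fin n → ℝ)
    (hL : ∀ k a b t, 0 ≤ L k a b t) (m : Fin n →₀ ℕ) :
    0 ≤ monCoeff d n w L m := by
  unfold monCoeff
  refine Finset.sum_nonneg fun v _ => Finset.sum_nonneg fun t _ => ?_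
  split
  · exact Finset.prod_nonneg fun k _ => hL _ _ _ _
  · exact le_rfl

/-- The ABP whose only nonzero label entry is `μ · x_0` at position `(0,0)` of every
matrix computes `μ^d · x_0^d`. -/
lemma monCoeff_diag {n d : ℕ} (hn : 1 ≤ n) (hd : 1 ≤ d) (w : Fin (d + 1) → ℕ)
    (hw : ∀ i, 1 ≤ w i) (μ : ℝ) (m : Fin n →₀ ℕ) :
    monCoeff d n w
      (fun k a b t =>
        if a = (⟨0, hw k.castSucc⟩ : Fin (w k.castSucc)) ∧
           b = (⟨0, hw k.succ⟩ : Fin (w k.succ)) ∧ t = (⟨0, hn⟩ : Fin n) then μ else 0) m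
      = if m = Finsupp.single (⟨0, hn⟩ : Fin n) d then μ ^ d else 0 := by
  classical
  have hterm : ∀ (v : ∀ k : Fin (d + 1), Fin (w k)) (t : Fin d → Fin n),
      (if (∑ k : Fin d, Finsupp.single (t k) 1) = m
        then ∏ k : Fin d,
          (if v k.castSucc = (⟨0, hw k.castSucc⟩ : Fin (w k.castSucc)) ∧
              v k.succ = (⟨0, hw k.succ⟩ : Fin (w k.succ)) ∧ t k = (⟨0, hn⟩ : Fin n)
            then μ else 0)
        else 0)
      = if t = (fun _ => (⟨0, hn⟩ : Fin n)) then
          (if v = (fun j => (⟨0, hw j⟩ : Fin (w j))) then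
            (if m = Finsupp.single (⟨0, hn⟩ : Fin n) d then μ ^ d else 0) else 0) else 0 := by
    intro v t
    by_cases hvt : v = (fun j => (⟨0, hw j⟩ : Fin (w j))) ∧ t = fun _ => (⟨0, hn⟩ : Fin n)
    · obtain ⟨hv, ht⟩ := hvt
      subst hv; subst ht
      rw [if_pos rfl, if_pos rfl]
      have hsum : (∑ _k : Fin d, Finsupp.single (⟨0, hn⟩ : Fin n) (1 : ℕ))
          = Finsupp.single (⟨0, hn⟩ : Fin n) d := by
        rw [Finset.sum_const, Finset.card_univ, Fintype.card_fin, Finsupp.smul_single,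
          smul_eq_mul, mul_one]
      rw [hsum]
      have hprod : (∏ _k : Fin d, μ) = μ ^ d := by
        rw [Finset.prod_const, Finset.card_univ, Fintype.card_fin]
      by_cases hm : m = Finsupp.single (⟨0, hn⟩ : Fin n) d
      · rw [if_pos hm.symm, if_pos hm]
        simpa using hprod
      · rw [if_neg (fun h => hm h.symm), if_neg hm]
    · have hrhs : (if t = (fun _ => (⟨0, hn⟩ : Fin n)) then
          (if v = (fun j => (⟨0, hw j⟩ : Fin (w j))) then
            (if m = Finsupp.single (⟨0, hn⟩ : Fin n) d then μ ^ d else 0) else 0) else 0) = 0 := by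
        by_cases ht : t = fun _ => (⟨0, hn⟩ : Fin n)
        · rw [if_pos ht, if_neg (fun hv => hvt ⟨hv, ht⟩)]
        · rw [if_neg ht]
      rw [hrhs]
      have hall : ¬ ∀ k : Fin d,
          v k.castSucc = (⟨0, hw k.castSucc⟩ : Fin (w k.castSucc)) ∧
          v k.succ = (⟨0, hw k.succ⟩ : Fin (w k.succ)) ∧ t k = (⟨0, hn⟩ : Fin n) := by
        intro h
        apply hvt
        constructor
        · funext j
          refine Fin.cases ?_ ?_ j
          · have hcs : ((⟨0, hd⟩ : Fin d).castSucc) = (0 : Fin (d + 1)) := by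
              ext; simp [Fin.castSucc]
            have h0 := (h ⟨0, hd⟩).1
            rw [hcs] at h0
            simpa [hcs] using h0
          · intro i; exact (h i).2.1
        · funext k; exact (h k).2.2
      rcases not_forall.1 hall with ⟨k, hk⟩
      have hzero : (∏ k : Fin d,
          (if v k.castSucc = (⟨0, hw k.castSucc⟩ : Fin (w k.castSucc)) ∧
              v k.succ = (⟨0, hw k.succ⟩ : Fin (w k.succ)) ∧ t k = (⟨0, hn⟩ : Fin n)
            then μ else 0)) = 0 :=
        Finset.prod_eq_zero (Finset.mem_univ k) (if_neg hk)
      rw [hzero, ite_self]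
  unfold monCoeff
  simp only [hterm]
  simp [Finset.sum_ite_eq']

/-- Evaluating a polynomial obtained by substituting univariate polynomials. -/
lemma eval_aeval_poly {σ : Type*} (f : σ → Polynomial ℂ) (z : ℂ)
    (P : MvPolynomial σ ℂ) :
    Polynomial.eval z (MvPolynomial.aeval f P)
      = MvPolynomial.eval (fun i => Polynomial.eval z (f i)) P := by
  induction P using MvPolynomial.induction_on with
  | C a => simp
  | add p q hp hq => simp [hp, hq]
  | mul_X p i hp => simp [hp]

end MonABP

/-- For every `n ≥ 1`, `d ≥ 1` and every format
`(1, w 1, …, w (d-1), 1)` with all widths positive, the set of homogeneous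
degree-`d` polynomials computable by a monotone single-(source,sink) ABP of that
format, viewed inside the complex coefficient space `ℂ^{Mon(n,d)}`, is not
Zariski-closed: it is not the common zero locus of any set of polynomial
functions on `ℂ^{Mon(n,d)}`. -/
theorem monotone_abp_set_not_zariski_closed (n d : ℕ) (hn : 1 ≤ n) (hd : 1 ≤ d)
    (w : Fin (d + 1) → ℕ) (h0 : w 0 = 1) (hlast : w (Fin.last d) = 1)
    (hw : ∀ i, 1 ≤ w i) :
    ¬ ∃ I : Set (MvPolynomial (MonABP.Mon n d) ℂ),
        MonABP.MonotoneComputable d n w =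
          {c : MonABP.Mon n d → ℂ | ∀ P ∈ I, MvPolynomial.eval c P = 0} := by
  classical
  rintro ⟨I, hI⟩
  have hm0sum : ((Finsupp.single (⟨0, hn⟩ : Fin n) d).sum fun _ e => e) = d := by
    simp [Finsupp.sum_single_index]
  set m0 : MonABP.Mon n d := ⟨Finsupp.single (⟨0, hn⟩ : Fin n) d, hm0sum⟩ with hm0def
  -- the nonnegative ray through the coefficient vector of x_0^d is computable
  have hmem : ∀ μ : ℝ, 0 ≤ μ →
      (fun m : MonABP.Mon n d => if m = m0 then ((μ ^ d : ℝ) : ℂ) else 0)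
        ∈ MonABP.MonotoneComputable d n w := by
    intro μ hμ
    refine ⟨fun k a b t =>
      if a = (⟨0, hw k.castSucc⟩ : Fin (w k.castSucc)) ∧
         b = (⟨0, hw k.succ⟩ : Fin (w k.succ)) ∧ t = (⟨0, hn⟩ : Fin n) then μ else 0,
      ?_, ?_⟩
    · intro k a b t
      dsimp only
      split
      · exact hμ
      · exact le_rfl
    · intro m
      rw [MonABP.monCoeff_diag hn hd w hw μ m.val]
      dsimp only
      by_cases h : m = m0
      · rw [if_pos h, if_pos (by rw [h])]
      · rw [if_neg h, if_neg (fun hv => h (Subtype.ext hv)), Complex.ofReal_zero]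
  -- every polynomial in I vanishes on the whole complex line through that vector
  have hzero : ∀ P ∈ I, ∀ z : ℂ,
      MvPolynomial.eval (fun m : MonABP.Mon n d => if m = m0 then z else 0) P = 0 := by
    intro P hP
    set Q : Polynomial ℂ := MvPolynomial.aeval
      (fun m : MonABP.Mon n d => if m = m0 then (Polynomial.X : Polynomial ℂ) else 0) P
      with hQdef
    have hevalQ : ∀ z : ℂ, Polynomial.eval z Q
        = MvPolynomial.eval (fun m : MonABP.Mon n d => if m = m0 then z else 0) P := by
      intro z
      rw [hQdef, MonABP.eval_aeval_poly]
      have harg : (fun i : MonABP.Mon n d =>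
          Polynomial.eval z (if i = m0 then (Polynomial.X : Polynomial ℂ) else 0))
          = fun m => if m = m0 then z else 0 := by
        funext m
        by_cases h : m = m0 <;> simp [h]
      rw [harg]
    have hroots : {z : ℂ | Q.IsRoot z}.Infinite := by
      have himg : (fun μ : ℝ => ((μ ^ d : ℝ) : ℂ)) '' Set.Ici 0 ⊆ {z | Q.IsRoot z} := by
        rintro z ⟨μ, hμ, rfl⟩
        have hmemS := hmem μ hμ
        rw [hI] at hmemS
        have h0 := hmemS P hP
        show Polynomial.eval _ Q = 0
        rw [hevalQ]
        exact h0
      have hinj : Set.InjOn (fun μ : ℝ => ((μ ^ d : ℝ) : ℂ)) (Set.Ici 0) := by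
        intro a ha b hb hab
        have hr0 : ((a ^ d : ℝ) : ℂ) = ((b ^ d : ℝ) : ℂ) := hab
        have hr : (a : ℝ) ^ d = b ^ d := by exact_mod_cast hr0
        exact (pow_left_strictMonoOn₀ (by omega : d ≠ 0)).injOn ha hb hr
      exact Set.Infinite.mono himg ((Set.Ici_infinite (0 : ℝ)).image hinj)
    have hQ0 : Q = 0 := Polynomial.eq_zero_of_infinite_isRoot Q hroots
    intro z
    rw [← hevalQ z, hQ0, Polynomial.eval_zero]
  -- but the point -1 · (coeff vector of x_0^d) is in the zero locus, not in the set
  have hneg : (fun m : MonABP.Mon n d => if m = m0 then (-1 : ℂ) else 0)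
      ∈ MonABP.MonotoneComputable d n w := by
    rw [hI]
    intro P hP
    exact hzero P hP (-1)
  obtain ⟨L, hL, hc⟩ := hneg
  have h1 : (if m0 = m0 then (-1 : ℂ) else 0)
      = ((MonABP.monCoeff d n w L m0.val : ℝ) : ℂ) := hc m0
  rw [if_pos rfl] at h1
  have h2 := MonABP.monCoeff_nonneg w L hL m0.val
  have h3 : (-1 : ℝ) = MonABP.monCoeff d n w L m0.val := by exact_mod_cast h1
  linarith
end

section
/- Let f ∈ ℝ[x_1, …, x_n]. Suppose there is a single-(source,sink) ABP of format (1, w_1, …, w_{d−1}, 1) with affine linear labels over ℝ[ε,ε^{−1}]_+ computing a polynomial f' ∈ ℝ[ε,ε^{−1}][x_1, …, x_n] such that every coefficient of f' is a polynomial in ε (that is, no negative powers of ε occur in the coefficients of f') and substituting ε = 0 into f' yields f. Then there exists a monotone single-(source,sink) ABP of the same format (1, w_1, …, w_{d−1}, 1) with affine linear labels over ℝ_{≥0} computing f. -/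
open scoped BigOperators
open Filter Topology

attribute [local instance] Classical.propDecidable

namespace MonABP

/-- Evaluation of a real Laurent polynomial at a real number `x`
(using integer powers of `x`). -/
noncomputable def evalAt (q : LaurentPolynomial ℝ) (x : ℝ) : ℝ :=
  q.coeff.sum fun z c => c * x ^ z

/-- A Laurent polynomial belongs to `ℝ[ε,ε⁻¹]₊` iff it is nonnegative for all
sufficiently small `ε > 0`. -/
def EventuallyNonneg (q : LaurentPolynomial ℝ) : Prop :=
  ∃ δ > (0 : ℝ), ∀ x : ℝ, 0 < x → x < δ → 0 ≤ evalAt q x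

/-- The coefficient, at the monomial (exponent vector) `m`, of the polynomial
computed by the single-(source,sink) ABP of format `w` over the commutative
semiring `R` whose edge labels are the affine linear forms with constant terms
`Cc k a b` and linear coefficients `Ll k a b t` (entry `(a,b)` of the `k`-th
matrix is `Cc k a b + Σ_t Ll k a b t · x_t`): it is obtained by expanding the
product of the label matrices, summing over all source-to-sink paths `v` and, for
each edge of the path, the choice `s k` of either the constant term (`none`) or a
variable (`some t`). -/
noncomputable def affCoeff (R : Type*) [CommSemiring R] (d n : ℕ) (w : Fin (d + 1) → ℕ)
    (Cc : ∀ k : Fin d, Fin (w k.castSucc) → Fin (w k.succ) → R)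
    (Ll : ∀ k : Fin d, Fin (w k.castSucc) → Fin (w k.succ) → Fin n → R)
    (m : Fin n →₀ ℕ) : R :=
  ∑ v : ∀ k : Fin (d + 1), Fin (w k),
    ∑ s : Fin d → Option (Fin n),
      if (∑ k : Fin d, Option.elim (s k) 0 fun t => Finsupp.single t 1) = m
      then ∏ k : Fin d,
        Option.elim (s k) (Cc k (v k.castSucc) (v k.succ))
          (fun t => Ll k (v k.castSucc) (v k.succ) t)
      else 0

end MonABP

namespace MonAux

noncomputable def mindeg (q : LaurentPolynomial ℝ) : ℤ :=
  if h : q.coeff.support.Nonempty then q.coeff.support.min' h else 0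

lemma coeff_eq_zero_of_lt_mindeg (q : LaurentPolynomial ℝ) (z : ℤ) (hz : z < mindeg q) :
    q.coeff z = 0 := by
  by_cases h : q.coeff.support.Nonempty
  · rw [mindeg, dif_pos h] at hz
    by_contra hq
    exact absurd (Finset.min'_le _ _ (Finsupp.mem_support_iff.mpr hq)) (not_le.mpr hz)
  · rw [Finset.not_nonempty_iff_eq_empty] at h
    by_contra hq
    exact absurd (Finsupp.mem_support_iff.mpr hq) (by simp [h])

lemma coeff_mindeg_ne_zero (q : LaurentPolynomial ℝ) (hq : q ≠ 0) : q.coeff (mindeg q) ≠ 0 := by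
  have h : q.coeff.support.Nonempty := Finsupp.support_nonempty_iff.mpr (mt AddMonoidAlgebra.coeff_eq_zero.mp hq)
  rw [mindeg, dif_pos h]
  exact Finsupp.mem_support_iff.mp (Finset.min'_mem _ h)

lemma mul_coeff (p q : LaurentPolynomial ℝ) (a b : ℤ)
    (hp : ∀ y : ℤ, y < a → p.coeff y = 0) (hq : ∀ y : ℤ, y < b → q.coeff y = 0) :
    (∀ z : ℤ, z < a + b → (p * q).coeff z = 0) ∧ (p * q).coeff (a + b) = p.coeff a * q.coeff b := by
  constructor
  · intro z hz
    rw [AddMonoidAlgebra.mul_apply]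
    rw [Finsupp.sum]
    refine Finset.sum_eq_zero fun x hx => ?_
    rw [Finsupp.sum]
    refine Finset.sum_eq_zero fun y hy => ?_
    have hxa : a ≤ x := by
      by_contra h; exact (Finsupp.mem_support_iff.mp hx) (hp x (not_le.mp h))
    have hyb : b ≤ y := by
      by_contra h; exact (Finsupp.mem_support_iff.mp hy) (hq y (not_le.mp h))
    rw [if_neg]; omega
  · rw [AddMonoidAlgebra.mul_apply]
    rw [Finsupp.sum]
    have : ∀ x ∈ p.coeff.support,
        (Finsupp.sum q.coeff fun y c => if x + y = a + b then p.coeff x * c else 0)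
          = if x = a then p.coeff a * q.coeff b else 0 := by
      intro x hx
      have hxa : a ≤ x := by
        by_contra h; exact (Finsupp.mem_support_iff.mp hx) (hp x (not_le.mp h))
      by_cases hxe : x = a
      · subst hxe
        rw [if_pos rfl, Finsupp.sum]
        have : ∀ y ∈ q.coeff.support, (if x + y = x + b then p.coeff x * q.coeff y else 0)
            = if y = b then p.coeff x * q.coeff y else 0 := by
          intro y _; congr 1; exact propext ⟨fun h => by omega, fun h => by omega⟩
        rw [Finset.sum_congr rfl this, Finset.sum_ite_eq' q.coeff.support b]
        by_cases hb : b ∈ q.coeff.support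
        · rw [if_pos hb]
        · rw [if_neg hb, Finsupp.notMem_support_iff.mp hb, mul_zero]
      · rw [if_neg hxe, Finsupp.sum]
        refine Finset.sum_eq_zero fun y hy => ?_
        have hyb : b ≤ y := by
          by_contra h; exact (Finsupp.mem_support_iff.mp hy) (hq y (not_le.mp h))
        rw [if_neg]; omega
    rw [Finset.sum_congr rfl this, Finset.sum_ite_eq' p.coeff.support a]
    by_cases ha : a ∈ p.coeff.support
    · rw [if_pos ha]
    · rw [if_neg ha, Finsupp.notMem_support_iff.mp ha, zero_mul]

lemma prod_coeff {ι : Type*} (s : Finset ι) (q : ι → LaurentPolynomial ℝ) (m : ι → ℤ)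
    (h : ∀ i ∈ s, ∀ y : ℤ, y < m i → (q i).coeff y = 0) :
    (∀ z : ℤ, z < ∑ i ∈ s, m i → (∏ i ∈ s, q i).coeff z = 0) ∧
      (∏ i ∈ s, q i).coeff (∑ i ∈ s, m i) = ∏ i ∈ s, (q i).coeff (m i) := by
  classical
  induction s using Finset.induction_on with
  | empty =>
    constructor
    · intro z hz
      simp only [Finset.prod_empty, Finset.sum_empty] at *
      rw [AddMonoidAlgebra.one_def]
      rw [AddMonoidAlgebra.coeff_single, Finsupp.single_apply, if_neg (by omega)]
    · simp only [Finset.prod_empty, Finset.sum_empty]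
      rw [AddMonoidAlgebra.one_def, AddMonoidAlgebra.coeff_single, Finsupp.single_apply, if_pos rfl]
  | insert j t hnot ih =>
    have h1 := ih (fun i hi y hy => h i (Finset.mem_insert_of_mem hi) y hy)
    have h2 := mul_coeff (q j) (∏ i ∈ t, q i) (m j) (∑ i ∈ t, m i)
      (h j (Finset.mem_insert_self j t)) h1.1
    rw [Finset.prod_insert hnot, Finset.sum_insert hnot, Finset.prod_insert hnot]
    exact ⟨h2.1, by rw [h2.2, h1.2]⟩

lemma pos_coeff_nonneg (q : LaurentPolynomial ℝ) (hq : MonABP.EventuallyNonneg q)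
    (z : ℤ) (h : ∀ y : ℤ, y < z → q.coeff y = 0) : 0 ≤ q.coeff z := by
  obtain ⟨δ, hδ, hpos⟩ := hq
  have key : Tendsto (fun x : ℝ => ∑ u ∈ q.coeff.support, q.coeff u * x ^ (u - z))
      (𝓝[>] (0:ℝ)) (𝓝 (q.coeff z)) := by
    have hqz : q.coeff z = ∑ u ∈ q.coeff.support, (if u = z then q.coeff u else 0) := by
      rw [Finset.sum_ite_eq' q.coeff.support z]
      split_ifs with h'
      · rfl
      · exact Finsupp.notMem_support_iff.mp h'
    rw [hqz]
    refine tendsto_finset_sum _ fun u hu => ?_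
    have hz : z ≤ u := by
      by_contra hcon
      exact (Finsupp.mem_support_iff.mp hu) (h u (not_le.mp hcon))
    set k := (u - z).toNat with hk
    have hval : (if u = z then q.coeff u else 0) = q.coeff u * (0:ℝ) ^ k := by
      by_cases he : u = z
      · subst he
        rw [if_pos rfl, hk]
        simp
      · rw [if_neg he]
        have : k ≠ 0 := by omega
        rw [zero_pow this, mul_zero]
    rw [hval]
    have cont : Tendsto (fun x : ℝ => q.coeff u * x ^ k) (𝓝[>] (0:ℝ)) (𝓝 (q.coeff u * (0:ℝ) ^ k)) :=
      ((continuous_const.mul (continuous_pow k)).tendsto 0).mono_left nhdsWithin_le_nhds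
    refine cont.congr' ?_
    filter_upwards [self_mem_nhdsWithin] with x hx
    have hx0 : (0:ℝ) < x := hx
    rw [← zpow_natCast, hk, Int.toNat_of_nonneg (by omega)]
  have hev : ∀ᶠ x in 𝓝[>] (0:ℝ), 0 ≤ ∑ u ∈ q.coeff.support, q.coeff u * x ^ (u - z) := by
    filter_upwards [Ioo_mem_nhdsGT_of_mem (by constructor <;> simp [hδ] : (0:ℝ) ∈ Set.Ico 0 δ)]
      with x hx
    have hx0 : (0:ℝ) < x := hx.1
    have heq : ∑ u ∈ q.coeff.support, q.coeff u * x ^ (u - z) = MonABP.evalAt q x * x ^ (-z) := by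
      rw [MonABP.evalAt, Finsupp.sum, Finset.sum_mul]
      refine Finset.sum_congr rfl fun u _ => ?_
      rw [mul_assoc, ← zpow_add₀ (ne_of_gt hx0), sub_eq_add_neg]
    rw [heq]
    exact mul_nonneg (hpos x hx0 hx.2) (zpow_pos hx0 _).le
  exact ge_of_tendsto key hev

section Main
variable (n d : ℕ) (w : Fin (d + 1) → ℕ)
    (Cc : ∀ k : Fin d, Fin (w k.castSucc) → Fin (w k.succ) → LaurentPolynomial ℝ)
    (Ll : ∀ k : Fin d, Fin (w k.castSucc) → Fin (w k.succ) → Fin n → LaurentPolynomial ℝ)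

abbrev PathSel := (∀ j : Fin (d + 1), Fin (w j)) × (Fin d → Option (Fin n))

noncomputable def lab (k : Fin d) (a : Fin (w k.castSucc)) (b : Fin (w k.succ))
    (o : Option (Fin n)) : LaurentPolynomial ℝ :=
  Option.elim o (Cc k a b) (fun t => Ll k a b t)

noncomputable def edgeq (p : PathSel n d w) (k : Fin d) : LaurentPolynomial ℝ :=
  lab n d w Cc Ll k (p.1 k.castSucc) (p.1 k.succ) (p.2 k)

noncomputable def msum (p : PathSel n d w) : Fin n →₀ ℕ :=
  ∑ k : Fin d, Option.elim (p.2 k) 0 fun t => Finsupp.single t 1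

noncomputable def pathSet (k : Fin (d + 1)) (a : Fin (w k)) : Finset (PathSel n d w) :=
  Finset.univ.filter fun p =>
    p.1 k = a ∧ ∀ j : Fin d, (j : ℕ) < (k : ℕ) → edgeq n d w Cc Ll p j ≠ 0

noncomputable def prefVal (p : PathSel n d w) (k : Fin (d + 1)) : ℤ :=
  ∑ j ∈ Finset.univ.filter (fun j : Fin d => (j : ℕ) < (k : ℕ)),
    mindeg (edgeq n d w Cc Ll p j)

noncomputable def SS (k : Fin (d + 1)) (a : Fin (w k)) : Finset ℤ :=
  (pathSet n d w Cc Ll k a).image fun p => prefVal n d w Cc Ll p k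

noncomputable def DD (k : Fin (d + 1)) (a : Fin (w k)) : ℤ :=
  if h : (SS n d w Cc Ll k a).Nonempty then (SS n d w Cc Ll k a).min' h else 0

lemma evn_lab (hC : ∀ k a b, MonABP.EventuallyNonneg (Cc k a b))
    (hL : ∀ k a b t, MonABP.EventuallyNonneg (Ll k a b t))
    (k : Fin d) (a : Fin (w k.castSucc)) (b : Fin (w k.succ)) (o : Option (Fin n)) :
    MonABP.EventuallyNonneg (lab n d w Cc Ll k a b o) := by
  cases o with
  | none => exact hC k a b
  | some t => exact hL k a b t

lemma prefVal_zero (p : PathSel n d w) : prefVal n d w Cc Ll p 0 = 0 := by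
  rw [prefVal]
  exact Finset.sum_eq_zero fun j hj => by simp at hj

lemma prefVal_last (p : PathSel n d w) :
    prefVal n d w Cc Ll p (Fin.last d) = ∑ k : Fin d, mindeg (edgeq n d w Cc Ll p k) := by
  rw [prefVal]
  congr 1
  refine Finset.filter_true_of_mem fun j _ => ?_
  simp [Fin.is_lt]

lemma SS_zero_eq (a : Fin (w 0)) (x : ℤ) (hx : x ∈ SS n d w Cc Ll 0 a) : x = 0 := by
  obtain ⟨p, _, rfl⟩ := Finset.mem_image.mp hx
  exact prefVal_zero n d w Cc Ll p

lemma DD_zero (a : Fin (w 0)) (h : (SS n d w Cc Ll 0 a).Nonempty) :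
    DD n d w Cc Ll 0 a = 0 := by
  rw [DD, dif_pos h]
  exact SS_zero_eq n d w Cc Ll a _ (Finset.min'_mem _ h)

lemma prefVal_succ (p : PathSel n d w) (k : Fin d) :
    prefVal n d w Cc Ll p k.succ
      = mindeg (edgeq n d w Cc Ll p k) + prefVal n d w Cc Ll p k.castSucc := by
  rw [prefVal, prefVal]
  have hins : Finset.univ.filter (fun j : Fin d => (j : ℕ) < (k.succ : ℕ))
      = insert k (Finset.univ.filter fun j : Fin d => (j : ℕ) < (k.castSucc : ℕ)) := by
    ext j
    simp only [Finset.mem_filter, Finset.mem_univ, true_and, Finset.mem_insert,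
      Fin.val_succ, Fin.coe_castSucc, Fin.ext_iff]
    omega
  rw [hins, Finset.sum_insert (by simp)]

lemma step (k : Fin d) (a : Fin (w k.castSucc)) (b : Fin (w k.succ)) (o : Option (Fin n))
    (ha : (SS n d w Cc Ll k.castSucc a).Nonempty) (hq : lab n d w Cc Ll k a b o ≠ 0) :
    (SS n d w Cc Ll k.succ b).Nonempty ∧
      DD n d w Cc Ll k.succ b
        ≤ DD n d w Cc Ll k.castSucc a + mindeg (lab n d w Cc Ll k a b o) := by
  obtain ⟨p, hp, hval⟩ := Finset.mem_image.mp (Finset.min'_mem _ ha)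
  rw [pathSet, Finset.mem_filter] at hp
  obtain ⟨-, hpa, hpedge⟩ := hp
  set p' : PathSel n d w :=
    (fun j => if h : j = k.succ then Fin.cast (congrArg w h).symm b else p.1 j,
     fun j => if j = k then o else p.2 j) with hp'
  have hv_ne : ∀ j : Fin (d + 1), j ≠ k.succ → p'.1 j = p.1 j := by
    intro j hj; simp only [hp', dif_neg hj]
  have hv_succ : p'.1 k.succ = b := by
    simp only [hp', dif_pos rfl]
    exact Fin.ext (by simp [Fin.coe_cast])
  have hs_ne : ∀ j : Fin d, j ≠ k → p'.2 j = p.2 j := by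
    intro j hj; simp only [hp', if_neg hj]
  have hs_k : p'.2 k = o := by simp [hp']
  have hedge_lt : ∀ j : Fin d, (j : ℕ) < (k : ℕ) →
      edgeq n d w Cc Ll p' j = edgeq n d w Cc Ll p j := by
    intro j hj
    rw [edgeq, edgeq,
      hv_ne j.castSucc (by simp only [ne_eq, Fin.ext_iff, Fin.coe_castSucc, Fin.val_succ]; omega),
      hv_ne j.succ (by simp only [ne_eq, Fin.ext_iff, Fin.coe_castSucc, Fin.val_succ]; omega),
      hs_ne j (by simp only [ne_eq, Fin.ext_iff, Fin.coe_castSucc, Fin.val_succ]; omega)]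
  have hvk : p'.1 k.castSucc = a := by
    rw [hv_ne k.castSucc
      (by simp only [ne_eq, Fin.ext_iff, Fin.coe_castSucc, Fin.val_succ]; omega), hpa]
  have hedge_k : edgeq n d w Cc Ll p' k = lab n d w Cc Ll k a b o := by
    rw [edgeq, hs_k]
    rw [hvk, hv_succ]
  have hmem : p' ∈ pathSet n d w Cc Ll k.succ b := by
    rw [pathSet, Finset.mem_filter]
    refine ⟨Finset.mem_univ _, hv_succ, fun j hj => ?_⟩
    rcases lt_or_eq_of_le (Nat.lt_succ_iff.mp (by simpa [Fin.val_succ] using hj : (j : ℕ) < (k : ℕ) + 1)) with h' | h'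
    · rw [hedge_lt j h']
      exact hpedge j (by simpa [Fin.coe_castSucc] using h')
    · have : j = k := Fin.ext h'
      subst this
      rw [hedge_k]; exact hq
  have hpref : prefVal n d w Cc Ll p' k.succ
      = mindeg (lab n d w Cc Ll k a b o) + prefVal n d w Cc Ll p k.castSucc := by
    rw [prefVal_succ, hedge_k]
    congr 1
    rw [prefVal, prefVal]
    exact Finset.sum_congr rfl fun j hj => by
      rw [hedge_lt j (by simpa using (Finset.mem_filter.mp hj).2)]
  have hne : (SS n d w Cc Ll k.succ b).Nonempty :=
    ⟨_, Finset.mem_image_of_mem _ hmem⟩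
  refine ⟨hne, ?_⟩
  rw [DD, dif_pos hne, DD, dif_pos ha]
  calc (SS n d w Cc Ll k.succ b).min' hne ≤ prefVal n d w Cc Ll p' k.succ :=
        Finset.min'_le _ _ (Finset.mem_image_of_mem _ hmem)
    _ = (SS n d w Cc Ll k.castSucc a).min' ha + mindeg (lab n d w Cc Ll k a b o) := by
        rw [hpref, hval]; ring

lemma telescope (g : Fin (d + 1) → ℤ) :
    ∑ k : Fin d, (g k.succ - g k.castSucc) = g (Fin.last d) - g 0 := by
  set G : ℕ → ℤ := fun i => if h : i < d + 1 then g ⟨i, h⟩ else 0 with hG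
  have h1 : ∀ k : Fin d, g k.succ - g k.castSucc = G ((k : ℕ) + 1) - G (k : ℕ) := by
    intro k
    have i1 : (k : ℕ) + 1 < d + 1 := by omega
    have i2 : (k : ℕ) < d + 1 := by omega
    simp only [hG, dif_pos i1, dif_pos i2]
    congr 1
  rw [Finset.sum_congr rfl fun k _ => h1 k,
    Fin.sum_univ_eq_sum_range (fun i => G (i + 1) - G i) d, Finset.sum_range_sub G d]
  have e1 : G d = g (Fin.last d) := by rw [hG]; simp only [dif_pos (by omega : d < d + 1)]; rfl
  have e2 : G 0 = g 0 := by rw [hG]; simp only [dif_pos (by omega : 0 < d + 1)]; rfl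
  rw [e1, e2]

lemma affCoeff_eq (R : Type*) [CommSemiring R]
    (C' : ∀ k : Fin d, Fin (w k.castSucc) → Fin (w k.succ) → R)
    (L' : ∀ k : Fin d, Fin (w k.castSucc) → Fin (w k.succ) → Fin n → R)
    (m : Fin n →₀ ℕ) :
    MonABP.affCoeff R d n w C' L' m
      = ∑ p : PathSel n d w,
          if msum n d w p = m
          then ∏ k : Fin d,
            Option.elim (p.2 k) (C' k (p.1 k.castSucc) (p.1 k.succ))
              (fun t => L' k (p.1 k.castSucc) (p.1 k.succ) t)
          else 0 := by
  rw [MonABP.affCoeff, ← Fintype.sum_prod_type']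
  refine Finset.sum_congr rfl fun p _ => ?_
  rw [msum]

lemma affCoeff_coeff (m : Fin n →₀ ℕ) (z : ℤ) :
    (MonABP.affCoeff (LaurentPolynomial ℝ) d n w Cc Ll m).coeff z
      = ∑ p : PathSel n d w,
          if msum n d w p = m then (∏ k : Fin d, edgeq n d w Cc Ll p k).coeff z else 0 := by
  rw [affCoeff_eq n d w (LaurentPolynomial ℝ) Cc Ll m]
  rw [AddMonoidAlgebra.coeff_sum, Finsupp.finset_sum_apply]
  refine Finset.sum_congr rfl fun p _ => ?_
  rw [apply_ite (fun q : LaurentPolynomial ℝ => q.coeff z)]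
  rfl

lemma star (hC : ∀ k a b, MonABP.EventuallyNonneg (Cc k a b))
    (hL : ∀ k a b t, MonABP.EventuallyNonneg (Ll k a b t))
    (hpoly : ∀ m : Fin n →₀ ℕ, ∀ z : ℤ, z < 0 →
      (MonABP.affCoeff (LaurentPolynomial ℝ) d n w Cc Ll m).coeff z = 0)
    (p : PathSel n d w) (hall : ∀ k, edgeq n d w Cc Ll p k ≠ 0) :
    0 ≤ ∑ k : Fin d, mindeg (edgeq n d w Cc Ll p k) := by
  by_contra hneg
  push_neg at hneg
  set m := msum n d w p with hm
  set T : Finset (PathSel n d w) := Finset.univ.filter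
    (fun p' => msum n d w p' = m ∧ ∀ k, edgeq n d w Cc Ll p' k ≠ 0) with hT
  have hpT : p ∈ T := by
    rw [hT, Finset.mem_filter]
    exact ⟨Finset.mem_univ _, rfl, hall⟩
  set I : Finset ℤ := T.image fun p' => ∑ k : Fin d, mindeg (edgeq n d w Cc Ll p' k) with hI
  have hIne : I.Nonempty := ⟨_, Finset.mem_image_of_mem _ hpT⟩
  set z0 := I.min' hIne with hz0def
  have hz0 : z0 < 0 :=
    lt_of_le_of_lt (Finset.min'_le _ _ (Finset.mem_image_of_mem _ hpT)) hneg
  have h0 := hpoly m z0 hz0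
  rw [affCoeff_coeff] at h0
  have hterm_nonneg : ∀ p' : PathSel n d w,
      0 ≤ if msum n d w p' = m then (∏ k : Fin d, edgeq n d w Cc Ll p' k).coeff z0 else 0 := by
    intro p'
    split_ifs with hcond
    · by_cases hz : ∀ k, edgeq n d w Cc Ll p' k ≠ 0
      · have hp'T : p' ∈ T := by
          rw [hT, Finset.mem_filter]; exact ⟨Finset.mem_univ _, hcond, hz⟩
        have hle : z0 ≤ ∑ k : Fin d, mindeg (edgeq n d w Cc Ll p' k) :=
          Finset.min'_le _ _ (Finset.mem_image_of_mem _ hp'T)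
        have hpc := prod_coeff Finset.univ (fun k => edgeq n d w Cc Ll p' k)
          (fun k => mindeg (edgeq n d w Cc Ll p' k))
          (fun k _ y hy => coeff_eq_zero_of_lt_mindeg _ _ hy)
        rcases lt_or_eq_of_le hle with h' | h'
        · rw [hpc.1 z0 h']
        · rw [h', hpc.2]
          refine Finset.prod_nonneg fun k _ => ?_
          exact pos_coeff_nonneg _ (evn_lab n d w Cc Ll hC hL _ _ _ _) _
            (fun y hy => coeff_eq_zero_of_lt_mindeg _ _ hy)
      · push_neg at hz
        obtain ⟨k0, hk0⟩ := hz
        rw [Finset.prod_eq_zero (Finset.mem_univ k0) hk0]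
        exact le_of_eq rfl
    · exact le_refl 0
  have hwit : ∃ p' ∈ (Finset.univ : Finset (PathSel n d w)),
      0 < if msum n d w p' = m then (∏ k : Fin d, edgeq n d w Cc Ll p' k).coeff z0 else 0 := by
    obtain ⟨p'', hp''T, hp''v⟩ := Finset.mem_image.mp (Finset.min'_mem _ hIne)
    rw [hT, Finset.mem_filter] at hp''T
    obtain ⟨-, hcond, hz⟩ := hp''T
    refine ⟨p'', Finset.mem_univ _, ?_⟩
    rw [if_pos hcond]
    have hpc := prod_coeff Finset.univ (fun k => edgeq n d w Cc Ll p'' k)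
      (fun k => mindeg (edgeq n d w Cc Ll p'' k))
      (fun k _ y hy => coeff_eq_zero_of_lt_mindeg _ _ hy)
    rw [← hz0def] at hp''v
    rw [← hp''v, hpc.2]
    refine Finset.prod_pos fun k _ => ?_
    have h1 : 0 ≤ (edgeq n d w Cc Ll p'' k).coeff (mindeg (edgeq n d w Cc Ll p'' k)) := by
      exact pos_coeff_nonneg _ (evn_lab n d w Cc Ll hC hL _ _ _ _) _
        (fun y hy => coeff_eq_zero_of_lt_mindeg _ _ hy)
    exact lt_of_le_of_ne h1 (Ne.symm (coeff_mindeg_ne_zero _ (hz k)))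
  have := Finset.sum_pos' (fun p' _ => hterm_nonneg p') hwit
  rw [h0] at this
  exact lt_irrefl 0 this

lemma SS_last_nonneg (hC : ∀ k a b, MonABP.EventuallyNonneg (Cc k a b))
    (hL : ∀ k a b t, MonABP.EventuallyNonneg (Ll k a b t))
    (hpoly : ∀ m : Fin n →₀ ℕ, ∀ z : ℤ, z < 0 →
      (MonABP.affCoeff (LaurentPolynomial ℝ) d n w Cc Ll m).coeff z = 0)
    (aa : Fin (w (Fin.last d))) (x : ℤ) (hx : x ∈ SS n d w Cc Ll (Fin.last d) aa) :
    0 ≤ x := by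
  obtain ⟨p, hp, rfl⟩ := Finset.mem_image.mp hx
  rw [pathSet, Finset.mem_filter] at hp
  rw [prefVal_last]
  exact star n d w Cc Ll hC hL hpoly p (fun k => hp.2.2 k k.isLt)

end Main
end MonAux


/-- If a single-(source,sink) ABP of format `(1, w 1, …, w (d-1), 1)`
with affine linear labels over `ℝ[ε,ε⁻¹]₊` computes a polynomial `f'` none of whose
coefficients contains a negative power of `ε`, and substituting `ε = 0` in `f'`
yields `f`, then `f` is computed by a monotone single-(source,sink) ABP of the same
format with affine linear labels over `ℝ≥0`. -/
theorem monotone_single_source_sink_closed (n d : ℕ) (w : Fin (d + 1) → ℕ)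
    (h0 : w 0 = 1) (hlast : w (Fin.last d) = 1)
    (f : MvPolynomial (Fin n) ℝ)
    (Cc : ∀ k : Fin d, Fin (w k.castSucc) → Fin (w k.succ) → LaurentPolynomial ℝ)
    (Ll : ∀ k : Fin d, Fin (w k.castSucc) → Fin (w k.succ) → Fin n → LaurentPolynomial ℝ)
    (hC : ∀ k a b, MonABP.EventuallyNonneg (Cc k a b))
    (hL : ∀ k a b t, MonABP.EventuallyNonneg (Ll k a b t))
    (hpoly : ∀ m : Fin n →₀ ℕ, ∀ z : ℤ, z < 0 →
      (MonABP.affCoeff (LaurentPolynomial ℝ) d n w Cc Ll m).coeff z = 0)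
    (hf : ∀ m : Fin n →₀ ℕ,
      f.coeff m = (MonABP.affCoeff (LaurentPolynomial ℝ) d n w Cc Ll m).coeff 0) :
    ∃ (Cc' : ∀ k : Fin d, Fin (w k.castSucc) → Fin (w k.succ) → ℝ)
      (Ll' : ∀ k : Fin d, Fin (w k.castSucc) → Fin (w k.succ) → Fin n → ℝ),
      (∀ k a b, 0 ≤ Cc' k a b) ∧ (∀ k a b t, 0 ≤ Ll' k a b t) ∧
      ∀ m : Fin n →₀ ℕ, f.coeff m = MonABP.affCoeff ℝ d n w Cc' Ll' m := by
  classical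
  open MonAux in
  set sinkIdx : Fin (w (Fin.last d)) := ⟨0, by rw [hlast]; exact Nat.zero_lt_one⟩ with hsdef
  by_cases hmain : (MonAux.SS n d w Cc Ll (Fin.last d) sinkIdx).Nonempty ∧
      MonAux.DD n d w Cc Ll (Fin.last d) sinkIdx = 0
  · -- main case: rescaled labels
    obtain ⟨hne_last, hDD0⟩ := hmain
    set F : ∀ (k : Fin d), Fin (w k.castSucc) → Fin (w k.succ) → Option (Fin n) → ℝ :=
      fun k a b o =>
        if (MonAux.SS n d w Cc Ll k.castSucc a).Nonempty
        then (MonAux.lab n d w Cc Ll k a b o).coeff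
          (MonAux.DD n d w Cc Ll k.succ b - MonAux.DD n d w Cc Ll k.castSucc a)
        else 0 with hFdef
    have hFeq : ∀ k a b o, F k a b o =
        if (MonAux.SS n d w Cc Ll k.castSucc a).Nonempty
        then (MonAux.lab n d w Cc Ll k a b o).coeff
          (MonAux.DD n d w Cc Ll k.succ b - MonAux.DD n d w Cc Ll k.castSucc a)
        else 0 := fun _ _ _ _ => rfl
    have hFnn : ∀ k a b o, 0 ≤ F k a b o := by
      intro k a b o
      rw [hFeq]
      split_ifs with hg
      · by_cases hq : MonAux.lab n d w Cc Ll k a b o = 0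
        · rw [hq]; exact le_of_eq rfl
        · obtain ⟨-, hle⟩ := MonAux.step n d w Cc Ll k a b o hg hq
          exact MonAux.pos_coeff_nonneg _ (MonAux.evn_lab n d w Cc Ll hC hL k a b o) _
            (fun y hy => MonAux.coeff_eq_zero_of_lt_mindeg _ _ (by omega))
      · exact le_refl 0
    refine ⟨fun k a b => F k a b none, fun k a b t => F k a b (some t),
      fun k a b => hFnn k a b none, fun k a b t => hFnn k a b (some t), fun m => ?_⟩
    rw [hf m, MonAux.affCoeff_coeff n d w Cc Ll m 0, MonAux.affCoeff_eq n d w ℝ]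
    refine Finset.sum_congr rfl fun p _ => ?_
    split_ifs with hcond
    · -- termwise equality
      have hElim : ∀ k : Fin d,
          Option.elim (p.2 k) (F k (p.1 k.castSucc) (p.1 k.succ) none)
            (fun t => F k (p.1 k.castSucc) (p.1 k.succ) (some t))
          = F k (p.1 k.castSucc) (p.1 k.succ) (p.2 k) := by
        intro k; cases p.2 k <;> rfl
      rw [Finset.prod_congr rfl fun k _ => hElim k]
      by_cases hall : ∀ k, MonAux.edgeq n d w Cc Ll p k ≠ 0
      · have hmem : ∀ k : Fin (d + 1), p ∈ MonAux.pathSet n d w Cc Ll k (p.1 k) := by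
          intro k
          rw [MonAux.pathSet, Finset.mem_filter]
          exact ⟨Finset.mem_univ _, rfl, fun j _ => hall j⟩
        have hne : ∀ k : Fin (d + 1), (MonAux.SS n d w Cc Ll k (p.1 k)).Nonempty :=
          fun k => ⟨_, Finset.mem_image_of_mem _ (hmem k)⟩
        set δ : Fin d → ℤ := fun k =>
          MonAux.DD n d w Cc Ll k.succ (p.1 k.succ)
            - MonAux.DD n d w Cc Ll k.castSucc (p.1 k.castSucc) with hδdef
        have hFeval : ∀ k : Fin d,
            F k (p.1 k.castSucc) (p.1 k.succ) (p.2 k) = (MonAux.edgeq n d w Cc Ll p k).coeff (δ k) := by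
          intro k
          rw [hFeq, if_pos (hne k.castSucc)]
          rfl
        have hstep : ∀ k : Fin d, δ k ≤ MonAux.mindeg (MonAux.edgeq n d w Cc Ll p k) := by
          intro k
          have := (MonAux.step n d w Cc Ll k (p.1 k.castSucc) (p.1 k.succ) (p.2 k)
            (hne k.castSucc) (hall k)).2
          rw [hδdef]
          simp only []
          rw [MonAux.edgeq]
          omega
        have hsink : p.1 (Fin.last d) = sinkIdx := by
          apply Fin.ext
          have h1 := (p.1 (Fin.last d)).isLt
          have h2 : (sinkIdx : ℕ) = 0 := rfl
          omega
        have hD0 : MonAux.DD n d w Cc Ll 0 (p.1 0) = 0 := MonAux.DD_zero n d w Cc Ll _ (hne 0)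
        have htel : ∑ k : Fin d, δ k = 0 := by
          rw [hδdef]
          rw [MonAux.telescope d (fun k => MonAux.DD n d w Cc Ll k (p.1 k))]
          rw [hsink, hDD0, hD0]
          ring
        have hpc := MonAux.prod_coeff Finset.univ (fun k => MonAux.edgeq n d w Cc Ll p k)
          (fun k => MonAux.mindeg (MonAux.edgeq n d w Cc Ll p k))
          (fun k _ y hy => MonAux.coeff_eq_zero_of_lt_mindeg _ _ hy)
        by_cases hδall : ∀ k, δ k = MonAux.mindeg (MonAux.edgeq n d w Cc Ll p k)
        · have hs : ∑ k : Fin d, MonAux.mindeg (MonAux.edgeq n d w Cc Ll p k) = 0 := by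
            rw [← Finset.sum_congr rfl fun k _ => hδall k]
            exact htel
          rw [← hs, hpc.2]
          exact Finset.prod_congr rfl fun k _ => by rw [hFeval k, hδall k]
        · push_neg at hδall
          obtain ⟨k0, hk0⟩ := hδall
          have hlt : δ k0 < MonAux.mindeg (MonAux.edgeq n d w Cc Ll p k0) :=
            lt_of_le_of_ne (hstep k0) hk0
          have hzero2 : F k0 (p.1 k0.castSucc) (p.1 k0.succ) (p.2 k0) = 0 := by
            rw [hFeval k0]
            exact MonAux.coeff_eq_zero_of_lt_mindeg _ _ hlt
          conv_rhs => rw [Finset.prod_eq_zero (Finset.mem_univ k0) hzero2]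
          refine hpc.1 0 ?_
          calc (0:ℤ) = ∑ k : Fin d, δ k := htel.symm
            _ < ∑ k : Fin d, MonAux.mindeg (MonAux.edgeq n d w Cc Ll p k) :=
              Finset.sum_lt_sum (fun k _ => hstep k) ⟨k0, Finset.mem_univ k0, hlt⟩
      · push_neg at hall
        obtain ⟨k0, hk0⟩ := hall
        have hzero2 : F k0 (p.1 k0.castSucc) (p.1 k0.succ) (p.2 k0) = 0 := by
          rw [hFeq]
          split_ifs with hg
          · have : MonAux.lab n d w Cc Ll k0 (p.1 k0.castSucc) (p.1 k0.succ) (p.2 k0) = 0 := hk0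
            rw [this]
            rfl
          · rfl
        conv_rhs => rw [Finset.prod_eq_zero (Finset.mem_univ k0) hzero2]
        rw [Finset.prod_eq_zero (Finset.mem_univ k0) hk0]
        rfl
    · rfl
  · -- degenerate case: f = 0, take the zero labels
    refine ⟨fun _ _ _ => 0, fun _ _ _ _ => 0, fun _ _ _ => le_refl 0,
      fun _ _ _ _ => le_refl 0, fun m => ?_⟩
    have hL0 : f.coeff m = 0 := by
      rw [hf m, MonAux.affCoeff_coeff n d w Cc Ll m 0]
      refine Finset.sum_eq_zero fun p _ => ?_
      split_ifs with hcond
      · by_cases hall : ∀ k, MonAux.edgeq n d w Cc Ll p k ≠ 0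
        · have hsink : p.1 (Fin.last d) = sinkIdx := by
            apply Fin.ext
            have h1 := (p.1 (Fin.last d)).isLt
            have h2 : (sinkIdx : ℕ) = 0 := rfl
            omega
          have hmem : p ∈ MonAux.pathSet n d w Cc Ll (Fin.last d) sinkIdx := by
            rw [MonAux.pathSet, Finset.mem_filter]
            exact ⟨Finset.mem_univ _, hsink, fun j _ => hall j⟩
          have hS : (MonAux.SS n d w Cc Ll (Fin.last d) sinkIdx).Nonempty :=
            ⟨_, Finset.mem_image_of_mem _ hmem⟩
          have hDne : MonAux.DD n d w Cc Ll (Fin.last d) sinkIdx ≠ 0 := by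
            intro h'
            exact hmain ⟨hS, h'⟩
          have hDpos : 0 < (MonAux.SS n d w Cc Ll (Fin.last d) sinkIdx).min' hS := by
            have h1 : 0 ≤ (MonAux.SS n d w Cc Ll (Fin.last d) sinkIdx).min' hS :=
              MonAux.SS_last_nonneg n d w Cc Ll hC hL hpoly sinkIdx _ (Finset.min'_mem _ hS)
            have h2 : (MonAux.SS n d w Cc Ll (Fin.last d) sinkIdx).min' hS ≠ 0 := by
              intro h'
              exact hDne (by rw [MonAux.DD, dif_pos hS, h'])
            omega
          have hMpos : 0 < ∑ k : Fin d, MonAux.mindeg (MonAux.edgeq n d w Cc Ll p k) := by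
            have hmemS : prefVal n d w Cc Ll p (Fin.last d) ∈
                MonAux.SS n d w Cc Ll (Fin.last d) sinkIdx :=
              Finset.mem_image_of_mem _ hmem
            have h3 : 0 < MonAux.prefVal n d w Cc Ll p (Fin.last d) :=
              lt_of_lt_of_le hDpos (Finset.min'_le _ _ hmemS)
            rw [MonAux.prefVal_last] at h3
            exact h3
          exact (MonAux.prod_coeff Finset.univ (fun k => MonAux.edgeq n d w Cc Ll p k)
            (fun k => MonAux.mindeg (MonAux.edgeq n d w Cc Ll p k))
            (fun k _ y hy => MonAux.coeff_eq_zero_of_lt_mindeg _ _ hy)).1 0 hMpos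
        · push_neg at hall
          obtain ⟨k0, hk0⟩ := hall
          rw [Finset.prod_eq_zero (Finset.mem_univ k0) hk0]
          rfl
      · rfl
    rw [hL0, MonAux.affCoeff_eq n d w ℝ]
    symm
    refine Finset.sum_eq_zero fun p _ => ?_
    split_ifs with hcond
    · have hd : d ≠ 0 := by
        rintro rfl
        have hsink : p.1 (Fin.last 0) = sinkIdx := by
          apply Fin.ext
          have h1 := (p.1 (Fin.last 0)).isLt
          have h2 : (sinkIdx : ℕ) = 0 := rfl
          omega
        have hmem : p ∈ MonAux.pathSet n 0 w Cc Ll (Fin.last 0) sinkIdx := by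
          rw [MonAux.pathSet, Finset.mem_filter]
          exact ⟨Finset.mem_univ _, hsink, fun j _ => j.elim0⟩
        have hS : (MonAux.SS n 0 w Cc Ll (Fin.last 0) sinkIdx).Nonempty :=
          ⟨_, Finset.mem_image_of_mem _ hmem⟩
        refine hmain ⟨hS, ?_⟩
        rw [MonAux.DD, dif_pos hS]
        obtain ⟨p', -, hval⟩ := Finset.mem_image.mp (Finset.min'_mem _ hS)
        rw [← hval, MonAux.prefVal]
        exact Finset.sum_eq_zero fun j _ => j.elim0
      refine Finset.prod_eq_zero (Finset.mem_univ (⟨0, Nat.pos_of_ne_zero hd⟩ : Fin d)) ?_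
      cases p.2 (⟨0, Nat.pos_of_ne_zero hd⟩ : Fin d) <;> rfl
    · rfl
end

section
/- The tensor f_0 is not computed by any format-w trace ABP: there do not exist matrices g_i : E^i → E^i → ℂ (i ∈ Fin d) such that (g_0 ⊗ ⋯ ⊗ g_{d−1}) f_com = f_0. -/
open scoped BigOperators
set_option linter.unusedSectionVars false
set_option linter.unusedVariables false
set_option maxHeartbeats 1000000

attribute [local instance] Classical.propDecidable

namespace ABP

variable {d : ℕ} [NeZero d]

/-- The set of edges in layer `i` of a (cyclic / trace) ABP of width format `w`:
an edge `(a, b)` goes from vertex `a` of layer `i` to vertex `b` of layer `i + 1`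
(layer indices modulo `d`). -/
abbrev Edge (w : Fin d → ℕ) (i : Fin d) : Type := Fin (w i) × Fin (w (i + 1))

/-- An edge tuple is a valid path if consecutive edges match (cyclically). -/
def ValidPath (w : Fin d → ℕ) (p : ∀ i : Fin d, Edge w i) : Prop :=
  ∀ i : Fin d, (p i).2 = (p (i + 1)).1

/-- An edge is parity preserving if its two endpoints have the same parity. -/
def ParityPres {w : Fin d → ℕ} {i : Fin d} (e : Edge w i) : Prop :=
  e.1.val % 2 = e.2.val % 2

/-- The number of parity-preserving edges of an edge tuple. -/
noncomputable def ppCount (w : Fin d → ℕ) (p : ∀ i : Fin d, Edge w i) : ℕ :=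
  (Finset.univ.filter fun i : Fin d => ParityPres (p i)).card

/-- The tensor `f_com`: value 1 on valid paths, 0 elsewhere. -/
noncomputable def fcom (w : Fin d → ℕ) : (∀ i : Fin d, Edge w i) → ℂ :=
  fun p => if ValidPath w p then 1 else 0

/-- The tensor `f_0`: value 1 on valid paths containing exactly one
parity-preserving edge, 0 elsewhere. -/
noncomputable def f0 (w : Fin d → ℕ) : (∀ i : Fin d, Edge w i) → ℂ :=
  fun p => if ValidPath w p ∧ ppCount w p = 1 then 1 else 0

/-- The action of a tuple of matrices `g i : E^i → E^i → ℂ` on a tensor: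
`((⊗ᵢ gᵢ) f)(p) = Σ_q (Πᵢ gᵢ (p i) (q i)) · f q`. -/
noncomputable def actT (w : Fin d → ℕ) (g : ∀ i : Fin d, Edge w i → Edge w i → ℂ)
    (f : (∀ i : Fin d, Edge w i) → ℂ) : (∀ i : Fin d, Edge w i) → ℂ :=
  fun p => ∑ q : ∀ i : Fin d, Edge w i, (∏ i : Fin d, g i (p i) (q i)) * f q

end ABP

namespace NotTrace
open ABP Finset Function
open scoped Fin.NatCast
variable {d : ℕ} [NeZero d] {w : Fin d → ℕ}

def pathOf (w : Fin d → ℕ) (v : ∀ i, Fin (w i)) : ∀ i : Fin d, Edge w i :=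
  fun i => (v i, v (i + 1))

def vtx (hw : ∀ i, 2 ≤ w i) (i : Fin d) (m : ℕ) : Fin (w i) :=
  if m % 2 = 0 then ⟨0, by have := hw i; omega⟩ else ⟨1, by have := hw i; omega⟩

lemma vtx_par (hw : ∀ i, 2 ≤ w i) (i : Fin d) (m : ℕ) :
    ((vtx hw i m : Fin (w i)) : ℕ) % 2 = m % 2 := by
  unfold vtx; split
  · simp; omega
  · simp; omega

lemma pp_iff (v : ∀ i, Fin (w i)) (i : Fin d) :
    ParityPres (pathOf w v i) ↔ ((v i : ℕ) % 2 = ((v (i + 1) : ℕ)) % 2) := Iff.rfl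

lemma master (hd3 : 3 ≤ d) (hodd : Odd d) (hw : ∀ i, 2 ≤ w i) (j : Fin d)
    (a : Fin (w j)) (b : Fin (w (j + 1))) (c : Fin (w (j + 1 + 1)))
    (hs : ¬((a : ℕ) % 2 = (b : ℕ) % 2 ∧ (b : ℕ) % 2 = (c : ℕ) % 2)) :
    ∃ v : ∀ i, Fin (w i), v j = a ∧ v (j + 1) = b ∧ v (j + 1 + 1) = c ∧
      ppCount w (pathOf w v) = 1 := by
  obtain ⟨k, hk⟩ := hodd
  have hv1 : (1 : Fin d).val = 1 := by rw [Fin.val_one' d]; exact Nat.mod_eq_of_lt (by omega)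
  have hv2 : ((1 : Fin d) + 1).val = 2 := by
    rw [Fin.val_add, hv1]; exact Nat.mod_eq_of_lt (by omega)
  set pa := (a : ℕ) % 2 with hpa
  set pb := (b : ℕ) % 2 with hpb
  set pc := (c : ℕ) % 2 with hpc
  have hpa2 : pa < 2 := by omega
  have hpb2 : pb < 2 := by omega
  have hpc2 : pc < 2 := by omega
  set s : ℕ := (if pa = pb then 1 else 0) + (if pb = pc then 1 else 0) with hsdef
  have hsa : (pa = pb ∧ pb = pc ∧ s = 2) ∨ (pa = pb ∧ ¬pb = pc ∧ s = 1)
      ∨ (¬pa = pb ∧ pb = pc ∧ s = 1) ∨ (¬pa = pb ∧ ¬pb = pc ∧ s = 0) := by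
    rw [hsdef]; split_ifs with h1 h2 h3 <;> tauto
  have hs1 : s ≤ 1 := by
    rcases hsa with ⟨h1, h2, _⟩ | ⟨_, _, h⟩ | ⟨_, _, h⟩ | ⟨_, _, h⟩
    · exact absurd ⟨h1, h2⟩ hs
    all_goals omega
  have hrel : (pa + pc + s) % 2 = 0 := by rcases hsa with h | h | h | h <;> omega
  set t : ℕ := 1 - s with htdef
  have hst : s + t = 1 := by omega
  set rstar : ℕ := if pa = pb then 0 else if pb = pc then 1 else 2 with hrdef
  have hra : (pa = pb ∧ rstar = 0) ∨ (¬pa = pb ∧ pb = pc ∧ rstar = 1)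
      ∨ (¬pa = pb ∧ ¬pb = pc ∧ rstar = 2) := by
    rw [hrdef]; split_ifs <;> tauto
  set ψ : ℕ → ℕ := fun r => if r = 0 then pa else if r = 1 then pb else if r = 2 then pc
    else (pc + r + t) % 2 with hψ
  have hψ0 : ψ 0 = pa := by simp [hψ]
  have hψ1 : ψ 1 = pb := by simp [hψ]
  have hψ2 : ψ 2 = pc := by simp [hψ]
  have hψ3 : ∀ r, 3 ≤ r → ψ r = (pc + r + t) % 2 := by
    intro r hr; simp only [hψ]
    rw [if_neg (by omega), if_neg (by omega), if_neg (by omega)]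
  have hψlt : ∀ r, ψ r < 2 := by
    intro r; simp only [hψ]; split_ifs <;> omega
  -- the core parity computation
  have hcore : ∀ r, r < d → ((ψ r = ψ ((r + 1) % d)) ↔ r = rstar) := by
    intro r hr
    rcases Nat.lt_or_ge r 3 with h3 | h3
    · interval_cases r
      · rw [hψ0, show (0 + 1) % d = 1 from Nat.mod_eq_of_lt (by omega), hψ1]; omega
      · rw [hψ1, show (1 + 1) % d = 2 from Nat.mod_eq_of_lt (by omega), hψ2]; omega
      · rcases Nat.lt_or_ge 3 d with h4 | h4
        · rw [hψ2, show (2 + 1) % d = 3 from Nat.mod_eq_of_lt (by omega), hψ3 3 le_rfl]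
          omega
        · have hd3' : d = 3 := by omega
          rw [hψ2, show (2 + 1) % d = 0 by rw [hd3'], hψ0]
          omega
    · rcases Nat.lt_or_ge (r + 1) d with h4 | h4
      · rw [hψ3 r h3, show (r + 1) % d = r + 1 from Nat.mod_eq_of_lt h4,
          hψ3 (r + 1) (by omega)]
        omega
      · have hrd : r + 1 = d := by omega
        rw [hψ3 r h3, show (r + 1) % d = 0 by rw [hrd, Nat.mod_self], hψ0]
        omega
  -- the vertex tuple
  set v : ∀ i, Fin (w i) := fun i =>
    if h0 : i = j then Fin.cast (congrArg w h0.symm) a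
    else if h1 : i = j + 1 then Fin.cast (congrArg w h1.symm) b
    else if h2 : i = j + 1 + 1 then Fin.cast (congrArg w h2.symm) c
    else vtx hw i (ψ ((i - j : Fin d)).val) with hv
  -- offsets
  have hsub1 : ((j + 1 - j : Fin d)).val = 1 := by rw [add_sub_cancel_left]; exact hv1
  have hsub2 : ((j + 1 + 1 - j : Fin d)).val = 2 := by
    rw [show j + 1 + 1 = j + (1 + 1) from add_assoc j 1 1, add_sub_cancel_left]; exact hv2
  have hij0 : ∀ i : Fin d, i = j ↔ ((i - j : Fin d)).val = 0 := by
    intro i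
    rw [show (((i - j : Fin d)).val = 0) ↔ i - j = 0 from by
      rw [Fin.ext_iff, Fin.val_zero], sub_eq_zero]
  have hij1 : ∀ i : Fin d, i = j + 1 ↔ ((i - j : Fin d)).val = 1 := by
    intro i
    constructor
    · rintro rfl; exact hsub1
    · intro h
      have : i - j = j + 1 - j := by rw [Fin.ext_iff, h, hsub1]
      exact sub_left_injective this
  have hij2 : ∀ i : Fin d, i = j + 1 + 1 ↔ ((i - j : Fin d)).val = 2 := by
    intro i
    constructor
    · rintro rfl; exact hsub2
    · intro h
      have : i - j = j + 1 + 1 - j := by rw [Fin.ext_iff, h, hsub2]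
      exact sub_left_injective this
  -- parity of v
  have hpar : ∀ i : Fin d, ((v i : Fin (w i)) : ℕ) % 2 = ψ ((i - j : Fin d)).val := by
    intro i
    by_cases h0 : i = j
    · rw [hv]; dsimp only; rw [dif_pos h0, Fin.coe_cast, (hij0 i).mp h0, hψ0]
    · by_cases h1 : i = j + 1
      · rw [hv]; dsimp only; rw [dif_neg h0, dif_pos h1, Fin.coe_cast, (hij1 i).mp h1, hψ1]
      · by_cases h2 : i = j + 1 + 1
        · rw [hv]; dsimp only
          rw [dif_neg h0, dif_neg h1, dif_pos h2, Fin.coe_cast, (hij2 i).mp h2, hψ2]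
        · rw [hv]; dsimp only; rw [dif_neg h0, dif_neg h1, dif_neg h2, vtx_par]
          exact Nat.mod_eq_of_lt (hψlt _)
  have hstep : ∀ i : Fin d, ((i + 1 - j : Fin d)).val = (((i - j : Fin d)).val + 1) % d := by
    intro i
    rw [show i + 1 - j = (i - j) + 1 from add_sub_right_comm i 1 j, Fin.val_add, hv1]
  -- the parity-preserving positions
  have key : ∀ i : Fin d, ParityPres (pathOf w v i) ↔ i = j + (rstar : Fin d) := by
    intro i
    rw [pp_iff, hpar i, hpar (i + 1), hstep i, hcore _ (Fin.is_lt _)]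
    have hcast : ((rstar : Fin d)).val = rstar :=
      Fin.val_cast_of_lt (by rcases hra with h | h | h <;> omega)
    constructor
    · intro h
      have : i - j = (rstar : Fin d) := by rw [Fin.ext_iff, h, hcast]
      rw [← this, add_comm]; exact (sub_add_cancel i j).symm
    · rintro rfl
      rw [add_comm j _, add_sub_cancel_right, hcast]
  -- count
  have hfilt : (univ.filter fun i : Fin d => ParityPres (pathOf w v i)) = {j + (rstar : Fin d)} := by
    ext i; simp [key i]
  have hcount : ppCount w (pathOf w v) = 1 := by
    unfold ppCount; rw [hfilt, card_singleton]
  refine ⟨v, ?_, ?_, ?_, hcount⟩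
  · rw [hv]; dsimp only; rw [dif_pos rfl]
    apply Fin.ext; rw [Fin.coe_cast]
  · have h0 : ¬(j + 1 = j) := by
      intro h; have := (hij0 _).mp h; rw [hsub1] at this; omega
    rw [hv]; dsimp only; rw [dif_neg h0, dif_pos rfl]
    apply Fin.ext; rw [Fin.coe_cast]
  · have h0 : ¬(j + 1 + 1 = j) := by
      intro h; have := (hij0 _).mp h; rw [hsub2] at this; omega
    have h1 : ¬(j + 1 + 1 = j + 1) := by
      intro h; have := (hij1 _).mp h; rw [hsub2] at this; omega
    rw [hv]; dsimp only; rw [dif_neg h0, dif_neg h1, dif_pos rfl]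
    apply Fin.ext; rw [Fin.coe_cast]

lemma constructTwo (hd3 : 3 ≤ d) (hodd : Odd d) (hw : ∀ i, 2 ≤ w i) (j : Fin d)
    (a : Fin (w j)) (b : Fin (w (j + 1))) :
    ∃ v : ∀ i, Fin (w i), v j = a ∧ v (j + 1) = b ∧ ppCount w (pathOf w v) = 1 := by
  obtain ⟨v, h1, h2, _, h4⟩ := master hd3 hodd hw j a b (vtx hw (j + 1 + 1) ((b : ℕ) + 1))
    (by rw [vtx_par]; omega)
  exact ⟨v, h1, h2, h4⟩

lemma f0_pathOf_one (v : ∀ i, Fin (w i)) (hpp : ppCount w (pathOf w v) = 1) :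
    f0 w (pathOf w v) = 1 := if_pos ⟨fun _ => rfl, hpp⟩

-- index value lemmas
lemma val01 (hd3 : 3 ≤ d) : ((0 : Fin d) + 1).val = 1 := by
  rw [Fin.val_add, Fin.val_zero, Fin.val_one' d, Nat.mod_eq_of_lt (show 1 < d by omega)]
  exact Nat.mod_eq_of_lt (by omega)

lemma val02 (hd3 : 3 ≤ d) : ((0 : Fin d) + 1 + 1).val = 2 := by
  rw [Fin.val_add, val01 hd3, Fin.val_one' d, Nat.mod_eq_of_lt (show 1 < d by omega)]
  exact Nat.mod_eq_of_lt (by omega)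

lemma idx01 (hd3 : 3 ≤ d) : (0 : Fin d) ≠ 0 + 1 := by
  intro h; have := congrArg Fin.val h; rw [Fin.val_zero, val01 hd3] at this; omega

lemma idx02 (hd3 : 3 ≤ d) : (0 : Fin d) ≠ 0 + 1 + 1 := by
  intro h; have := congrArg Fin.val h; rw [Fin.val_zero, val02 hd3] at this; omega

lemma idx12 (hd3 : 3 ≤ d) : (0 : Fin d) + 1 ≠ 0 + 1 + 1 := by
  intro h; have := congrArg Fin.val h; rw [val01 hd3, val02 hd3] at this; omega

/-- the last index -/
lemma lst_spec (hd3 : 3 ≤ d) : (((d - 1 : ℕ) : Fin d)).val = d - 1 ∧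
    ((d - 1 : ℕ) : Fin d) + 1 = 0 := by
  have h1 : (((d - 1 : ℕ) : Fin d)).val = d - 1 := Fin.val_cast_of_lt (by omega)
  refine ⟨h1, ?_⟩
  apply Fin.ext
  rw [Fin.val_add, h1, Fin.val_one' d, Nat.mod_eq_of_lt (show 1 < d by omega), Fin.val_zero,
    show d - 1 + 1 = d by omega, Nat.mod_self]

-- extraction of the pointwise identity
lemma extract (g : ∀ i : Fin d, Edge w i → Edge w i → ℂ)
    (hg : actT w g (fcom w) = f0 w) :
    ∀ p, (∑ v : ∀ i, Fin (w i), ∏ i, g i (p i) (pathOf w v i)) = f0 w p := by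
  intro p
  rw [← congrFun hg p]
  unfold actT fcom
  rw [Finset.sum_congr rfl (fun q _ => by
    rw [mul_ite, mul_one, mul_zero] :
    ∀ q ∈ Finset.univ, (∏ i, g i (p i) (q i)) * (if ValidPath w q then (1:ℂ) else 0)
      = if ValidPath w q then ∏ i, g i (p i) (q i) else 0)]
  rw [Finset.sum_ite, Finset.sum_const_zero, add_zero]
  symm
  apply Finset.sum_nbij' (i := fun q => fun i : Fin d => (q i).1) (j := pathOf w)
  · intro q _; exact Finset.mem_univ _
  · intro v _
    simp only [Finset.mem_filter, Finset.mem_univ, true_and]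
    exact fun _ => rfl
  · intro q hq
    rcases Finset.mem_filter.mp hq with ⟨_, hval⟩
    funext i
    exact Prod.ext rfl (hval i).symm
  · intro v _; rfl
  · intro q hq
    rcases Finset.mem_filter.mp hq with ⟨_, hval⟩
    apply Finset.prod_congr rfl
    intro i _
    congr 1
    exact Prod.ext rfl (hval i)

-- sum splitting helpers
lemma split_at (j : Fin d) (F : (∀ i, Fin (w i)) → ℂ) :
    (∑ v : ∀ i, Fin (w i), F v)
      = ∑ a : Fin (w j), ∑ v : ∀ i, Fin (w i), if v j = a then F v else 0 := by
  rw [Finset.sum_comm]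
  apply Finset.sum_congr rfl
  intro v _
  simp

lemma repin (j : Fin d) (F : (∀ i, Fin (w i)) → ℂ)
    (hF : ∀ v m, F (update v j m) = F v) (c c' : Fin (w j)) :
    (∑ v : ∀ i, Fin (w i), if v j = c then F v else 0)
      = ∑ v : ∀ i, Fin (w i), if v j = c' then F v else 0 := by
  have τinv : Function.Involutive
      (fun v : ∀ i, Fin (w i) => update v j (Equiv.swap c c' (v j))) := by
    intro v; funext i
    by_cases h : i = j
    · subst h; simp
    · simp [update_of_ne h]
  rw [← Function.Bijective.sum_comp τinv.bijective
      (fun v => if v j = c then F v else 0)]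
  apply Finset.sum_congr rfl
  intro v _
  simp only [update_self]
  by_cases h : v j = c'
  · rw [if_pos (by rw [h, Equiv.swap_apply_right]), if_pos h, hF]
  · rw [if_neg ?_, if_neg h]
    intro hc
    apply h
    have := congrArg (Equiv.swap c c') hc
    rwa [Equiv.swap_apply_self, Equiv.swap_apply_left] at this

/-- The partial path-sum over layers other than `0` and `0+1`, with the unused coordinate
`0+1` pinned. -/
noncomputable def Psi (hw : ∀ i, 2 ≤ w i) (g : ∀ i : Fin d, Edge w i → Edge w i → ℂ)
    (t : Fin (w (0 + 1 + 1))) (u : Fin (w 0)) (q : ∀ i : Fin d, Edge w i) : ℂ :=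
  ∑ v : ∀ i, Fin (w i),
    if v 0 = u ∧ v (0 + 1) = vtx hw (0 + 1) 0 ∧ v (0 + 1 + 1) = t then
      ∏ i ∈ (Finset.univ.erase (0 : Fin d)).erase (0 + 1), g i (q i) (v i, v (i + 1))
    else 0

lemma memS (hd3 : 3 ≤ d) (i : Fin d) :
    i ∈ (Finset.univ.erase (0 : Fin d)).erase (0 + 1) ↔ (i ≠ 0 + 1 ∧ i ≠ 0) := by
  simp [Finset.mem_erase]

lemma prodS_update (hd3 : 3 ≤ d) (g : ∀ i : Fin d, Edge w i → Edge w i → ℂ)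
    (q : ∀ i : Fin d, Edge w i) (v : ∀ i, Fin (w i)) (m : Fin (w (0 + 1))) :
    (∏ i ∈ (Finset.univ.erase (0 : Fin d)).erase (0 + 1),
        g i (q i) ((update v (0 + 1) m) i, (update v (0 + 1) m) (i + 1)))
      = ∏ i ∈ (Finset.univ.erase (0 : Fin d)).erase (0 + 1), g i (q i) (v i, v (i + 1)) := by
  apply Finset.prod_congr rfl
  intro i hi
  rcases (memS hd3 i).mp hi with ⟨hi1, hi0⟩
  rw [update_of_ne hi1, update_of_ne (fun h => hi0 (add_right_cancel h))]

lemma alpha (hd3 : 3 ≤ d) (hw : ∀ i, 2 ≤ w i) (g : ∀ i : Fin d, Edge w i → Edge w i → ℂ)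
    (H : ∀ p, (∑ v : ∀ i, Fin (w i), ∏ i, g i (p i) (pathOf w v i)) = f0 w p)
    (e0 : Edge w 0) (e1 : Edge w (0 + 1)) (q : ∀ i : Fin d, Edge w i) :
    f0 w (update (update q 0 e0) (0 + 1) e1)
      = ∑ u : Fin (w 0), ∑ t : Fin (w (0 + 1 + 1)),
          (∑ m : Fin (w (0 + 1)), g 0 e0 (u, m) * g (0 + 1) e1 (m, t)) * Psi hw g t u q := by
  have h01 := idx01 hd3
  have h12 := idx12 hd3
  set S := (Finset.univ.erase (0 : Fin d)).erase (0 + 1) with hS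
  set p := update (update q 0 e0) (0 + 1) e1 with hp
  have hp0 : p 0 = e0 := by rw [hp, update_of_ne h01, update_self]
  have hp1 : p (0 + 1) = e1 := by rw [hp, update_self]
  rw [← H p]
  have hsplit : ∀ v : ∀ i, Fin (w i), (∏ i, g i (p i) (pathOf w v i))
      = g 0 e0 (v 0, v (0 + 1)) * (g (0 + 1) e1 (v (0 + 1), v (0 + 1 + 1)) *
          ∏ i ∈ S, g i (q i) (v i, v (i + 1))) := by
    intro v
    rw [← Finset.mul_prod_erase Finset.univ _ (Finset.mem_univ (0 : Fin d)),
        ← Finset.mul_prod_erase (Finset.univ.erase 0) _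
          (Finset.mem_erase.mpr ⟨Ne.symm h01, Finset.mem_univ _⟩), hp0, hp1]
    congr 2
    apply Finset.prod_congr rfl
    intro i hi
    rcases (memS hd3 i).mp hi with ⟨hi1, hi0⟩
    rw [hp, update_of_ne hi1, update_of_ne hi0]
    rfl
  rw [Finset.sum_congr rfl (fun v _ => hsplit v)]
  rw [split_at 0]
  apply Finset.sum_congr rfl
  intro u _
  rw [split_at (0 + 1)]
  have hinner : ∀ m : Fin (w (0 + 1)), (∑ v : ∀ i, Fin (w i),
      if v (0 + 1) = m then (if v 0 = u then g 0 e0 (v 0, v (0 + 1)) *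
        (g (0 + 1) e1 (v (0 + 1), v (0 + 1 + 1)) *
          ∏ i ∈ S, g i (q i) (v i, v (i + 1))) else 0) else 0)
      = ∑ t : Fin (w (0 + 1 + 1)), g 0 e0 (u, m) * (g (0 + 1) e1 (m, t) * Psi hw g t u q) := by
    intro m
    rw [split_at (0 + 1 + 1)]
    apply Finset.sum_congr rfl
    intro t _
    have hpoint : ∀ v : ∀ i, Fin (w i),
        (if v (0 + 1 + 1) = t then (if v (0 + 1) = m then (if v 0 = u then
            g 0 e0 (v 0, v (0 + 1)) * (g (0 + 1) e1 (v (0 + 1), v (0 + 1 + 1)) *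
              ∏ i ∈ S, g i (q i) (v i, v (i + 1))) else 0) else 0) else 0)
        = g 0 e0 (u, m) * (g (0 + 1) e1 (m, t) *
            (if v (0 + 1) = m then (if v 0 = u ∧ v (0 + 1 + 1) = t then
              ∏ i ∈ S, g i (q i) (v i, v (i + 1)) else 0) else 0)) := by
      intro v
      by_cases h1 : v 0 = u <;> by_cases h2 : v (0 + 1) = m <;>
        by_cases h3 : v (0 + 1 + 1) = t <;> simp [h1, h2, h3]
    rw [Finset.sum_congr rfl (fun v _ => hpoint v), ← Finset.mul_sum, ← Finset.mul_sum]
    congr 1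
    congr 1
    have hF : ∀ (v : ∀ i, Fin (w i)) (m' : Fin (w (0 + 1))),
        (fun v : ∀ i, Fin (w i) => if v 0 = u ∧ v (0 + 1 + 1) = t then
            ∏ i ∈ S, g i (q i) (v i, v (i + 1)) else 0) (update v (0 + 1) m')
        = (fun v : ∀ i, Fin (w i) => if v 0 = u ∧ v (0 + 1 + 1) = t then
            ∏ i ∈ S, g i (q i) (v i, v (i + 1)) else 0) v := by
      intro v m'
      dsimp only
      rw [update_of_ne h01, update_of_ne (Ne.symm h12), hS,
        prodS_update hd3 g q v m']
    rw [repin (0 + 1) _ hF m (vtx hw (0 + 1) 0)]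
    unfold Psi
    rw [← hS]
    apply Finset.sum_congr rfl
    intro v _
    by_cases h1 : v 0 = u <;> by_cases h2 : v (0 + 1) = vtx hw (0 + 1) 0 <;>
      by_cases h3 : v (0 + 1 + 1) = t <;> simp [h1, h2, h3]
  rw [Finset.sum_congr rfl (fun m _ => hinner m), Finset.sum_comm]
  apply Finset.sum_congr rfl
  intro t _
  rw [Finset.sum_mul]
  apply Finset.sum_congr rfl
  intro m _
  ring

lemma one_ne_zero' (hd3 : 3 ≤ d) : (1 : Fin d) ≠ 0 := by
  intro h
  have := congrArg Fin.val h
  rw [Fin.val_one' d, Nat.mod_eq_of_lt (show 1 < d by omega), Fin.val_zero] at this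
  omega

lemma pred_ne_self (hd3 : 3 ≤ d) (j : Fin d) : j - 1 ≠ j := by
  intro h
  have : j = j + 1 := by rw [← sub_eq_iff_eq_add] at *; exact h
  exact one_ne_zero' hd3 (left_eq_add.mp this)

lemma succ_ne_self (hd3 : 3 ≤ d) (j : Fin d) : j + 1 ≠ j := by
  intro h
  exact one_ne_zero' hd3 (add_eq_left.mp h)

lemma f0_update_pathOf (hd3 : 3 ≤ d) (j : Fin d) (v : ∀ i, Fin (w i))
    (e' : Edge w j) (hne : e' ≠ (v j, v (j + 1))) :
    f0 w (update (pathOf w v) j e') = 0 := by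
  apply if_neg
  rintro ⟨hval, -⟩
  apply hne
  have hj1 : j - 1 + 1 = j := sub_add_cancel j 1
  have h1 := hval (j - 1)
  rw [update_of_ne (pred_ne_self hd3 j)] at h1
  have h1' : (v (j - 1 + 1) : ℕ) = ((update (pathOf w v) j e' (j - 1 + 1)).1 : ℕ) :=
    congrArg Fin.val h1
  rw [hj1, update_self] at h1'
  have h2 := hval j
  rw [update_self, update_of_ne (succ_ne_self hd3 j)] at h2
  exact Prod.ext (Fin.ext h1'.symm) (by rw [h2]; rfl)

lemma slice_zero (hd3 : 3 ≤ d) (hodd : Odd d) (hw : ∀ i, 2 ≤ w i)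
    (g : ∀ i : Fin d, Edge w i → Edge w i → ℂ)
    (H : ∀ p, (∑ v : ∀ i, Fin (w i), ∏ i, g i (p i) (pathOf w v i)) = f0 w p)
    (j : Fin d) (cc : Edge w j → ℂ)
    (hc : ∀ me : Edge w j, (∑ e : Edge w j, cc e * g j e me) = 0) :
    ∀ e, cc e = 0 := by
  intro e
  obtain ⟨v, hvj, hvj1, hpp⟩ := constructTwo hd3 hodd hw j e.1 e.2
  have hpath : pathOf w v j = e := by
    show (v j, v (j + 1)) = e
    rw [hvj, hvj1]
  have h1 : (∑ e' : Edge w j, cc e' * f0 w (update (pathOf w v) j e')) = cc e := by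
    rw [Finset.sum_eq_single e]
    · rw [← hpath, update_eq_self, f0_pathOf_one v hpp, mul_one]
    · intro e' _ hne
      rw [f0_update_pathOf hd3 j v e' (by rw [← hpath] at hne; exact hne), mul_zero]
    · intro h; exact absurd (Finset.mem_univ e) h
  have h2 : (∑ e' : Edge w j, cc e' * f0 w (update (pathOf w v) j e')) = 0 := by
    have expand : ∀ e' : Edge w j, f0 w (update (pathOf w v) j e')
        = ∑ v' : ∀ i, Fin (w i), g j e' (v' j, v' (j + 1)) *
            ∏ i ∈ Finset.univ.erase j, g i (pathOf w v i) (pathOf w v' i) := by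
      intro e'
      rw [← H (update (pathOf w v) j e')]
      apply Finset.sum_congr rfl
      intro v' _
      rw [← Finset.mul_prod_erase Finset.univ _ (Finset.mem_univ j), update_self]
      congr 1
      apply Finset.prod_congr rfl
      intro i hi
      rw [update_of_ne (Finset.mem_erase.mp hi).1]
    rw [Finset.sum_congr rfl (fun e' _ => by rw [expand e', Finset.mul_sum])]
    rw [Finset.sum_comm]
    apply Finset.sum_eq_zero
    intro v' _
    have hre : ∀ e' : Edge w j, cc e' * (g j e' (v' j, v' (j + 1)) *
        ∏ i ∈ Finset.univ.erase j, g i (pathOf w v i) (pathOf w v' i))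
        = (cc e' * g j e' (v' j, v' (j + 1))) *
          ∏ i ∈ Finset.univ.erase j, g i (pathOf w v i) (pathOf w v' i) := fun e' => by ring
    rw [Finset.sum_congr rfl (fun e' _ => hre e'), ← Finset.sum_mul, hc, zero_mul]
  rw [← h1, h2]

noncomputable def Phi (g : ∀ i : Fin d, Edge w i → Edge w i → ℂ) (e0 : Edge w 0)
    (e1 : Edge w (0 + 1)) : (Fin (w 0) × Fin (w (0 + 1 + 1))) → ℂ :=
  fun ut => ∑ m : Fin (w (0 + 1)), g 0 e0 (ut.1, m) * g (0 + 1) e1 (m, ut.2)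

noncomputable def Tmap (hw : ∀ i, 2 ≤ w i) (g : ∀ i : Fin d, Edge w i → Edge w i → ℂ) :
    ((Fin (w 0) × Fin (w (0 + 1 + 1))) → ℂ) →ₗ[ℂ] ((∀ i : Fin d, Edge w i) → ℂ) where
  toFun Y := fun q => ∑ ut : Fin (w 0) × Fin (w (0 + 1 + 1)), Y ut * Psi hw g ut.2 ut.1 q
  map_add' Y Z := by
    funext q
    simp only [Pi.add_apply, add_mul]
    rw [Finset.sum_add_distrib]
  map_smul' a Y := by
    funext q
    simp only [Pi.smul_apply, smul_eq_mul, RingHom.id_apply]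
    rw [Finset.mul_sum]
    apply Finset.sum_congr rfl
    intro ut _
    ring

lemma alpha' (hd3 : 3 ≤ d) (hw : ∀ i, 2 ≤ w i) (g : ∀ i : Fin d, Edge w i → Edge w i → ℂ)
    (H : ∀ p, (∑ v : ∀ i, Fin (w i), ∏ i, g i (p i) (pathOf w v i)) = f0 w p)
    (e0 : Edge w 0) (e1 : Edge w (0 + 1)) :
    Tmap hw g (Phi g e0 e1) = fun q => f0 w (update (update q 0 e0) (0 + 1) e1) := by
  funext q
  show (∑ ut : Fin (w 0) × Fin (w (0 + 1 + 1)), Phi g e0 e1 ut * Psi hw g ut.2 ut.1 q) = _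
  rw [Fintype.sum_prod_type, alpha hd3 hw g H e0 e1 q]
  rfl

lemma upd_eq_self (hd3 : 3 ≤ d) (q : ∀ i : Fin d, Edge w i) (e0 : Edge w 0)
    (e1 : Edge w (0 + 1)) (h0 : q 0 = e0) (h1 : q (0 + 1) = e1) :
    update (update q 0 e0) (0 + 1) e1 = q := by
  funext i
  rcases eq_or_ne i (0 + 1) with rfl | hi1
  · rw [update_self, h1]
  · rw [update_of_ne hi1]
    rcases eq_or_ne i 0 with rfl | hi0
    · rw [update_self, h0]
    · rw [update_of_ne hi0]

lemma T_inj (hd3 : 3 ≤ d) (hodd : Odd d) (hw : ∀ i, 2 ≤ w i)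
    (g : ∀ i : Fin d, Edge w i → Edge w i → ℂ)
    (H : ∀ p, (∑ v : ∀ i, Fin (w i), ∏ i, g i (p i) (pathOf w v i)) = f0 w p) :
    LinearMap.ker (Tmap hw g) = ⊥ := by
  classical
  have h01 := idx01 hd3
  have h02 := idx02 hd3
  have h12 := idx12 hd3
  have hwit : ∀ k : Fin (w 0) × Fin (w (0 + 1 + 1)), ∃ v : ∀ i, Fin (w i),
      v 0 = k.1 ∧ v (0 + 1) = vtx hw (0 + 1) ((k.1 : ℕ) + 1) ∧ v (0 + 1 + 1) = k.2 ∧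
        ppCount w (pathOf w v) = 1 := by
    intro k
    exact master hd3 hodd hw 0 k.1 (vtx hw (0 + 1) ((k.1 : ℕ) + 1)) k.2
      (by rintro ⟨h, -⟩; rw [vtx_par] at h; omega)
  choose χv hχ0 hχ1 hχ2 hχpp using hwit
  set E0 : (Fin (w 0) × Fin (w (0 + 1 + 1))) → Edge w 0 :=
    fun k => (k.1, vtx hw (0 + 1) ((k.1 : ℕ) + 1)) with hE0
  set E1 : (Fin (w 0) × Fin (w (0 + 1 + 1))) → Edge w (0 + 1) :=
    fun k => (vtx hw (0 + 1) ((k.1 : ℕ) + 1), k.2) with hE1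
  set Row : (Fin (w 0) × Fin (w (0 + 1 + 1))) → ((∀ i : Fin d, Edge w i) → ℂ) :=
    fun k => Tmap hw g (Phi g (E0 k) (E1 k)) with hRow
  have heval : ∀ k k', Row k' (pathOf w (χv k)) = if k' = k then 1 else 0 := by
    intro k k'
    have hform : Row k' (pathOf w (χv k))
        = f0 w (update (update (pathOf w (χv k)) 0 (E0 k')) (0 + 1) (E1 k')) := by
      rw [hRow]; dsimp only
      rw [alpha' hd3 hw g H (E0 k') (E1 k')]
    rcases eq_or_ne k' k with rfl | hne
    · rw [if_pos rfl, hform, upd_eq_self hd3 _ _ _ ?_ ?_, f0_pathOf_one _ (hχpp k')]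
      · show (χv k' 0, χv k' (0 + 1)) = E0 k'
        rw [hχ0, hχ1, hE0]
      · show (χv k' (0 + 1), χv k' (0 + 1 + 1)) = E1 k'
        rw [hχ1, hχ2, hE1]
    · rw [if_neg hne, hform]
      apply if_neg
      rintro ⟨hval, -⟩
      apply hne
      set p' := update (update (pathOf w (χv k)) 0 (E0 k')) (0 + 1) (E1 k') with hp'
      have hp'0 : p' 0 = E0 k' := by rw [hp', update_of_ne h01, update_self]
      have hp'1 : p' (0 + 1) = E1 k' := by rw [hp', update_self]
      -- second components agree
      have hv1 := hval (0 + 1)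
      rw [hp'1] at hv1
      have hv1' : (k'.2 : ℕ) = ((p' (0 + 1 + 1)).1 : ℕ) := congrArg Fin.val hv1
      rw [hp', update_of_ne (Ne.symm h12), update_of_ne (Ne.symm h02)] at hv1'
      have hsnd : k'.2 = k.2 := by
        apply Fin.ext
        rw [hv1']
        show ((χv k (0 + 1 + 1) : ℕ)) = _
        rw [hχ2]
      -- first components agree
      obtain ⟨hlv, hl1⟩ := lst_spec (d := d) hd3
      set lst : Fin d := ((d - 1 : ℕ) : Fin d) with hlst
      have hlne0 : lst ≠ 0 := by
        intro h; have := congrArg Fin.val h; rw [hlv, Fin.val_zero] at this; omega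
      have hlne1 : lst ≠ 0 + 1 := by
        intro h; have := congrArg Fin.val h; rw [hlv, val01 hd3] at this; omega
      have hv0 := hval lst
      rw [hp', update_of_ne hlne1, update_of_ne hlne0] at hv0
      have hv0' : ((χv k (lst + 1) : ℕ)) = ((p' (lst + 1)).1 : ℕ) := congrArg Fin.val hv0
      rw [hl1] at hv0'
      rw [hp'0] at hv0'
      have hfst : k'.1 = k.1 := by
        apply Fin.ext
        rw [hE0] at hv0'
        rw [← hv0', hχ0]
      exact Prod.ext hfst hsnd
  have hind : LinearIndependent ℂ Row := by
    rw [Fintype.linearIndependent_iff]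
    intro co hco k
    have h := congrFun hco (pathOf w (χv k))
    rw [Finset.sum_apply] at h
    rw [Finset.sum_eq_single k] at h
    · rw [Pi.smul_apply, heval k k, if_pos rfl, smul_eq_mul, mul_one] at h
      exact h
    · intro k' _ hne
      rw [Pi.smul_apply, heval k k', if_neg hne, smul_eq_mul, mul_zero]
    · intro hk; exact absurd (Finset.mem_univ k) hk
  have hspan : Submodule.span ℂ (Set.range Row) ≤ LinearMap.range (Tmap hw g) := by
    rw [Submodule.span_le]
    rintro _ ⟨k, rfl⟩
    exact ⟨Phi g (E0 k) (E1 k), rfl⟩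
  have h1 : Module.finrank ℂ (Submodule.span ℂ (Set.range Row))
      = Fintype.card (Fin (w 0) × Fin (w (0 + 1 + 1))) := finrank_span_eq_card hind
  have h3 : Fintype.card (Fin (w 0) × Fin (w (0 + 1 + 1)))
      ≤ Module.finrank ℂ (LinearMap.range (Tmap hw g)) := by
    rw [← h1]; exact Submodule.finrank_mono hspan
  have h2 := LinearMap.finrank_range_add_finrank_ker (Tmap hw g)
  have h4 : Module.finrank ℂ ((Fin (w 0) × Fin (w (0 + 1 + 1))) → ℂ)
      = Fintype.card (Fin (w 0) × Fin (w (0 + 1 + 1))) := Module.finrank_pi ℂ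
  rw [← Submodule.finrank_eq_zero (R := ℂ)]
  omega

lemma Blem (hd3 : 3 ≤ d) (hodd : Odd d) (hw : ∀ i, 2 ≤ w i)
    (g : ∀ i : Fin d, Edge w i → Edge w i → ℂ)
    (H : ∀ p, (∑ v : ∀ i, Fin (w i), ∏ i, g i (p i) (pathOf w v i)) = f0 w p)
    (e0 : Edge w 0) (e1 : Edge w (0 + 1))
    (hbad : e0.2 ≠ e1.1 ∨ (ParityPres e0 ∧ ParityPres e1)) :
    ∀ (u : Fin (w 0)) (t : Fin (w (0 + 1 + 1))),
      (∑ m : Fin (w (0 + 1)), g 0 e0 (u, m) * g (0 + 1) e1 (m, t)) = 0 := by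
  have hker : Phi g e0 e1 ∈ LinearMap.ker (Tmap hw g) := by
    rw [LinearMap.mem_ker, alpha' hd3 hw g H e0 e1]
    funext q
    apply if_neg
    rintro ⟨hval, hcnt⟩
    set p' := update (update q 0 e0) (0 + 1) e1 with hp'
    have hp0 : p' 0 = e0 := by rw [hp', update_of_ne (idx01 hd3), update_self]
    have hp1 : p' (0 + 1) = e1 := by rw [hp', update_self]
    rcases hbad with hmis | ⟨hpp0, hpp1⟩
    · apply hmis
      have hv := hval 0
      rw [hp0, hp1] at hv
      exact hv
    · have hsub : ({0, 0 + 1} : Finset (Fin d))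
          ⊆ Finset.univ.filter (fun i => ParityPres (p' i)) := by
        intro i hi
        rcases Finset.mem_insert.mp hi with rfl | hi
        · exact Finset.mem_filter.mpr ⟨Finset.mem_univ _, by rw [hp0]; exact hpp0⟩
        · rw [Finset.mem_singleton.mp hi]
          exact Finset.mem_filter.mpr ⟨Finset.mem_univ _, by rw [hp1]; exact hpp1⟩
      have hcard := Finset.card_le_card hsub
      rw [Finset.card_pair (idx01 hd3)] at hcard
      unfold ppCount at hcnt
      omega
  rw [T_inj hd3 hodd hw g H, Submodule.mem_bot] at hker
  intro u t
  exact congrFun hker (u, t)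

lemma common_kernel (hd3 : 3 ≤ d) (hodd : Odd d) (hw : ∀ i, 2 ≤ w i)
    (g : ∀ i : Fin d, Edge w i → Edge w i → ℂ)
    (H : ∀ p, (∑ v : ∀ i, Fin (w i), ∏ i, g i (p i) (pathOf w v i)) = f0 w p)
    (ub : Fin (w (0 + 1)) → ℂ)
    (hub : ∀ (e : Edge w 0) (u : Fin (w 0)), (∑ m : Fin (w (0 + 1)), g 0 e (u, m) * ub m) = 0) :
    ub = 0 := by
  classical
  set G0 : Matrix (Edge w 0) (Edge w 0) ℂ := Matrix.of (fun e me => g 0 e me) with hG0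
  have hrow : Function.Injective G0.vecMul := by
    rw [← Matrix.coe_vecMulLinear, ← LinearMap.ker_eq_bot, LinearMap.ker_eq_bot']
    intro cc hcc
    funext e
    refine slice_zero hd3 hodd hw g H 0 cc (fun me => ?_) e
    have h := congrFun hcc me
    rw [Matrix.vecMulLinear_apply] at h
    simpa [Matrix.vecMul, dotProduct, hG0] using h
  have hunit : IsUnit G0 := Matrix.vecMul_injective_iff_isUnit.mp hrow
  have hmv : Function.Injective G0.mulVec := Matrix.mulVec_injective_iff_isUnit.mpr hunit
  have hw0 : 0 < w 0 := by have := hw 0; omega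
  set u0 : Fin (w 0) := ⟨0, hw0⟩ with hu0
  set X : Edge w 0 → ℂ := fun me => if me.1 = u0 then ub me.2 else 0 with hX
  have hGX : G0.mulVec X = 0 := by
    funext e
    show (∑ me : Edge w 0, G0 e me * X me) = 0
    rw [Fintype.sum_prod_type]
    rw [Finset.sum_eq_single u0]
    · rw [← hub e u0]
      apply Finset.sum_congr rfl
      intro m _
      rw [hX]; dsimp only
      rw [if_pos rfl, hG0]
      rfl
    · intro u' _ hne
      apply Finset.sum_eq_zero
      intro m _
      rw [hX]; dsimp only
      rw [if_neg hne, mul_zero]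
    · intro hn; exact absurd (Finset.mem_univ u0) hn
  have hX0 : X = 0 := by
    apply hmv
    rw [hGX, Matrix.mulVec_zero]
  funext m
  have h := congrFun hX0 (u0, m)
  simpa [hX] using h

noncomputable def col1 (g : ∀ i : Fin d, Edge w i → Edge w i → ℂ) (f : Edge w (0 + 1))
    (t : Fin (w (0 + 1 + 1))) : Fin (w (0 + 1)) → ℂ :=
  fun m => g (0 + 1) f (m, t)

noncomputable def mv0 (g : ∀ i : Fin d, Edge w i → Edge w i → ℂ) (e : Edge w 0)
    (ξ : Fin (w (0 + 1)) → ℂ) : Fin (w 0) → ℂ :=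
  fun u => ∑ m : Fin (w (0 + 1)), g 0 e (u, m) * ξ m

lemma kill (hd3 : 3 ≤ d) (hodd : Odd d) (hw : ∀ i, 2 ≤ w i)
    (g : ∀ i : Fin d, Edge w i → Edge w i → ℂ)
    (H : ∀ p, (∑ v : ∀ i, Fin (w i), ∏ i, g i (p i) (pathOf w v i)) = f0 w p)
    (e0 : Edge w 0) (e1 : Edge w (0 + 1)) (t : Fin (w (0 + 1 + 1)))
    (hbad : e0.2 ≠ e1.1 ∨ (ParityPres e0 ∧ ParityPres e1)) :
    mv0 g e0 (col1 g e1 t) = 0 := by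
  funext u
  exact Blem hd3 hodd hw g H e0 e1 hbad u t

lemma edge_nonzero (hd3 : 3 ≤ d) (hodd : Odd d) (hw : ∀ i, 2 ≤ w i)
    (g : ∀ i : Fin d, Edge w i → Edge w i → ℂ)
    (H : ∀ p, (∑ v : ∀ i, Fin (w i), ∏ i, g i (p i) (pathOf w v i)) = f0 w p)
    (j : Fin d) (e : Edge w j) : ∃ me, g j e me ≠ 0 := by
  by_contra h
  push_neg at h
  have hz := slice_zero hd3 hodd hw g H j (fun e' => if e' = e then 1 else 0) (fun me => ?_) e
  · simp at hz
  · rw [Finset.sum_eq_single e]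
    · simp [h me]
    · intro e' _ hne; simp [hne]
    · intro he; exact absurd (Finset.mem_univ e) he

lemma main (hd3 : 3 ≤ d) (hodd : Odd d) (hw : ∀ i, 2 ≤ w i)
    (g : ∀ i : Fin d, Edge w i → Edge w i → ℂ)
    (H : ∀ p, (∑ v : ∀ i, Fin (w i), ∏ i, g i (p i) (pathOf w v i)) = f0 w p) : False := by
  classical
  set z0 : Fin (w (0 + 1)) := ⟨0, by have := hw (0 + 1); omega⟩ with hz0
  set y0 : Fin (w (0 + 1 + 1)) := ⟨0, by have := hw (0 + 1 + 1); omega⟩ with hy0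
  set x0 : Fin (w 0) := ⟨0, by have := hw 0; omega⟩ with hx0
  have hcol : ∀ z : Fin (w (0 + 1)), ∃ t, col1 g (z, y0) t ≠ 0 := by
    intro z
    obtain ⟨me, hme⟩ := edge_nonzero hd3 hodd hw g H (0 + 1) (z, y0)
    refine ⟨me.2, fun h => hme ?_⟩
    have h2 := congrFun h me.1
    simpa [col1] using h2
  choose tz htz using hcol
  set U : Fin (w (0 + 1)) → (Fin (w (0 + 1)) → ℂ) := fun z => col1 g (z, y0) (tz z) with hU
  have hkill : ∀ (x : Fin (w 0)) (z z' : Fin (w (0 + 1))), z' ≠ z → mv0 g (x, z') (U z) = 0 := by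
    intro x z z' hne
    exact kill hd3 hodd hw g H (x, z') (z, y0) (tz z) (Or.inl hne)
  have hlin : ∀ (e : Edge w 0) (c : Fin (w (0 + 1)) → ℂ)
      (ξ : Fin (w (0 + 1)) → (Fin (w (0 + 1)) → ℂ)) (u : Fin (w 0)),
      mv0 g e (fun m => ∑ z, c z * ξ z m) u = ∑ z, c z * mv0 g e (ξ z) u := by
    intro e c ξ u
    unfold mv0
    have hpt : ∀ m, g 0 e (u, m) * (∑ z, c z * ξ z m)
        = ∑ z, c z * (g 0 e (u, m) * ξ z m) := by
      intro m; rw [Finset.mul_sum]; apply Finset.sum_congr rfl; intro z _; ring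
    rw [Finset.sum_congr rfl (fun m _ => hpt m), Finset.sum_comm]
    apply Finset.sum_congr rfl
    intro z _
    rw [← Finset.mul_sum]
  have hcrux : ∀ z, ∃ x u, mv0 g (x, z) (U z) u ≠ 0 := by
    intro z
    by_contra hcon
    push_neg at hcon
    apply htz z
    have hUz : U z = 0 := by
      apply common_kernel hd3 hodd hw g H (U z)
      intro e u
      obtain ⟨a, b⟩ := e
      rcases eq_or_ne b z with rfl | hne
      · have h2 := hcon a u
        simpa [mv0] using h2
      · have h2 := congrFun (hkill a z b hne) u
        simpa [mv0] using h2
    exact hUz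
  have hUind : LinearIndependent ℂ U := by
    rw [Fintype.linearIndependent_iff]
    intro co hco z
    obtain ⟨x, u, hxu⟩ := hcrux z
    have hfn : (fun m => ∑ z', co z' * U z' m) = (0 : Fin (w (0 + 1)) → ℂ) := by
      funext m
      have h := congrFun hco m
      rw [Finset.sum_apply] at h
      simpa using h
    have h2 : mv0 g (x, z) (fun m => ∑ z', co z' * U z' m) u = 0 := by
      rw [hfn]; simp [mv0]
    rw [hlin] at h2
    rw [Finset.sum_eq_single z] at h2
    · rcases mul_eq_zero.mp h2 with h | h
      · exact h
      · exact absurd h hxu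
    · intro z' _ hne
      have hkz := congrFun (hkill x z' z (Ne.symm hne)) u
      rw [Pi.zero_apply] at hkz
      rw [hkz, mul_zero]
    · intro hz; exact absurd (Finset.mem_univ z) hz
  haveI : Nonempty (Fin (w (0 + 1))) := ⟨z0⟩
  have hcard : Fintype.card (Fin (w (0 + 1))) = Module.finrank ℂ (Fin (w (0 + 1)) → ℂ) := by
    rw [Module.finrank_pi]
  let B := basisOfLinearIndependentOfCardEqFinrank hUind hcard
  have hBcoe : ⇑B = U := coe_basisOfLinearIndependentOfCardEqFinrank hUind hcard
  have final1 : ∀ x : Fin (w 0), ∃ u, mv0 g (x, z0) (U z0) u ≠ 0 := by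
    intro x
    obtain ⟨me, hme⟩ := edge_nonzero hd3 hodd hw g H 0 (x, z0)
    by_contra hcon
    push_neg at hcon
    have hζ : mv0 g (x, z0) (Pi.single me.2 1) me.1 ≠ 0 := by
      unfold mv0
      rw [Finset.sum_eq_single me.2]
      · rw [Pi.single_eq_same, mul_one]
        simpa using hme
      · intro m _ hne; rw [Pi.single_eq_of_ne hne, mul_zero]
      · intro hn; exact absurd (Finset.mem_univ me.2) hn
    apply hζ
    have hrepr := B.sum_repr (Pi.single me.2 1)
    rw [hBcoe] at hrepr
    have hstep : mv0 g (x, z0) (Pi.single me.2 1) me.1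
        = mv0 g (x, z0) (fun m => ∑ z, B.repr (Pi.single me.2 1) z * U z m) me.1 := by
      congr 1
      funext m
      rw [← congrFun hrepr m, Finset.sum_apply]
      simp
    rw [hstep, hlin]
    apply Finset.sum_eq_zero
    intro z _
    rcases eq_or_ne z z0 with rfl | hne
    · rw [hcon me.1, mul_zero]
    · have hkz := congrFun (hkill x z z0 (Ne.symm hne)) me.1
      rw [Pi.zero_apply] at hkz
      rw [hkz, mul_zero]
  obtain ⟨u, hu⟩ := final1 x0
  apply hu
  have hpp0 : ParityPres ((x0, z0) : Edge w 0) := rfl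
  have hpp1 : ParityPres ((z0, y0) : Edge w (0 + 1)) := rfl
  have hk := kill hd3 hodd hw g H (x0, z0) (z0, y0) (tz z0) (Or.inr ⟨hpp0, hpp1⟩)
  have hres := congrFun hk u
  rw [Pi.zero_apply] at hres
  exact hres

end NotTrace

/-- For odd `d ≥ 3` and width format `w` with all `w i ≥ 2`,
the tensor `f_0` is not computed by any format-`w` trace ABP: there is no tuple of
matrices `g` with `(g_0 ⊗ ⋯ ⊗ g_{d-1}) f_com = f_0`. -/
theorem f0_not_computed_by_format_w_trace_ABP (d : ℕ) [NeZero d] (hd3 : 3 ≤ d) (hodd : Odd d)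
    (w : Fin d → ℕ) (hw : ∀ i, 2 ≤ w i) :
    ¬ ∃ g : ∀ i : Fin d, ABP.Edge w i → ABP.Edge w i → ℂ,
        ABP.actT w g (ABP.fcom w) = ABP.f0 w := by
  rintro ⟨g, hg⟩
  exact NotTrace.main hd3 hodd hw g (NotTrace.extract g hg)
end

section
/- The tensor f_0 lies in the closure, in the standard topology of the finite-dimensional complex vector space (Π i : Fin d, E^i) → ℂ, of the set {(g_0 ⊗ ⋯ ⊗ g_{d−1}) f_com : g_i : E^i → E^i → ℂ} of tensors computed by format-w trace ABPs. Concretely, for each ε ≠ 0 the tensor f_ε defined by f_ε(p) := ε^{k−1} if p is a valid path containing exactly k parity-preserving edges and f_ε(p) := 0 otherwise, is computed by a format-w trace ABP, and f_ε → f_0 as ε → 0. -/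
open scoped BigOperators

attribute [local instance] Classical.propDecidable

namespace ABP

/-- The tensor `f_ε`: value `ε^(k-1)` on valid paths containing exactly `k`
parity-preserving edges, 0 elsewhere. -/
noncomputable def feps {d : ℕ} [NeZero d] (w : Fin d → ℕ) (ε : ℂ) :
    (∀ i : Fin d, Edge w i) → ℂ :=
  fun p => if ValidPath w p then ε ^ (ppCount w p - 1) else 0

end ABP

namespace ABP

variable {d : ℕ} [NeZero d]

lemma ppCount_pos {w : Fin d → ℕ} (hodd : Odd d) {p : ∀ i : Fin d, Edge w i}
    (hp : ValidPath w p) : 1 ≤ ppCount w p := by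
  by_contra h
  push_neg at h
  have h0 : ppCount w p = 0 := Nat.lt_one_iff.mp h
  have hall : ∀ i : Fin d, ¬ ParityPres (p i) := by
    intro i
    have := Finset.card_eq_zero.mp h0
    rw [Finset.filter_eq_empty_iff] at this
    exact fun hpp => this (Finset.mem_univ i) hpp
  set s : Fin d → ZMod 2 := fun i => ((p i).1.val : ZMod 2) with hs
  have hne : ∀ a b : ZMod 2, a ≠ b → b - a = 1 := by decide
  have hstep : ∀ i : Fin d, s (i + 1) - s i = 1 := by
    intro i
    apply hne
    intro hEq
    apply hall i
    have h2 : ((p i).1.val : ZMod 2) = ((p (i + 1)).1.val : ZMod 2) := hEq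
    rw [ZMod.natCast_eq_natCast_iff] at h2
    unfold ParityPres
    rw [hp i]
    exact h2
  have hsum0 : ∑ i : Fin d, (s (i + 1) - s i) = 0 := by
    rw [Finset.sum_sub_distrib, sub_eq_zero]
    exact Fintype.sum_equiv (Equiv.addRight (1 : Fin d)) _ _ (fun i => rfl)
  have hsum1 : ∑ i : Fin d, (s (i + 1) - s i) = (d : ZMod 2) := by
    simp only [hstep, Finset.sum_const, Finset.card_univ, Fintype.card_fin, nsmul_eq_mul, mul_one]
  have hd2 : (d : ZMod 2) = 1 := by
    rw [← ZMod.natCast_mod, Nat.odd_iff.mp hodd]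
    norm_num
  rw [hsum1, hd2] at hsum0
  exact one_ne_zero hsum0

/-- The diagonal matrices implementing `feps ε`. -/
noncomputable def gdiag (w : Fin d → ℕ) (ε : ℂ) :
    ∀ i : Fin d, Edge w i → Edge w i → ℂ :=
  fun i e e' =>
    if e' = e then (if ParityPres e then ε else 1) * (if i = 0 then ε⁻¹ else 1) else 0

lemma actT_gdiag (w : Fin d → ℕ) (hodd : Odd d) (ε : ℂ) (hε : ε ≠ 0) :
    actT w (gdiag w ε) (fcom w) = feps w ε := by
  funext p
  unfold actT feps fcom gdiag
  rw [Finset.sum_eq_single p]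
  · have hprod : (∏ i : Fin d,
        (if p i = p i then (if ParityPres (p i) then ε else 1) *
          (if i = 0 then ε⁻¹ else 1) else 0)) =
        ε ^ ppCount w p * ε⁻¹ := by
      simp only [if_pos rfl, if_true]
      rw [Finset.prod_mul_distrib]
      congr 1
      · rw [← Finset.prod_filter, Finset.prod_const]
        rfl
      · rw [Finset.prod_ite_eq' Finset.univ (0 : Fin d) (fun _ => ε⁻¹)]
        simp
    rw [hprod]
    by_cases hv : ValidPath w p
    · rw [if_pos hv, if_pos hv, mul_one]
      have h1 : 1 ≤ ppCount w p := ppCount_pos hodd hv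
      have : ε ^ ppCount w p = ε ^ (ppCount w p - 1) * ε := by
        rw [← pow_succ, Nat.sub_add_cancel h1]
      rw [this, mul_assoc, mul_inv_cancel₀ hε, mul_one]
    · rw [if_neg hv, if_neg hv, mul_zero]
  · intro q _ hq
    have : ∃ i, q i ≠ p i := by
      by_contra hc
      push_neg at hc
      exact hq (funext hc)
    obtain ⟨i, hi⟩ := this
    refine mul_eq_zero_of_left (Finset.prod_eq_zero (Finset.mem_univ i) ?_) _
    rw [if_neg hi]
  · intro hp
    exact absurd (Finset.mem_univ p) hp

lemma feps_tendsto (w : Fin d → ℕ) (hodd : Odd d) :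
    Filter.Tendsto (fun ε : ℂ => feps w ε) (nhds 0) (nhds (f0 w)) := by
  rw [tendsto_pi_nhds]
  intro p
  by_cases hv : ValidPath w p
  · by_cases hk : ppCount w p = 1
    · have : (fun ε : ℂ => feps w ε p) = fun _ => (1 : ℂ) := by
        funext ε
        simp [feps, hv, hk]
      rw [this]
      have : f0 w p = 1 := by simp [f0, hv, hk]
      rw [this]
      exact tendsto_const_nhds
    · have hk1 : 1 ≤ ppCount w p - 1 := by
        have := ppCount_pos hodd hv
        omega
      have h1 : (fun ε : ℂ => feps w ε p) = fun ε => ε ^ (ppCount w p - 1) := by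
        funext ε; simp [feps, hv]
      have h2 : f0 w p = 0 := by simp [f0, hk]
      rw [h1, h2]
      have := (continuous_pow (ppCount w p - 1)).tendsto (0 : ℂ)
      rwa [zero_pow (by omega : ppCount w p - 1 ≠ 0)] at this
  · have h1 : (fun ε : ℂ => feps w ε p) = fun _ => (0 : ℂ) := by
      funext ε; simp [feps, hv]
    have h2 : f0 w p = 0 := by simp [f0, hv]
    rw [h1, h2]
    exact tendsto_const_nhds

end ABP

/-- For odd `d ≥ 3` and width format `w` with all `w i ≥ 2`,
the tensor `f_0` lies in the closure of the set of tensors computed by format-`w`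
trace ABPs; concretely, for every `ε ≠ 0` the tensor `f_ε` is computed by a
format-`w` trace ABP and `f_ε → f_0` as `ε → 0`. -/
theorem f0_in_closure_of_format_w_trace_ABP (d : ℕ) [NeZero d] (hd3 : 3 ≤ d) (hodd : Odd d)
    (w : Fin d → ℕ) (hw : ∀ i, 2 ≤ w i) :
    ABP.f0 w ∈ closure {h : (∀ i : Fin d, ABP.Edge w i) → ℂ |
        ∃ g : ∀ i : Fin d, ABP.Edge w i → ABP.Edge w i → ℂ,
          ABP.actT w g (ABP.fcom w) = h} ∧
    (∀ ε : ℂ, ε ≠ 0 →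
      ∃ g : ∀ i : Fin d, ABP.Edge w i → ABP.Edge w i → ℂ,
        ABP.actT w g (ABP.fcom w) = ABP.feps w ε) ∧
    Filter.Tendsto (fun ε : ℂ => ABP.feps w ε) (nhds 0) (nhds (ABP.f0 w)) := by
  constructor
  · haveI : Filter.NeBot (nhdsWithin (0 : ℂ) {(0 : ℂ)}ᶜ) :=
      NormedField.nhdsNE_neBot 0
    refine mem_closure_of_tendsto (b := nhdsWithin (0 : ℂ) {(0 : ℂ)}ᶜ) ((ABP.feps_tendsto w hodd).mono_left nhdsWithin_le_nhds) ?_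
    filter_upwards [self_mem_nhdsWithin] with ε hε
    exact ⟨ABP.gdiag w ε, ABP.actT_gdiag w hodd ε (by simpa using hε)⟩
  refine ⟨fun ε hε => ⟨ABP.gdiag w ε, ABP.actT_gdiag w hodd ε hε⟩, ABP.feps_tendsto w hodd⟩
end

section
/- The tensor f_0 is computed by a trace ABP of format 2w: there exist matrices L_i : E^i → E'^i → ℂ (i ∈ Fin d) such that the tensor (L_0 ⊗ ⋯ ⊗ L_{d−1}) f'_com, defined by ((⊗_i L_i) f'_com)(p) := Σ_{q ∈ Π_i E'^i} (Π_i L_i (p i) (q i)) · f'_com(q), equals f_0. -/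
open scoped BigOperators

attribute [local instance] Classical.propDecidable

namespace ABPAux
open ABP

variable {d : ℕ} [NeZero d]

def eps (n : ℕ) : Fin (2 * n) ≃ Fin n × Fin 2 :=
  (finCongr (mul_comm 2 n)).trans finProdFinEquiv.symm

def enc {n : ℕ} (v : Fin n) (s : Fin 2) : Fin (2 * n) := (eps n).symm (v, s)

@[simp] lemma eps_enc {n : ℕ} (v : Fin n) (s : Fin 2) : eps n (enc v s) = (v, s) :=
  (eps n).apply_symm_apply _

noncomputable def ppBit {w : Fin d → ℕ} {i : Fin d} (e : Edge w i) : ℕ :=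
  if ParityPres e then 1 else 0

def lastI (d : ℕ) [NeZero d] : Fin d :=
  ⟨d - 1, Nat.sub_lt (Nat.pos_of_ne_zero (NeZero.ne d)) one_pos⟩

lemma lastI_add_one (hd : 2 ≤ d) : lastI d + 1 = (0 : Fin d) := by
  apply Fin.ext
  have h1 : (1 : Fin d).val = 1 := by
    rw [Fin.val_one']; exact Nat.mod_eq_of_lt (by omega)
  rw [Fin.add_def]
  simp only [h1, lastI]
  simp only [Fin.val_zero]
  have : d - 1 + 1 = d := by omega
  rw [this, Nat.mod_self]

lemma succ_mk (hd : 2 ≤ d) (k : ℕ) (h : k + 1 < d) :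
    (⟨k, Nat.lt_of_succ_lt h⟩ : Fin d) + 1 = ⟨k + 1, h⟩ := by
  apply Fin.ext
  have h1 : (1 : Fin d).val = 1 := by
    rw [Fin.val_one']; exact Nat.mod_eq_of_lt (by omega)
  rw [Fin.add_def, h1]
  exact Nat.mod_eq_of_lt h

lemma ne_lastI_iff (i : Fin d) : i ≠ lastI d ↔ i.val < d - 1 := by
  constructor
  · intro h
    have : i.val ≠ d - 1 := fun hv => h (Fin.ext hv)
    have := i.isLt
    omega
  · intro h hv
    rw [hv] at h
    simp [lastI] at h

lemma val_succ_of_ne_lastI (i : Fin d) (h : i ≠ lastI d) : (i + 1).val = i.val + 1 := by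
  have hlt : i.val < d - 1 := (ne_lastI_iff i).mp h
  have hd : 2 ≤ d := by have := i.isLt; omega
  have h2 : i.val + 1 < d := by omega
  have := succ_mk hd i.val h2
  have hi : (⟨i.val, Nat.lt_of_succ_lt h2⟩ : Fin d) = i := Fin.ext rfl
  rw [hi] at this
  rw [this]


variable {w : Fin d → ℕ}

/-- The relation defining the matrix `L i`: the doubled edge `e'` projects to `e`,
and the flag bits record the running count (capped) of parity-preserving edges,
with the cyclic closure condition at the last layer. -/
def Rel (w : Fin d → ℕ) (i : Fin d) (e : Edge w i) (e' : Edge (fun j => 2 * w j) i) : Prop :=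
  (eps (w i) e'.1).1 = e.1 ∧ (eps (w (i + 1)) e'.2).1 = e.2 ∧
    (if i = lastI d then
        (eps (w (i + 1)) e'.2).2 = 0 ∧ ((eps (w i) e'.1).2).val + ppBit e = 1
      else
        ((eps (w (i + 1)) e'.2).2).val = ((eps (w i) e'.1).2).val + ppBit e)

noncomputable def tCanon (w : Fin d → ℕ) (p : ∀ i, Edge w i) (i : Fin d) : Fin 2 :=
  if ∃ j : Fin d, j.val < i.val ∧ ParityPres (p j) then 1 else 0

noncomputable def qstar (w : Fin d → ℕ) (p : ∀ i, Edge w i) (i : Fin d) :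
    Edge (fun j => 2 * w j) i :=
  (enc (p i).1 (tCanon w p i), enc (p i).2 (tCanon w p (i + 1)))

lemma tCanon_zero (p : ∀ i, Edge w i) : tCanon w p 0 = 0 := by
  simp [tCanon]

lemma pp_unique (p : ∀ i, Edge w i) (hc : ppCount w p = 1) :
    ∃ a : Fin d, ∀ j, ParityPres (p j) ↔ j = a := by
  obtain ⟨a, ha⟩ := Finset.card_eq_one.mp hc
  refine ⟨a, fun j => ?_⟩
  constructor
  · intro h
    have hj : j ∈ Finset.univ.filter fun i : Fin d => ParityPres (p i) :=
      Finset.mem_filter.mpr ⟨Finset.mem_univ _, h⟩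
    rw [ha] at hj
    simpa using hj
  · intro hja
    have hm : j ∈ ({a} : Finset (Fin d)) := Finset.mem_singleton.mpr hja
    rw [← ha] at hm
    exact (Finset.mem_filter.mp hm).2

lemma tCanon_step (p : ∀ i, Edge w i) (hc : ppCount w p = 1) (i : Fin d) (hi : i ≠ lastI d) :
    (tCanon w p (i + 1)).val = (tCanon w p i).val + ppBit (p i) := by
  obtain ⟨a, ha⟩ := pp_unique p hc
  have hsucc : (i + 1).val = i.val + 1 := val_succ_of_ne_lastI i hi
  by_cases hpp : ParityPres (p i)
  · have hia : i = a := (ha i).mp hpp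
    have h1 : tCanon w p (i + 1) = 1 := by
      have hex : ∃ j : Fin d, j.val < (i + 1).val ∧ ParityPres (p j) := ⟨i, by omega, hpp⟩
      rw [tCanon, if_pos hex]
    have h0 : tCanon w p i = 0 := by
      rw [tCanon, if_neg]
      rintro ⟨j, hj1, hj2⟩
      have : j = a := (ha j).mp hj2
      omega
    rw [h1, h0, ppBit, if_pos hpp]
    decide
  · have hiff : (∃ j : Fin d, j.val < (i + 1).val ∧ ParityPres (p j)) ↔
        (∃ j : Fin d, j.val < i.val ∧ ParityPres (p j)) := by
      constructor
      · rintro ⟨j, hj1, hj2⟩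
        rcases Nat.lt_or_ge j.val i.val with h | h
        · exact ⟨j, h, hj2⟩
        · exfalso
          have : j.val = i.val := by omega
          have : j = i := Fin.ext this
          exact hpp (this ▸ hj2)
      · rintro ⟨j, hj1, hj2⟩
        exact ⟨j, by omega, hj2⟩
    rw [tCanon, tCanon, ppBit, if_neg hpp]
    by_cases h : ∃ j : Fin d, j.val < i.val ∧ ParityPres (p j)
    · rw [if_pos (hiff.mpr h), if_pos h]; decide
    · rw [if_neg (fun hh => h (hiff.mp hh)), if_neg h]; decide

lemma tCanon_last (p : ∀ i, Edge w i) (hc : ppCount w p = 1) :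
    (tCanon w p (lastI d)).val + ppBit (p (lastI d)) = 1 := by
  obtain ⟨a, ha⟩ := pp_unique p hc
  by_cases hpp : ParityPres (p (lastI d))
  · have h0 : tCanon w p (lastI d) = 0 := by
      rw [tCanon, if_neg]
      rintro ⟨j, hj1, hj2⟩
      have hja : j = a := (ha j).mp hj2
      have hla : lastI d = a := (ha _).mp hpp
      have : j = lastI d := by rw [hja, hla]
      rw [this] at hj1
      simp [lastI] at hj1
    rw [h0, ppBit, if_pos hpp]
    decide
  · have hppa : ParityPres (p a) := (ha a).mpr rfl
    have hane : a ≠ lastI d := fun h => hpp (h ▸ hppa)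
    have h1 : tCanon w p (lastI d) = 1 := by
      rw [tCanon, if_pos]
      refine ⟨a, ?_, hppa⟩
      have := (ne_lastI_iff a).mp hane
      simpa [lastI] using this
    rw [h1, ppBit, if_neg hpp]
    decide

lemma flag_unique (b : Fin d → ℕ) (t t' : Fin d → Fin 2)
    (h0 : t 0 = t' 0)
    (hstep : ∀ i : Fin d, i ≠ lastI d → (t (i + 1)).val = (t i).val + b i)
    (hstep' : ∀ i : Fin d, i ≠ lastI d → (t' (i + 1)).val = (t' i).val + b i) :
    t = t' := by
  have key : ∀ k (hk : k < d), t ⟨k, hk⟩ = t' ⟨k, hk⟩ := by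
    intro k
    induction k with
    | zero =>
      intro hk
      have : (⟨0, hk⟩ : Fin d) = 0 := Fin.ext (by simp)
      rw [this]; exact h0
    | succ k ih =>
      intro hk
      have hk' : k < d := Nat.lt_of_succ_lt hk
      have hd : 2 ≤ d := by omega
      have hne : (⟨k, hk'⟩ : Fin d) ≠ lastI d := by
        rw [ne_lastI_iff]; simp; omega
      have e1 := hstep _ hne
      have e2 := hstep' _ hne
      rw [succ_mk hd k hk] at e1 e2
      have e3 := ih hk'
      apply Fin.ext
      rw [e1, e2, e3]
  funext i
  have := key i.val i.isLt
  simpa using this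

lemma ppCount_eq_sum (p : ∀ i, Edge w i) :
    ppCount w p = ∑ i : Fin d, ppBit (p i) := by
  rw [ppCount, Finset.card_filter]
  rfl


lemma sufficiency (hd : 2 ≤ d) (p : ∀ i, Edge w i)
    (hp : ValidPath w p) (hc : ppCount w p = 1) :
    (∀ i, Rel w i (p i) (qstar w p i)) ∧ ValidPath (fun j => 2 * w j) (qstar w p) := by
  constructor
  · intro i
    refine ⟨by simp [qstar], by simp [qstar], ?_⟩
    by_cases hi : i = lastI d
    · rw [if_pos hi]
      subst hi
      constructor
      · show (eps _ (qstar w p (lastI d)).2).2 = 0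
        simp only [qstar, eps_enc]
        rw [lastI_add_one hd, tCanon_zero]
      · show ((eps _ (qstar w p (lastI d)).1).2).val + ppBit (p (lastI d)) = 1
        simp only [qstar, eps_enc]
        exact tCanon_last p hc
    · rw [if_neg hi]
      show ((eps _ (qstar w p i).2).2).val = ((eps _ (qstar w p i).1).2).val + ppBit (p i)
      simp only [qstar, eps_enc]
      exact tCanon_step p hc i hi
  · intro i
    show (qstar w p i).2 = (qstar w p (i + 1)).1
    simp only [qstar]
    rw [hp i]

lemma necessity (hd : 2 ≤ d) (p : ∀ i, Edge w i) (q : ∀ i, Edge (fun j => 2 * w j) i)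
    (hR : ∀ i, Rel w i (p i) (q i)) (hq : ValidPath (fun j => 2 * w j) q) :
    ValidPath w p ∧ ppCount w p = 1 ∧ q = qstar w p := by
  set t : Fin d → Fin 2 := fun i => (eps (w i) (q i).1).2 with ht
  -- validity of p
  have hvp : ValidPath w p := by
    intro i
    have h1 := (hR i).2.1
    have h2 := (hR (i + 1)).1
    have h3 : (q i).2 = (q (i + 1)).1 := hq i
    rw [h3, h2] at h1
    exact h1.symm
  -- flag recursion
  have hstep : ∀ i : Fin d, i ≠ lastI d → (t (i + 1)).val = (t i).val + ppBit (p i) := by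
    intro i hi
    have h3 := (hR i).2.2
    rw [if_neg hi] at h3
    rw [hq i] at h3
    exact h3
  have hlast := (hR (lastI d)).2.2
  rw [if_pos rfl] at hlast
  rw [hq (lastI d)] at hlast
  have ht0 : t 0 = 0 := by
    have := hlast.1
    rw [lastI_add_one hd] at this
    exact this
  have htlast : (t (lastI d)).val + ppBit (p (lastI d)) = 1 := hlast.2
  -- count
  have hcount : ppCount w p = 1 := by
    have hsum1 : ∑ i : Fin d, (t (i + 1)).val = ∑ i : Fin d, (t i).val :=
      Fintype.sum_equiv (Equiv.addRight (1 : Fin d)) _ _ (fun i => rfl)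
    have hA : ∑ i : Fin d, (t i).val
        = (t (lastI d)).val + ∑ i ∈ Finset.univ.erase (lastI d), (t i).val :=
      (Finset.add_sum_erase _ _ (Finset.mem_univ _)).symm
    have hB : ∑ i : Fin d, (t (i + 1)).val
        = (t (lastI d + 1)).val + ∑ i ∈ Finset.univ.erase (lastI d), (t (i + 1)).val :=
      (Finset.add_sum_erase _ (fun i => (t (i + 1)).val) (Finset.mem_univ _)).symm
    have hC : ∑ i ∈ Finset.univ.erase (lastI d), (t (i + 1)).val
        = ∑ i ∈ Finset.univ.erase (lastI d), ((t i).val + ppBit (p i)) := by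
      apply Finset.sum_congr rfl
      intro i hi
      exact hstep i (Finset.ne_of_mem_erase hi)
    have hD : ∑ i ∈ Finset.univ.erase (lastI d), ((t i).val + ppBit (p i))
        = ∑ i ∈ Finset.univ.erase (lastI d), (t i).val
          + ∑ i ∈ Finset.univ.erase (lastI d), ppBit (p i) := Finset.sum_add_distrib
    have hzero : (t (lastI d + 1)).val = 0 := by rw [lastI_add_one hd, ht0]; rfl
    have hE : ∑ i ∈ Finset.univ.erase (lastI d), ppBit (p i) = (t (lastI d)).val := by
      omega
    have hF : ppCount w p = ∑ i : Fin d, ppBit (p i) := ppCount_eq_sum p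
    have hG : ∑ i : Fin d, ppBit (p i)
        = ppBit (p (lastI d)) + ∑ i ∈ Finset.univ.erase (lastI d), ppBit (p i) :=
      (Finset.add_sum_erase _ _ (Finset.mem_univ _)).symm
    omega
  refine ⟨hvp, hcount, ?_⟩
  -- q is determined
  have hteq : t = tCanon w p :=
    flag_unique (fun i => ppBit (p i)) t (tCanon w p)
      (by rw [ht0, tCanon_zero]) hstep (tCanon_step p hcount)
  funext i
  have h1 : (q i).1 = enc (p i).1 (tCanon w p i) := by
    have : eps (w i) (q i).1 = ((p i).1, tCanon w p i) := by
      apply Prod.ext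
      · exact (hR i).1
      · show t i = tCanon w p i
        rw [hteq]
    apply (eps (w i)).injective
    rw [this, eps_enc]
  have h2 : (q i).2 = enc (p i).2 (tCanon w p (i + 1)) := by
    rw [hq i]
    have : eps (w (i + 1)) (q (i + 1)).1 = ((p i).2, tCanon w p (i + 1)) := by
      apply Prod.ext
      · rw [(hR (i + 1)).1, ← hvp i]
      · show t (i + 1) = tCanon w p (i + 1)
        rw [hteq]
    apply (eps (w (i + 1))).injective
    rw [this, eps_enc]
  show q i = qstar w p i
  rw [qstar, ← h1, ← h2]

end ABPAux

/-- For odd `d ≥ 3` and width format `w` with all `w i ≥ 2`,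
the tensor `f_0` is computed by a trace ABP of format `2w`: there exist matrices
`L i : E^i → E'^i → ℂ` with `(L_0 ⊗ ⋯ ⊗ L_{d-1}) f'_com = f_0`, where `E'` are the
edge sets for the doubled format and `f'_com` is its valid-path tensor. -/
theorem f0_computed_by_format_2w_trace_ABP (d : ℕ) [NeZero d] (hd3 : 3 ≤ d) (hodd : Odd d)
    (w : Fin d → ℕ) (hw : ∀ i, 2 ≤ w i) :
    ∃ L : ∀ i : Fin d, ABP.Edge w i → ABP.Edge (fun j => 2 * w j) i → ℂ,
      ∀ p : ∀ i : Fin d, ABP.Edge w i,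
        (∑ q : ∀ i : Fin d, ABP.Edge (fun j => 2 * w j) i,
          (∏ i : Fin d, L i (p i) (q i)) * ABP.fcom (fun j => 2 * w j) q) = ABP.f0 w p := by
  have hd : 2 ≤ d := by omega
  refine ⟨fun i e e' => if ABPAux.Rel w i e e' then 1 else 0, fun p => ?_⟩
  have hterm : ∀ q : ∀ i : Fin d, ABP.Edge (fun j => 2 * w j) i,
      (∏ i : Fin d, (if ABPAux.Rel w i (p i) (q i) then (1 : ℂ) else 0)) *
        ABP.fcom (fun j => 2 * w j) q
      = if (∀ i, ABPAux.Rel w i (p i) (q i)) ∧ ABP.ValidPath (fun j => 2 * w j) q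
          then 1 else 0 := by
    intro q
    rw [ABP.fcom]
    by_cases h1 : ∀ i, ABPAux.Rel w i (p i) (q i)
    · by_cases h2 : ABP.ValidPath (fun j => 2 * w j) q
      · rw [if_pos h2, if_pos ⟨h1, h2⟩, mul_one]
        apply Finset.prod_eq_one
        intro i _
        rw [if_pos (h1 i)]
      · rw [if_neg h2, if_neg (fun h => h2 h.2), mul_zero]
    · obtain ⟨i0, hi0⟩ := not_forall.mp h1
      have hz : (∏ i : Fin d, (if ABPAux.Rel w i (p i) (q i) then (1 : ℂ) else 0)) = 0 :=
        Finset.prod_eq_zero (Finset.mem_univ i0) (by rw [if_neg hi0])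
      rw [hz, zero_mul, if_neg (fun h => h1 h.1)]
  simp_rw [hterm]
  rw [ABP.f0]
  by_cases hcond : ABP.ValidPath w p ∧ ABP.ppCount w p = 1
  · rw [if_pos hcond]
    obtain ⟨hp, hc⟩ := hcond
    have hs := ABPAux.sufficiency hd p hp hc
    rw [Finset.sum_eq_single_of_mem (ABPAux.qstar w p) (Finset.mem_univ _)]
    · rw [if_pos ⟨hs.1, hs.2⟩]
    · intro q _ hne
      rw [if_neg]
      rintro ⟨h1, h2⟩
      exact hne ((ABPAux.necessity hd p q h1 h2).2.2)
  · rw [if_neg hcond]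
    apply Finset.sum_eq_zero
    intro q _
    rw [if_neg]
    rintro ⟨h1, h2⟩
    obtain ⟨a1, a2, _⟩ := ABPAux.necessity hd p q h1 h2
    exact hcond ⟨a1, a2⟩
end

section
/- The tensor f_com is concise: for every j ∈ Fin d, the flattening matrix M_{f_com}^j has full row rank w j · w (j+1). -/
open scoped BigOperators

attribute [local instance] Classical.propDecidable

namespace ABP

/-- Insert an edge `e` of layer `j` into a tuple of edges of all other layers,
producing a full edge tuple. -/
def insertAt {d : ℕ} [NeZero d] (w : Fin d → ℕ) (j : Fin d) (e : Edge w j)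
    (c : ∀ i : {i : Fin d // i ≠ j}, Edge w i.val) : ∀ i : Fin d, Edge w i :=
  fun i => if h : i = j then cast (congrArg (Edge w) h.symm) e else c ⟨i, h⟩

/-- The `j`-th flattening matrix of a tensor: rows indexed by edges of layer `j`,
columns indexed by tuples of edges of the other layers. -/
def flatten {d : ℕ} [NeZero d] (w : Fin d → ℕ)
    (f : (∀ i : Fin d, Edge w i) → ℂ) (j : Fin d) :
    Matrix (Edge w j) (∀ i : {i : Fin d // i ≠ j}, Edge w i.val) ℂ :=
  Matrix.of fun e c => f (insertAt w j e c)

/-- A tensor is concise if every flattening matrix has full row rank. -/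
def Concise {d : ℕ} [NeZero d] (w : Fin d → ℕ)
    (f : (∀ i : Fin d, Edge w i) → ℂ) : Prop :=
  ∀ j : Fin d, (flatten w f j).rank = w j * w (j + 1)

end ABP


namespace ABP

/-- Key lemma: for each layer `j`, there is a choice of columns making an identity
submatrix inside the flattening of `fcom`. -/
private lemma exists_identity_cols {d : ℕ} [NeZero d] (hd3 : 3 ≤ d)
    (w : Fin d → ℕ) (hw : ∀ i, 2 ≤ w i) (j : Fin d) :
    ∃ C : Edge w j → (∀ i : {i : Fin d // i ≠ j}, Edge w i.val),
      ∀ e e' : Edge w j,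
        flatten w (fcom w) j e' (C e) = if e' = e then 1 else 0 := by
  classical
  have h10 : (1 : Fin d) ≠ 0 := by
    intro h
    have := congrArg Fin.val h
    simp [Fin.val_one, Nat.mod_eq_of_lt (by omega : 1 < d)] at this
  have hj1 : j + 1 ≠ j := by
    intro h
    apply h10
    have := congrArg (fun x => x - j) h
    simpa using this
  -- vertex assignment depending on e = (a, b)
  set x : Edge w j → ∀ i : Fin d, Fin (w i) := fun e i =>
    if h : i = j then Fin.cast (congrArg w h.symm) e.1
    else if h' : i = j + 1 then Fin.cast (congrArg w h'.symm) e.2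
    else ⟨0, lt_of_lt_of_le two_pos (hw i)⟩ with hx
  have hxj : ∀ e : Edge w j, x e j = e.1 := by
    intro e; simp [hx]
  have hxj1 : ∀ e : Edge w j, x e (j + 1) = e.2 := by
    intro e; simp [hx, hj1]
  refine ⟨fun e => fun i => (x e i.val, x e (i.val + 1)), ?_⟩
  intro e e'
  set p := insertAt w j e'
      (fun i : {i : Fin d // i ≠ j} => (x e i.val, x e (i.val + 1))) with hp
  have hpj : p j = e' := by
    rw [hp]; simp [insertAt]
  have hpne : ∀ i : Fin d, i ≠ j → p i = (x e i, x e (i + 1)) := by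
    intro i hi; rw [hp]; simp [insertAt, hi]
  have key : ValidPath w p ↔ e' = e := by
    constructor
    · intro hv
      have hjm : j - 1 ≠ j := by
        intro h
        apply hj1
        have := congrArg (fun y => y + 1) h
        simpa [sub_add_cancel] using this.symm
      have h1 := congrArg Fin.val (hv (j - 1))
      rw [hpne _ hjm] at h1
      rw [sub_add_cancel] at h1
      simp only [hpj, hxj] at h1
      have hfst : e'.1 = e.1 := Fin.ext h1.symm
      have h2 : (p j).2 = (p (j + 1)).1 := hv j
      rw [hpj, hpne _ hj1] at h2
      rw [hxj1] at h2
      exact Prod.ext hfst h2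
    · rintro rfl
      have hpeq : p = fun i => (x e' i, x e' (i + 1)) := by
        funext i
        by_cases hi : i = j
        · subst hi
          rw [hpj, hxj, hxj1]
        · exact hpne i hi
      rw [hpeq]
      intro i
      rfl
  show fcom w p = if e' = e then 1 else 0
  simp only [fcom, key]

end ABP

/-- For odd `d ≥ 3` and width format `w` with all `w i ≥ 2`,
the tensor `f_com` is concise: every flattening has full row rank `w j * w (j+1)`. -/
theorem fcom_concise (d : ℕ) [NeZero d] (hd3 : 3 ≤ d) (hodd : Odd d)
    (w : Fin d → ℕ) (hw : ∀ i, 2 ≤ w i) :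
    ABP.Concise w (ABP.fcom w) := by
  intro j
  classical
  obtain ⟨C, hC⟩ := ABP.exists_identity_cols hd3 w hw j
  set M := ABP.flatten w (ABP.fcom w) j with hM
  have hcol : ∀ e : ABP.Edge w j,
      M.mulVecLin (Pi.single (C e) 1) = Pi.single e 1 := by
    intro e
    ext e'
    simp [Matrix.mulVecLin_apply, Matrix.mulVec_single, hC e e', Pi.single_apply]
  have htop : LinearMap.range M.mulVecLin = ⊤ := by
    rw [eq_top_iff, ← (Pi.basisFun ℂ (ABP.Edge w j)).span_eq, Submodule.span_le]
    rintro v ⟨e, rfl⟩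
    exact ⟨Pi.single (C e) 1, by simpa [Pi.basisFun_apply] using hcol e⟩
  rw [Matrix.rank, htop, finrank_top]
  simp [Module.finrank_pi]
end

section
/- The tensor f_0 is concise: for every j ∈ Fin d, the flattening matrix M_{f_0}^j has full row rank w j · w (j+1). -/
set_option linter.unusedSectionVars false


open scoped BigOperators

attribute [local instance] Classical.propDecidable

namespace ABP0Aux

variable {d : ℕ} [NeZero d]

lemma val_add_one' (hd : 2 ≤ d) (i : Fin d) : ((i + 1 : Fin d)).val = (i.val + 1) % d := by
  rw [Fin.add_def, Fin.val_one' d, Nat.mod_eq_of_lt (by omega : 1 < d)]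

/-- distance from layer `j+1`, walking forward. -/
def kIdx (j i : Fin d) : ℕ :=
  if (j.val + 1) % d ≤ i.val then i.val - (j.val + 1) % d else i.val + d - (j.val + 1) % d

omit [NeZero d] in
lemma hm (j : Fin d) : ((j.val + 1) % d = j.val + 1 ∨ ((j.val + 1) % d = 0 ∧ j.val + 1 = d)) ∧ (j.val + 1) % d < d := by
  refine ⟨?_, Nat.mod_lt _ (by have := j.isLt; omega)⟩
  rcases Nat.lt_or_ge (j.val + 1) d with h | h
  · left; exact Nat.mod_eq_of_lt h
  · right; have hj := j.isLt
    have : j.val + 1 = d := by omega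
    simp [this]

lemma kIdx_le (j i : Fin d) : kIdx j i ≤ d - 1 := by
  have := hm j; have := i.isLt; have := j.isLt; unfold kIdx; split <;> omega

lemma kIdx_succ (hd : 3 ≤ d) (j : Fin d) : kIdx j (j + 1) = 0 := by
  have := hm j; have := j.isLt
  have h := val_add_one' (by omega) j
  unfold kIdx; rw [h]; split <;> omega

lemma kIdx_self (hd : 3 ≤ d) (j : Fin d) : kIdx j j = d - 1 := by
  have := hm j; have := j.isLt; unfold kIdx; split <;> omega

lemma eq_self_iff (hd : 3 ≤ d) (j i : Fin d) : i = j ↔ kIdx j i = d - 1 := by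
  constructor
  · rintro rfl; exact kIdx_self hd _
  · intro h; have := hm j; have := i.isLt; have := j.isLt
    apply Fin.ext; unfold kIdx at h; split at h <;> omega

lemma eq_succ_iff (hd : 3 ≤ d) (j i : Fin d) : i = j + 1 ↔ kIdx j i = 0 := by
  constructor
  · rintro rfl; exact kIdx_succ hd j
  · intro h; have := hm j; have := i.isLt; have := j.isLt
    apply Fin.ext; rw [val_add_one' (by omega)]
    unfold kIdx at h; split at h <;> omega

lemma succ_ne_self (hd : 3 ≤ d) (j : Fin d) : j + 1 ≠ j := by
  intro h
  have h1 := (eq_self_iff hd j (j+1)).mp h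
  rw [kIdx_succ hd] at h1; omega

lemma kIdx_step (hd : 3 ≤ d) (j i : Fin d) (h : i ≠ j) :
    kIdx j (i + 1) = kIdx j i + 1 := by
  have := hm j; have hi := i.isLt; have := j.isLt
  have hij : i.val ≠ j.val := fun hh => h (Fin.ext hh)
  have h1 := val_add_one' (show 2 ≤ d by omega) i
  unfold kIdx; rw [h1]
  rcases Nat.lt_or_ge (i.val + 1) d with h2 | h2
  · rw [Nat.mod_eq_of_lt h2]; split <;> split <;> omega
  · have h3 : i.val + 1 = d := by omega
    rw [h3, Nat.mod_self]; split <;> split <;> omega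

end ABP0Aux
section TEST
open ABP ABP0Aux
namespace ABP0Aux
variable {d : ℕ} [NeZero d]

/-- parity pattern along the cycle: position `m` counted from layer `j+1`. -/
def par (t b m : ℕ) : ℕ := (b + m + (if 1 ≤ m then t else 0)) % 2

variable (w : Fin d → ℕ)

/-- the chosen vertex in each layer. -/
noncomputable def vtx (hw : ∀ i, 2 ≤ w i) (j : Fin d) (e : Edge w j) :
    ∀ i : Fin d, Fin (w i) :=
  fun i =>
    if h : i = j then Fin.cast (congrArg w h).symm e.1
    else if h' : i = j + 1 then Fin.cast (congrArg w h').symm e.2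
    else ⟨par ((e.1.val + e.2.val) % 2) e.2.val (kIdx j i), by
      have := hw i
      have : par ((e.1.val + e.2.val) % 2) e.2.val (kIdx j i) < 2 := Nat.mod_lt _ (by omega)
      omega⟩

lemma vtx_self (hw : ∀ i, 2 ≤ w i) (j : Fin d) (e : Edge w j) :
    vtx w hw j e j = e.1 := by
  unfold vtx; rw [dif_pos rfl]; apply Fin.ext; simp

lemma vtx_succ (hd : 3 ≤ d) (hw : ∀ i, 2 ≤ w i) (j : Fin d) (e : Edge w j) :
    vtx w hw j e (j + 1) = e.2 := by
  unfold vtx; rw [dif_neg (succ_ne_self hd j), dif_pos rfl]; apply Fin.ext; simp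

lemma vtx_val_mod (hd : 3 ≤ d) (hodd : d % 2 = 1) (hw : ∀ i, 2 ≤ w i) (j : Fin d)
    (e : Edge w j) (i : Fin d) :
    (vtx w hw j e i).val % 2 = par ((e.1.val + e.2.val) % 2) e.2.val (kIdx j i) := by
  unfold vtx
  split
  · next h =>
    subst h
    rw [kIdx_self hd]
    unfold par
    rw [if_pos (by omega : 1 ≤ d - 1)]
    simp only [Fin.coe_cast]
    omega
  · next h =>
    split
    · next h' =>
      subst h'
      rw [kIdx_succ hd]
      unfold par
      rw [if_neg (by omega : ¬ 1 ≤ 0)]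
      simp only [Fin.coe_cast]
      omega
    · simp only []
      exact Nat.mod_mod_of_dvd _ dvd_rfl

end ABP0Aux
end TEST

section TEST2
open ABP ABP0Aux
namespace ABP0Aux
variable {d : ℕ} [NeZero d] (w : Fin d → ℕ)

/-- the layer holding the unique parity-preserving edge -/
noncomputable def spec (j : Fin d) (e : Edge w j) : Fin d :=
  if (e.1.val + e.2.val) % 2 = 0 then j else j + 1

lemma pres_iff (hd : 3 ≤ d) (hodd : d % 2 = 1) (hw : ∀ i, 2 ≤ w i) (j : Fin d)
    (e : Edge w j) (i : Fin d) :
    ((vtx w hw j e i).val % 2 = (vtx w hw j e (i + 1)).val % 2) ↔ i = spec w j e := by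
  rw [vtx_val_mod w hd hodd hw j e i, vtx_val_mod w hd hodd hw j e (i+1)]
  by_cases h : i = j
  · subst h
    rw [kIdx_self hd, kIdx_succ hd]
    unfold par spec
    have hne : i ≠ i + 1 := fun hh => succ_ne_self hd i hh.symm
    rw [if_pos (by omega : 1 ≤ d - 1), if_neg (by omega : ¬ 1 ≤ 0)]
    by_cases ht : (e.1.val + e.2.val) % 2 = 0
    · rw [if_pos ht]; exact iff_of_true (by omega) rfl
    · rw [if_neg ht]; exact iff_of_false (by omega) hne
  · rw [kIdx_step hd j i h]
    have hk1 : kIdx j i ≤ d - 1 := kIdx_le j i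
    have hk2 : kIdx j i ≠ d - 1 := fun hh => h ((eq_self_iff hd j i).mpr hh)
    have hsucc : i = j + 1 ↔ kIdx j i = 0 := eq_succ_iff hd j i
    unfold par spec
    rcases Nat.eq_zero_or_pos (kIdx j i) with h0 | h0
    · rw [h0, if_neg (by omega : ¬ 1 ≤ 0), if_pos (by omega : 1 ≤ 0 + 1)]
      by_cases ht : (e.1.val + e.2.val) % 2 = 0
      · rw [if_pos ht]; exact iff_of_false (by omega) h
      · rw [if_neg ht]; exact iff_of_true (by omega) (hsucc.mpr h0)
    · rw [if_pos (by omega : 1 ≤ kIdx j i), if_pos (by omega : 1 ≤ kIdx j i + 1)]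
      by_cases ht : (e.1.val + e.2.val) % 2 = 0
      · rw [if_pos ht]; exact iff_of_false (by omega) h
      · rw [if_neg ht]
        exact iff_of_false (by omega) (fun hh => absurd (hsucc.mp hh) (by omega))

/-- the canonical path through the chosen vertices. -/
noncomputable def path (hw : ∀ i, 2 ≤ w i) (j : Fin d) (e : Edge w j) :
    ∀ i : Fin d, Edge w i :=
  fun i => (vtx w hw j e i, vtx w hw j e (i + 1))

lemma valid_path (hw : ∀ i, 2 ≤ w i) (j : Fin d) (e : Edge w j) :
    ValidPath w (path w hw j e) := fun _ => rfl

lemma ppCount_path (hd : 3 ≤ d) (hodd : d % 2 = 1) (hw : ∀ i, 2 ≤ w i) (j : Fin d)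
    (e : Edge w j) : ppCount w (path w hw j e) = 1 := by
  unfold ppCount
  have heq : (Finset.univ.filter fun i : Fin d => ParityPres (path w hw j e i))
      = {spec w j e} := by
    ext i
    simp only [Finset.mem_filter, Finset.mem_univ, true_and, Finset.mem_singleton]
    exact pres_iff w hd hodd hw j e i
  rw [heq, Finset.card_singleton]

end ABP0Aux
end TEST2

section TEST3
open ABP
namespace ABP0Aux
variable {d : ℕ} [NeZero d] (w : Fin d → ℕ)

lemma insertAt_self (j : Fin d) (e : Edge w j)
    (c : ∀ i : {i : Fin d // i ≠ j}, Edge w i.val) : insertAt w j e c j = e := by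
  unfold insertAt
  rw [dif_pos rfl]
  exact eq_of_heq (cast_heq _ _)

lemma insertAt_ne (j : Fin d) (e : Edge w j)
    (c : ∀ i : {i : Fin d // i ≠ j}, Edge w i.val) (i : Fin d) (h : i ≠ j) :
    insertAt w j e c i = c ⟨i, h⟩ := dif_neg h

lemma flatten_entry (hd : 3 ≤ d) (hodd : d % 2 = 1) (hw : ∀ i, 2 ≤ w i) (j : Fin d)
    (e : Edge w j) :
    ∃ c, ∀ e' : Edge w j, flatten w (f0 w) j e' c = if e' = e then 1 else 0 := by
  refine ⟨fun i => path w hw j e i.val, ?_⟩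
  intro e'
  by_cases he : e' = e
  · subst he
    rw [if_pos rfl]
    have hp : insertAt w j e' (fun i => path w hw j e' i.val) = path w hw j e' := by
      funext i
      by_cases h : i = j
      · subst h
        rw [insertAt_self]
        have h1 : (path w hw i e' i).1 = e'.1 := vtx_self w hw i e'
        have h2 : (path w hw i e' i).2 = e'.2 := vtx_succ w hd hw i e'
        exact (Prod.ext h1 h2).symm
      · rw [insertAt_ne w j e' _ i h]
    show f0 w (insertAt w j e' (fun i => path w hw j e' i.val)) = 1
    rw [hp]
    unfold f0
    rw [if_pos ⟨valid_path w hw j e', ppCount_path w hd hodd hw j e'⟩]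
  · rw [if_neg he]
    show f0 w (insertAt w j e' (fun i => path w hw j e i.val)) = 0
    unfold f0
    rw [if_neg]
    rintro ⟨hv, -⟩
    apply he
    set c : ∀ i : {i : Fin d // i ≠ j}, Edge w i.val := fun i => path w hw j e i.val with hc
    have e5 : insertAt w j e' c j = e' := insertAt_self w j e' c
    have h2 : e'.2 = e.2 := by
      have hv2 := congrArg Fin.val (hv j)
      rw [e5] at hv2
      rw [insertAt_ne w j e' c (j+1) (succ_ne_self hd j)] at hv2
      have h6 : ((c ⟨j+1, succ_ne_self hd j⟩).1).val = (e.2).val := by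
        show (vtx w hw j e (j+1)).val = (e.2).val
        rw [vtx_succ w hd hw j e]
      exact Fin.ext (hv2.trans h6)
    have h1 : e'.1 = e.1 := by
      have hj1 : (j - 1 : Fin d) + 1 = j := sub_add_cancel j 1
      have hne : (j - 1 : Fin d) ≠ j := by
        intro hh
        rw [hh] at hj1
        exact succ_ne_self hd j hj1
      have hv1 := congrArg Fin.val (hv (j - 1))
      rw [insertAt_ne w j e' c (j-1) hne] at hv1
      have e2 : ((insertAt w j e' c ((j-1)+1)).1).val = ((insertAt w j e' c j).1).val :=
        congrArg (fun x => ((insertAt w j e' c x).1).val) hj1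
      have e3 : ((c ⟨j-1, hne⟩).2).val = (vtx w hw j e ((j-1)+1)).val := rfl
      have e4 : (vtx w hw j e ((j-1)+1)).val = (vtx w hw j e j).val :=
        congrArg (fun x => (vtx w hw j e x).val) hj1
      apply Fin.ext
      calc e'.1.val = ((insertAt w j e' c j).1).val := by rw [e5]
        _ = ((insertAt w j e' c ((j-1)+1)).1).val := e2.symm
        _ = ((c ⟨j-1, hne⟩).2).val := hv1.symm
        _ = (vtx w hw j e j).val := e3.trans e4
        _ = e.1.val := by rw [vtx_self]
    exact Prod.ext h1 h2

end ABP0Aux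
end TEST3

/-- For odd `d ≥ 3` and width format `w` with all `w i ≥ 2`,
the tensor `f_0` is concise: every flattening has full row rank `w j * w (j+1)`. -/
theorem f0_concise (d : ℕ) [NeZero d] (hd3 : 3 ≤ d) (hodd : Odd d)
    (w : Fin d → ℕ) (hw : ∀ i, 2 ≤ w i) :
    ABP.Concise w (ABP.f0 w) := by
  have hodd' : d % 2 = 1 := Nat.odd_iff.mp hodd
  intro j
  have hcard : Fintype.card (ABP.Edge w j) = w j * w (j + 1) := by
    simp [ABP.Edge]
  apply le_antisymm
  · have h1 := Matrix.rank_le_card_height (ABP.flatten w (ABP.f0 w) j)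
    rwa [hcard] at h1
  · have hsurj : Function.Surjective (ABP.flatten w (ABP.f0 w) j).mulVecLin := by
      rw [← LinearMap.range_eq_top, ← top_le_iff, ← (Pi.basisFun ℂ (ABP.Edge w j)).span_eq,
        Submodule.span_le]
      rintro x ⟨e, rfl⟩
      obtain ⟨c, hc⟩ := ABP0Aux.flatten_entry w hd3 hodd' hw j e
      refine ⟨Pi.single c 1, ?_⟩
      rw [Matrix.mulVecLin_apply, Matrix.mulVec_single]
      funext e'
      simp only [Pi.basisFun_apply, Pi.single_apply, mul_one]
      simp only [Pi.smul_apply, MulOpposite.op_one, one_smul]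
      exact hc e'
    have h2 : (ABP.flatten w (ABP.f0 w) j).rank = Fintype.card (ABP.Edge w j) := by
      rw [Matrix.rank, LinearMap.range_eq_top.mpr hsurj, finrank_top]
      simp [Module.finrank_fintype_fun_eq_card]
    rw [h2, hcard]
end
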